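/- arXiv:1711.05043 — 7 statements merged into one kernel-verified Lean document; each statement's English description precedes it below -/
import Mathlib

section
/- Let X be a Hausdorff topological space, let J : S¹ → X be a topological embedding (a simple closed curve), and let A and B be disjoint compact subsets of X. Then there is a non-negative integer N such that every interlacing of points (A', B') with A' ⊆ A ∩ |J| and B' ⊆ B ∩ |J| satisfies |A'| ≤ N; consequently the interlacing number of (A, B) for J is a well-defined non-negative integer. -/
open Set Topology

/-- The unit circle `S¹ = {z ∈ ℂ : |z| = 1}`, as a subset of `ℂ`. -/
def unitCircleSet : Set ℂ := Metric.sphere 0 1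

/-- `(A', B')` is a `k`-interlacing of points in the set `C` (a simple closed curve):
`A'` and `B'` are disjoint finite subsets of `C` of cardinality `k ≥ 1`, and every
connected component of `C \ A'` contains exactly one point of `B'`. -/
def IsPointInterlacing {X : Type*} [TopologicalSpace X] (C A' B' : Set X) (k : ℕ) : Prop :=
  1 ≤ k ∧ A' ⊆ C ∧ B' ⊆ C ∧ Disjoint A' B' ∧ A'.Finite ∧ B'.Finite ∧
    A'.ncard = k ∧ B'.ncard = k ∧
    ∀ x ∈ C \ A', ∃! b, b ∈ B' ∧ b ∈ connectedComponentIn (C \ A') x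

instance : LocallyPathConnectedSpace (AddCircle (2 * Real.pi)) :=
  Quotient.locallyPathConnectedSpace

instance : CompactSpace ↥unitCircleSet := Metric.sphere.compactSpace _ _

instance : LocallyConnectedSpace ↥unitCircleSet :=
  AddCircle.homeomorphCircle'.symm.locallyConnectedSpace

/-- **Interlacing Theorem for a Simple Closed Curve** (boundedness part): if `A` and `B`
are disjoint compact subsets of a Hausdorff space `X` and `J : S¹ → X` is an embedding,
then there is `N : ℕ` bounding the cardinality of every interlacing of points `(A', B')`
with `A' ⊆ A ∩ |J|` and `B' ⊆ B ∩ |J|`; hence the interlacing number of `(A, B)` for `J`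
is a well-defined non-negative integer. -/
theorem interlacing_number_well_defined {X : Type*} [TopologicalSpace X] [T2Space X]
    (J : ↥unitCircleSet → X) (hJ : Topology.IsEmbedding J)
    (A B : Set X) (hA : IsCompact A) (hB : IsCompact B) (hAB : Disjoint A B) :
    ∃ N : ℕ, ∀ (k : ℕ) (A' B' : Set X),
      A' ⊆ A ∩ Set.range J → B' ⊆ B ∩ Set.range J →
      IsPointInterlacing (Set.range J) A' B' k → A'.ncard ≤ N := by
  set C : Set X := Set.range J with hC
  have hCc : IsCompact C := isCompact_range hJ.continuous
  haveI : LocallyConnectedSpace ↥C :=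
    hJ.toHomeomorph.symm.locallyConnectedSpace
  -- Key: around each point of C there is an open W such that W ∩ C is connected and
  -- misses A or misses B.
  have key : ∀ x ∈ C, ∃ W : Set X, IsOpen W ∧ x ∈ W ∧ IsPreconnected (W ∩ C) ∧
      (Disjoint (W ∩ C) A ∨ Disjoint (W ∩ C) B) := by
    intro x hx
    have hxAB : x ∉ A ∨ x ∉ B := by
      by_contra h
      push_neg at h
      exact (hAB.ne_of_mem h.1 h.2) rfl
    -- choose V open, x ∈ V, disjoint from A or from B
    obtain ⟨V, hVopen, hxV, hVd⟩ : ∃ V : Set X, IsOpen V ∧ x ∈ V ∧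
        (Disjoint V A ∨ Disjoint V B) := by
      rcases hxAB with h | h
      · exact ⟨Aᶜ, (hA.isClosed).isOpen_compl, h, Or.inl disjoint_compl_left⟩
      · exact ⟨Bᶜ, (hB.isClosed).isOpen_compl, h, Or.inr disjoint_compl_left⟩
    set x' : ↥C := ⟨x, hx⟩
    have hV' : (Subtype.val ⁻¹' V : Set ↥C) ∈ nhds x' :=
      (hVopen.preimage continuous_subtype_val).mem_nhds hxV
    obtain ⟨U', ⟨hU'open, hxU', hU'conn⟩, hU'sub⟩ :=
      (LocallyConnectedSpace.open_connected_basis x').mem_iff.mp hV'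
    obtain ⟨W, hWopen, hWpre⟩ := isOpen_induced_iff.mp hU'open
    have himg : (Subtype.val '' U' : Set X) = W ∩ C := by
      rw [← hWpre, Subtype.image_preimage_coe]
      exact Set.inter_comm _ _
    have hxW : x ∈ W := by
      have : x' ∈ Subtype.val ⁻¹' W := hWpre ▸ hxU'
      exact this
    have hconn : IsPreconnected (W ∩ C) := by
      rw [← himg]
      exact (hU'conn.isPreconnected).image _ continuous_subtype_val.continuousOn
    have hsubV : W ∩ C ⊆ V := by
      rw [← himg]
      rintro _ ⟨u, hu, rfl⟩
      exact hU'sub hu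
    refine ⟨W, hWopen, hxW, hconn, ?_⟩
    rcases hVd with h | h
    · exact Or.inl (h.mono_left hsubV)
    · exact Or.inr (h.mono_left hsubV)
  choose! W hWopen hWmem hWconn hWdisj using key
  obtain ⟨t, hts, hcov⟩ := hCc.elim_nhds_subcover W (fun x hx => (hWopen x hx).mem_nhds (hWmem x hx))
  refine ⟨t.card, ?_⟩
  rintro k A' B' hA' hB' ⟨hk, hA'C, hB'C, hdisj, hA'fin, hB'fin, hA'card, hB'card, huniq⟩
  -- each b ∈ B' lies in some W x, x ∈ t
  have hbc : ∀ b ∈ B', ∃ x, x ∈ t ∧ b ∈ W x := by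
    intro b hb
    have := hcov (hB'C hb)
    simpa using this
  choose! g hgt hgW using hbc
  -- g is injective on B'
  have hinj : Set.InjOn g B' := by
    intro b₁ hb₁ b₂ hb₂ hgeq
    set x := g b₁ with hxdef
    have hxC : x ∈ C := hts x (hgt b₁ hb₁)
    have hb₁W : b₁ ∈ W x ∩ C := ⟨hgW b₁ hb₁, hB'C hb₁⟩
    have hb₂W : b₂ ∈ W x ∩ C := ⟨hgeq ▸ hgW b₂ hb₂, hB'C hb₂⟩
    -- W x ∩ C misses A (since it contains b₁ ∈ B)
    have hnA : Disjoint (W x ∩ C) A := by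
      rcases hWdisj x hxC with h | h
      · exact h
      · exact absurd rfl (h.ne_of_mem hb₁W (hB' hb₁).1)
    have hsub : W x ∩ C ⊆ C \ A' := by
      intro y hy
      exact ⟨hy.2, fun hyA' => hnA.ne_of_mem hy ((hA' hyA').1) rfl⟩
    have hb₁CA : b₁ ∈ C \ A' :=
      ⟨hB'C hb₁, fun h => (hdisj.ne_of_mem h hb₁) rfl⟩
    have hcomp : W x ∩ C ⊆ connectedComponentIn (C \ A') b₁ :=
      (hWconn x hxC).subset_connectedComponentIn hb₁W hsub
    obtain ⟨b₀, _, hbu⟩ := huniq b₁ hb₁CA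
    have e₁ : b₁ = b₀ := hbu b₁ ⟨hb₁, mem_connectedComponentIn hb₁CA⟩
    have e₂ : b₂ = b₀ := hbu b₂ ⟨hb₂, hcomp hb₂W⟩
    rw [e₁, e₂]
  calc A'.ncard = k := hA'card
    _ = B'.ncard := hB'card.symm
    _ = (g '' B').ncard := (Set.ncard_image_of_injOn hinj).symm
    _ ≤ (↑t : Set X).ncard := by
        apply Set.ncard_le_ncard _ t.finite_toSet
        rintro _ ⟨b, hb, rfl⟩
        exact hgt b hb
    _ = t.card := Set.ncard_coe_finset t
end

section
/- Let X be a Hausdorff topological space, let J : S¹ → X be a topological embedding, and let A and B be disjoint compact subsets of X whose interlacing number for J is k. Then there exist sets U and V, open in the subspace |J| = J(S¹), with A ∩ |J| ⊆ U and B ∩ |J| ⊆ V, such that for all disjoint compact sets Ã, B̃ ⊆ X with A ∩ |J| ⊆ Ã ∩ |J| ⊆ U and B ∩ |J| ⊆ B̃ ∩ |J| ⊆ V, the interlacing number of (Ã, B̃) for J is also k. -/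
open Set Topology

/-- The interlacing number of `(A, B)` for the simple closed curve with image `C`:
the largest `k ≥ 1` for which there are finite subsets `A' ⊆ A ∩ C` and `B' ⊆ B ∩ C`
forming a `k`-interlacing of points in `C`, and `0` if no such `k` exists. -/
noncomputable def interlacingNumber {X : Type*} [TopologicalSpace X] (C A B : Set X) : ℕ :=
  sSup {k : ℕ | ∃ A' B' : Set X, A' ⊆ A ∩ C ∧ B' ⊆ B ∩ C ∧ IsPointInterlacing C A' B' k}

open Metric

namespace NIT

abbrev Q := AddCircle (1 : ℝ)
instance : Fact ((0:ℝ) < 1) := ⟨one_pos⟩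


/-- Arc-avoidance predicate in cut coordinates. -/
def Pg (F : Set ℝ) (x b : ℝ) : Prop :=
  uIcc x b ∩ F = ∅ ∨ F ⊆ Ioo (min x b) (max x b)

/-- `f` and `g` interleave: `f 0 < g 0 < f 1 < g 1 < ...`. -/
def Interleaved {n : ℕ} (f g : Fin n → ℝ) : Prop :=
  (∀ i, f i < g i) ∧ ∀ i j : Fin n, i.val + 1 = j.val → g i < f j

lemma strictMono_of_succ_lt {n : ℕ} {f : Fin n → ℝ}
    (h : ∀ i j : Fin n, i.val + 1 = j.val → f i < f j) : StrictMono f := by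
  match n with
  | 0 => exact fun i => absurd i.isLt (by omega)
  | n + 1 =>
    rw [Fin.strictMono_iff_lt_succ]
    intro i
    exact h i.castSucc i.succ (by simp)

namespace Interleaved

variable {n : ℕ} {f g : Fin n → ℝ}

lemma sm_f (h : Interleaved f g) : StrictMono f :=
  strictMono_of_succ_lt fun i j hij => (h.1 i).trans (h.2 i j hij)

lemma sm_g (h : Interleaved f g) : StrictMono g :=
  strictMono_of_succ_lt fun i j hij => (h.2 i j hij).trans (h.1 j)

lemma f_lt_g (h : Interleaved f g) {i j : Fin n} (hij : i ≤ j) : f i < g j :=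
  lt_of_le_of_lt (h.sm_f.monotone hij) (h.1 j)

lemma g_lt_f (h : Interleaved f g) {i j : Fin n} (hij : i < j) : g i < f j := by
  have h1 : i.val + 1 < n := by have := j.isLt; have := Fin.lt_def.mp hij; omega
  have h2 : g i < f ⟨i.val + 1, h1⟩ := h.2 i ⟨i.val + 1, h1⟩ rfl
  refine lt_of_lt_of_le h2 (h.sm_f.monotone ?_)
  rw [Fin.le_def]
  have := Fin.lt_def.mp hij
  simpa using this

end Interleaved

lemma trichotomy {n : ℕ} (hn : 1 ≤ n) {f : Fin n → ℝ} {t : ℝ}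
    (ht : t ∉ range f) :
    t < f ⟨0, hn⟩ ∨ f ⟨n - 1, by omega⟩ < t ∨
      ∃ (i : ℕ) (h : i + 1 < n), f ⟨i, by omega⟩ < t ∧ t < f ⟨i + 1, h⟩ := by
  by_contra hcon
  push_neg at hcon
  obtain ⟨h1, h2, h3⟩ := hcon
  have hne : ∀ i : Fin n, f i ≠ t := fun i hit => ht ⟨i, hit⟩
  have key : ∀ i, ∀ h : i < n, f ⟨i, h⟩ < t := by
    intro i
    induction i with
    | zero => intro h; exact lt_of_le_of_ne h1 (hne _)
    | succ i ih =>
      intro h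
      have hi : i < n := by omega
      exact lt_of_le_of_ne (h3 i h (ih hi)) (hne _)
  have := key (n - 1) (by omega)
  exact absurd h2 (not_le.mpr this)


lemma coe_eq_coe {x y : ℝ} : (↑x : Q) = ↑y ↔ ∃ m : ℤ, x - y = m := by
  rw [QuotientAddGroup.eq_iff_sub_mem]
  constructor
  · intro h
    obtain ⟨m, hm⟩ := AddSubgroup.mem_zmultiples_iff.mp h
    exact ⟨m, by rw [← hm]; simp⟩
  · rintro ⟨m, hm⟩
    apply AddSubgroup.mem_zmultiples_iff.mpr ⟨m, by rw [hm]; simp⟩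

lemma rep_Ico (a : ℝ) (q : Q) : ∃ x ∈ Ico a (a + 1), (x : Q) = q := by
  refine ⟨(AddCircle.equivIco 1 a q : ℝ), (AddCircle.equivIco 1 a q).2, ?_⟩
  exact (AddCircle.equivIco 1 a).symm_apply_apply q

lemma coe_injOn_Ico (a : ℝ) : InjOn (fun x : ℝ => (x : Q)) (Ico a (a + 1)) :=
  fun x hx y hy h => (AddCircle.coe_eq_coe_iff_of_mem_Ico hx hy).mp h

lemma coe_add_one (x : ℝ) : ((x + 1 : ℝ) : Q) = x := AddCircle.coe_add_period 1 x


/-- Membership in a connected component of the complement of a nonempty set in the circle,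
characterized by existence of an arc. -/
lemma mem_ccIn_iff_arc {S : Set Q} (hS : S.Nonempty) {x b : Q} (hx : x ∉ S) :
    b ∈ connectedComponentIn Sᶜ x ↔
      ∃ u v : ℝ, (u : Q) = x ∧ (v : Q) = b ∧ ∀ t ∈ uIcc u v, (t : Q) ∉ S := by
  constructor
  · intro hb
    obtain ⟨s, hsS⟩ := hS
    obtain ⟨c, rfl⟩ := Quotient.exists_rep s
    set φ : Q → ℝ := fun q => (AddCircle.equivIco 1 c q : ℝ) with hφ
    have hφcoe : ∀ q : Q, ((φ q : ℝ) : Q) = q := fun q =>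
      (AddCircle.equivIco 1 c).symm_apply_apply q
    set T := connectedComponentIn Sᶜ x with hT
    have hTpc : IsPreconnected T := isPreconnected_connectedComponentIn
    have hTS : T ⊆ Sᶜ := connectedComponentIn_subset _ _
    have hTc : T ⊆ {((c : ℝ) : Q)}ᶜ := fun q hq hq' => (hTS hq) (mem_singleton_iff.mp hq' ▸ hsS)
    have hφcont : ContinuousOn φ T := by
      intro q hq
      have : ContinuousAt φ q :=
        continuous_subtype_val.continuousAt.comp (AddCircle.continuousAt_equivIco 1 c (hTc hq))
      exact this.continuousWithinAt
    have hxT : x ∈ T := mem_connectedComponentIn hx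
    have him : IsPreconnected (φ '' T) := hTpc.image φ hφcont
    have hsub : uIcc (φ x) (φ b) ⊆ φ '' T :=
      him.ordConnected.uIcc_subset (mem_image_of_mem φ hxT) (mem_image_of_mem φ hb)
    refine ⟨φ x, φ b, hφcoe x, hφcoe b, ?_⟩
    intro t ht hts
    obtain ⟨q, hqT, hqt⟩ := hsub ht
    rw [← hqt, hφcoe q] at hts
    exact (hTS hqT) hts
  · rintro ⟨u, v, hu, hv, harc⟩
    have hpc : IsPreconnected ((fun t : ℝ => (t : Q)) '' uIcc u v) :=
      (isPreconnected_uIcc).image _ (AddCircle.continuous_mk' 1).continuousOn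
    have hsub : (fun t : ℝ => (t : Q)) '' uIcc u v ⊆ Sᶜ := by
      rintro q ⟨t, htu, rfl⟩
      exact harc t htu
    have hx' : x ∈ (fun t : ℝ => (t : Q)) '' uIcc u v := ⟨u, left_mem_uIcc, hu⟩
    exact hpc.subset_connectedComponentIn hx' hsub ⟨v, right_mem_uIcc, hv⟩


lemma arc_iff_P {a : ℝ} {F : Set ℝ} (hF : F.Nonempty) (hFI : F ⊆ Ioo a (a + 1))
    {xh bh : ℝ} (hxh : xh ∈ Ico a (a + 1)) (hbh : bh ∈ Ioo a (a + 1))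
    (hxF : xh ∉ F) (hbF : bh ∉ F) :
    (∃ u v : ℝ, (u : Q) = (xh : Q) ∧ (v : Q) = (bh : Q) ∧
      ∀ t ∈ uIcc u v, (t : Q) ∉ ((fun r : ℝ => (r : Q)) '' F)) ↔ Pg F xh bh := by
  have hbh' : bh ∈ Ico a (a + 1) := Ioo_subset_Ico_self hbh
  have hmemF : ∀ t : ℝ, (t : Q) ∈ ((fun r : ℝ => (r : Q)) '' F) ↔
      ∃ s ∈ F, ∃ z : ℤ, s - t = z := by
    intro t
    constructor
    · rintro ⟨s, hsF, hcoe⟩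
      exact ⟨s, hsF, coe_eq_coe.mp hcoe⟩
    · rintro ⟨s, hsF, z, hz⟩
      exact ⟨s, hsF, coe_eq_coe.mpr ⟨z, hz⟩⟩
  by_cases hxb : xh = bh
  · subst hxb
    constructor
    · intro _
      left
      rw [uIcc_self, eq_empty_iff_forall_notMem]
      rintro t ⟨ht, htF⟩
      rw [mem_singleton_iff] at ht
      exact hxF (ht ▸ htF)
    · intro _
      refine ⟨xh, xh, rfl, rfl, ?_⟩
      intro t ht hmem
      rw [uIcc_self, mem_singleton_iff] at ht
      subst ht
      obtain ⟨s, hsF, z, hz⟩ := (hmemF t).mp hmem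
      have hsI := hFI hsF
      have hz0 : z = 0 := by
        have h1 : (z : ℝ) < 1 := by rw [← hz]; cases hxh; cases hsI; linarith
        have h2 : (-1 : ℝ) < z := by rw [← hz]; cases hxh; cases hsI; linarith
        have h1' : z < 1 := by exact_mod_cast h1
        have h2' : -1 < z := by exact_mod_cast h2
        omega
      rw [hz0] at hz
      push_cast at hz
      have : s = t := by linarith
      exact hxF (this ▸ hsF)
  -- main case
  set m := min xh bh with hm
  set M := max xh bh with hM
  have hmM : m < M := min_lt_max.mpr hxb
  have hma : a ≤ m := le_min hxh.1 hbh.1.le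
  have hm1 : m < a + 1 := lt_of_le_of_lt (min_le_left _ _) hxh.2
  have hMa : a < M := lt_of_lt_of_le hbh.1 (le_max_right _ _)
  have hM1 : M < a + 1 := max_lt hxh.2 hbh.2
  have hmF : m ∉ F := by rcases min_choice xh bh with h | h <;> rw [hm, h] <;> assumption
  have hMF : M ∉ F := by rcases max_choice xh bh with h | h <;> rw [hM, h] <;> assumption
  constructor
  · rintro ⟨u, v, hu, hv, harc⟩
    set u' := min u v with hu'
    set v' := max u v with hv'
    have harc' : ∀ t, u' ≤ t → t ≤ v' → (t : Q) ∉ ((fun r : ℝ => (r : Q)) '' F) := by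
      intro t h1 h2
      apply harc
      rcases le_total u v with h | h
      · rw [uIcc_of_le h]
        exact ⟨by rwa [hu', min_eq_left h] at h1, by rwa [hv', max_eq_right h] at h2⟩
      · rw [uIcc_of_ge h]
        exact ⟨by rwa [hu', min_eq_right h] at h1, by rwa [hv', max_eq_left h] at h2⟩
    -- the arc is shorter than the full circle
    have hlen : v' - u' < 1 := by
      by_contra hc
      push_neg at hc
      obtain ⟨s, hsF⟩ := hF
      set t := s + (⌈u' - s⌉ : ℝ) with ht
      have h1 : u' ≤ t := by have := Int.le_ceil (u' - s); rw [ht]; linarith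
      have h2 : t ≤ v' := by
        have := Int.ceil_lt_add_one (u' - s); rw [ht]; linarith
      exact harc' t h1 h2 ((hmemF t).mpr ⟨s, hsF, -⌈u' - s⌉, by push_cast; rw [ht]; ring⟩)
    have huv : u' ≤ v' := min_le_max
    -- the endpoints of the arc project to {m, M}
    have hQuv : ((u' : Q) = (m : Q) ∧ (v' : Q) = (M : Q)) ∨
        ((u' : Q) = (M : Q) ∧ (v' : Q) = (m : Q)) := by
      have hxm : ((xh : Q) = (m : Q) ∧ (bh : Q) = (M : Q)) ∨
          ((xh : Q) = (M : Q) ∧ (bh : Q) = (m : Q)) := by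
        rcases le_total xh bh with h | h
        · left; rw [hm, min_eq_left h, hM, max_eq_right h]; exact ⟨rfl, rfl⟩
        · right; rw [hM, max_eq_left h, hm, min_eq_right h]; exact ⟨rfl, rfl⟩
      rcases le_total u v with h | h
      · have e1 : (u' : Q) = (xh : Q) := by rw [hu', min_eq_left h]; exact hu
        have e2 : (v' : Q) = (bh : Q) := by rw [hv', max_eq_right h]; exact hv
        rcases hxm with ⟨p1, p2⟩ | ⟨p1, p2⟩
        · exact Or.inl ⟨e1.trans p1, e2.trans p2⟩
        · exact Or.inr ⟨e1.trans p1, e2.trans p2⟩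
      · have e1 : (u' : Q) = (bh : Q) := by rw [hu', min_eq_right h]; exact hv
        have e2 : (v' : Q) = (xh : Q) := by rw [hv', max_eq_left h]; exact hu
        rcases hxm with ⟨p1, p2⟩ | ⟨p1, p2⟩
        · exact Or.inr ⟨e1.trans p2, e2.trans p1⟩
        · exact Or.inl ⟨e1.trans p2, e2.trans p1⟩
    rcases hQuv with ⟨hA, hB⟩ | ⟨hA, hB⟩
    · -- same orientation : uIcc xh bh avoids F
      left
      obtain ⟨n1, hn1⟩ := coe_eq_coe.mp hA
      obtain ⟨n2, hn2⟩ := coe_eq_coe.mp hB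
      have hn12 : n2 = n1 := by
        have h1 : ((n2 - n1 : ℤ) : ℝ) < 1 := by push_cast; linarith
        have h2 : (-1 : ℝ) < ((n2 - n1 : ℤ) : ℝ) := by push_cast; linarith
        have h1' : n2 - n1 < 1 := by exact_mod_cast h1
        have h2' : -1 < n2 - n1 := by exact_mod_cast h2
        omega
      rw [eq_empty_iff_forall_notMem]
      rintro t ⟨htu, htF⟩
      rw [uIcc, ← hm, ← hM] at htu
      refine harc' (t + n1) (by linarith [htu.1]) (by rw [hn12] at hn2; linarith [htu.2]) ?_
      exact (hmemF _).mpr ⟨t, htF, -n1, by push_cast; ring⟩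
    · -- opposite orientation : F is inside (m, M)
      right
      obtain ⟨n1, hn1⟩ := coe_eq_coe.mp hA
      obtain ⟨n2, hn2⟩ := coe_eq_coe.mp hB
      have hn12 : n2 = n1 + 1 := by
        have h1 : ((n2 - n1 : ℤ) : ℝ) < 2 := by push_cast; linarith
        have h2 : (0 : ℝ) < ((n2 - n1 : ℤ) : ℝ) := by push_cast; linarith
        have h1' : n2 - n1 < 2 := by exact_mod_cast h1
        have h2' : 0 < n2 - n1 := by exact_mod_cast h2
        omega
      intro t htF
      have htI := hFI htF
      have htm : t ≠ m := fun h => hmF (h ▸ htF)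
      have htM : t ≠ M := fun h => hMF (h ▸ htF)
      rw [mem_Ioo]
      constructor
      · -- t < m impossible
        rcases lt_or_ge m t with h | h
        · exact h
        · exfalso
          have hlt : t < m := lt_of_le_of_ne h htm
          refine harc' (t + n1 + 1) (by linarith [htI.1]) (by rw [hn12] at hn2; push_cast at hn2; linarith) ?_
          exact (hmemF _).mpr ⟨t, htF, -(n1 + 1), by push_cast; ring⟩
      · -- t > M impossible
        rcases lt_or_ge t M with h | h
        · exact h
        · exfalso
          have hgt : M < t := lt_of_le_of_ne h (htM ∘ Eq.symm)
          refine harc' (t + n1) (by linarith) (by rw [hn12] at hn2; push_cast at hn2; linarith [htI.2]) ?_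
          exact (hmemF _).mpr ⟨t, htF, -n1, by push_cast; ring⟩
  · rintro (hemp | hsub)
    · -- direct arc
      refine ⟨xh, bh, rfl, rfl, ?_⟩
      intro t htu hmem
      rw [uIcc, ← hm, ← hM] at htu
      obtain ⟨s, hsF, z, hz⟩ := (hmemF t).mp hmem
      have hsI := hFI hsF
      obtain ⟨hsI1, hsI2⟩ := hsI
      obtain ⟨htu1, htu2⟩ := htu
      have hz0 : z = 0 := by
        have h1 : (z : ℝ) < 1 := by rw [← hz]; linarith
        have h2 : (-1 : ℝ) < z := by rw [← hz]; linarith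
        have h1' : z < 1 := by exact_mod_cast h1
        have h2' : -1 < z := by exact_mod_cast h2
        omega
      rw [hz0] at hz
      push_cast at hz
      have hst : s = t := by linarith
      rw [eq_empty_iff_forall_notMem] at hemp
      refine hemp t ⟨?_, hst ▸ hsF⟩
      rw [uIcc, ← hm, ← hM]
      exact ⟨htu1, htu2⟩
    · -- wrap-around arc through the cut point
      have harcw : ∀ t ∈ uIcc (m + 1) M, (t : Q) ∉ ((fun r : ℝ => (r : Q)) '' F) := by
        intro t htu hmem
        rw [uIcc_comm, uIcc_of_le (by linarith : M ≤ m + 1)] at htu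
        obtain ⟨s, hsF, z, hz⟩ := (hmemF t).mp hmem
        obtain ⟨hs1, hs2⟩ := hsub hsF
        have hz1 : (z : ℝ) < 0 := by rw [← hz]; cases htu; linarith
        have hz2 : (-1 : ℝ) < z := by rw [← hz]; cases htu; linarith
        have h1' : z < 0 := by exact_mod_cast hz1
        have h2' : -1 < z := by exact_mod_cast hz2
        omega
      rcases le_total xh bh with h | h
      · have hmx : m = xh := min_eq_left h
        have hMb : M = bh := max_eq_right h
        refine ⟨m + 1, M, ?_, by rw [hMb], harcw⟩
        rw [coe_add_one, hmx]
      · have hmx : m = bh := min_eq_right h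
        have hMb : M = xh := max_eq_left h
        refine ⟨M, m + 1, by rw [hMb], ?_, fun t ht => harcw t (uIcc_comm M (m+1) ▸ ht)⟩
        rw [coe_add_one, hmx]

lemma alt_of_exu {a : ℝ} {F G : Set ℝ} {n : ℕ} (hn : 1 ≤ n)
    (hFI : F ⊆ Ioo a (a + 1)) (hGI : G ⊆ Ioo a (a + 1))
    (hFfin : F.Finite) (hGfin : G.Finite) (hd : Disjoint F G)
    (hFc : F.ncard = n) (hGc : G.ncard = n)
    (hexu : ∀ x ∈ Ico a (a + 1) \ F, ∃! b, b ∈ G ∧ Pg F x b) :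
    ∃ f g : Fin n → ℝ, (∀ i, f i ∈ F) ∧ (∀ i, g i ∈ G) ∧
      (Interleaved f g ∨ Interleaved g f) := by
  classical
  -- sorted enumeration of F
  have hcard : hFfin.toFinset.card = n := by
    rw [← hFc, Set.ncard_eq_toFinset_card F hFfin]
  let e := hFfin.toFinset.orderIsoOfFin hcard
  set f : Fin n → ℝ := fun i => (e i : ℝ) with hfdef
  have hfF : ∀ i, f i ∈ F := fun i => hFfin.mem_toFinset.mp (e i).2
  have hfmono : StrictMono f := fun i j hij => by
    exact Subtype.coe_lt_coe.mpr (e.strictMono hij)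
  have hfsurj : ∀ t ∈ F, ∃ i, f i = t := by
    intro t ht
    refine ⟨e.symm ⟨t, hFfin.mem_toFinset.mpr ht⟩, ?_⟩
    simp only [hfdef, OrderIso.apply_symm_apply]
  have hrange : range f = F := by
    apply subset_antisymm (range_subset_iff.mpr hfF)
    intro t ht
    obtain ⟨i, hi⟩ := hfsurj t ht
    exact ⟨i, hi⟩
  -- no point of F strictly inside a gap
  have hFgap : ∀ (i : ℕ) (h : i + 1 < n), ∀ t ∈ F,
      ¬(f ⟨i, by omega⟩ < t ∧ t < f ⟨i + 1, h⟩) := by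
    rintro i h t ht ⟨h1, h2⟩
    obtain ⟨j, rfl⟩ := hfsurj t ht
    have hj1 := hfmono.lt_iff_lt.mp h1
    have hj2 := hfmono.lt_iff_lt.mp h2
    rw [Fin.lt_def] at hj1 hj2
    simp only [] at hj1 hj2
    omega
  -- characterization of Pg for points in a gap
  have hPgap : ∀ (i : ℕ) (h : i + 1 < n) (x : ℝ), f ⟨i, by omega⟩ < x → x < f ⟨i + 1, h⟩ →
      ∀ b ∈ G, (Pg F x b ↔ (f ⟨i, by omega⟩ < b ∧ b < f ⟨i + 1, h⟩)) := by
    intro i h x hx1 hx2 b hbG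
    constructor
    · rintro (hemp | hsub)
      · constructor
        · by_contra hle
          push_neg at hle
          have hblt : b < x := lt_of_le_of_lt hle hx1
          have : f ⟨i, by omega⟩ ∈ uIcc x b ∩ F := by
            rw [uIcc_comm, uIcc_of_le hblt.le]
            exact ⟨⟨hle, hx1.le⟩, hfF _⟩
          rw [hemp] at this; exact this
        · by_contra hle
          push_neg at hle
          have hblt : x < b := hx2.trans_le hle
          have : f ⟨i + 1, h⟩ ∈ uIcc x b ∩ F := by
            rw [uIcc_of_le hblt.le]
            exact ⟨⟨hx2.le, hle⟩, hfF _⟩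
          rw [hemp] at this; exact this
      · exfalso
        rcases le_total x b with hc | hc
        · have := hsub (hfF ⟨i, by omega⟩)
          rw [min_eq_left hc] at this
          exact absurd this.1 (not_lt.mpr hx1.le)
        · have := hsub (hfF ⟨i + 1, h⟩)
          rw [max_eq_left hc] at this
          exact absurd this.2 (not_lt.mpr hx2.le)
    · rintro ⟨hb1, hb2⟩
      left
      have hs : uIcc x b ⊆ Ioo (f ⟨i, by omega⟩) (f ⟨i + 1, h⟩) :=
        ordConnected_Ioo.uIcc_subset ⟨hx1, hx2⟩ ⟨hb1, hb2⟩
      rw [eq_empty_iff_forall_notMem]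
      rintro t ⟨htu, htF⟩
      exact hFgap i h t htF ⟨(hs htu).1, (hs htu).2⟩
  -- unique G-point in each gap
  have hgapex : ∀ (i : ℕ) (h : i + 1 < n), ∃ b,
      (b ∈ G ∧ f ⟨i, by omega⟩ < b ∧ b < f ⟨i + 1, h⟩) ∧
      ∀ b', b' ∈ G → f ⟨i, by omega⟩ < b' → b' < f ⟨i + 1, h⟩ → b' = b := by
    intro i h
    have hlt : f ⟨i, by omega⟩ < f ⟨i + 1, h⟩ := hfmono (Fin.mk_lt_mk.mpr (by omega))
    set x := (f ⟨i, by omega⟩ + f ⟨i + 1, h⟩) / 2 with hx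
    have hx1 : f ⟨i, by omega⟩ < x := by rw [hx]; linarith
    have hx2 : x < f ⟨i + 1, h⟩ := by rw [hx]; linarith
    have hxIco : x ∈ Ico a (a + 1) := by
      have ha1 := hFI (hfF ⟨i, by omega⟩)
      have ha2 := hFI (hfF ⟨i + 1, h⟩)
      exact ⟨(ha1.1.trans hx1).le, hx2.trans ha2.2⟩
    have hxF : x ∉ F := fun hmem => hFgap i h x hmem ⟨hx1, hx2⟩
    obtain ⟨b, ⟨hbG, hbP⟩, huniq⟩ := hexu x ⟨hxIco, hxF⟩
    have hbgap := (hPgap i h x hx1 hx2 b hbG).mp hbP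
    refine ⟨b, ⟨hbG, hbgap⟩, fun b' hb'G h1 h2 => ?_⟩
    exact huniq b' ⟨hb'G, (hPgap i h x hx1 hx2 b' hb'G).mpr ⟨h1, h2⟩⟩
  let gp : ℕ → ℝ := fun i => if h : i + 1 < n then (hgapex i h).choose else 0
  have hgpspec : ∀ (i : ℕ) (h : i + 1 < n),
      (gp i ∈ G ∧ f ⟨i, by omega⟩ < gp i ∧ gp i < f ⟨i + 1, h⟩) ∧
      ∀ b', b' ∈ G → f ⟨i, by omega⟩ < b' → b' < f ⟨i + 1, h⟩ → b' = gp i := by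
    intro i h
    simp only [gp, dif_pos h]
    exact (hgapex i h).choose_spec
  -- existence of an outer G-point
  have hG0 : ∃ g0 ∈ G, g0 < f ⟨0, hn⟩ ∨ f ⟨n - 1, by omega⟩ < g0 := by
    by_contra hcon
    push_neg at hcon
    have hcl : ∀ g0 : ↥G, ∃ i : ℕ, ∃ h : i + 1 < n,
        f ⟨i, by omega⟩ < (g0 : ℝ) ∧ (g0 : ℝ) < f ⟨i + 1, h⟩ := by
      rintro ⟨g0, hg0⟩
      have hnotF : g0 ∉ range f := by
        rw [hrange]
        exact fun hmem => (hd.ne_of_mem hmem hg0) rfl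
      rcases trichotomy hn hnotF with h1 | h2 | h3
      · exact absurd h1 (not_lt.mpr (hcon g0 hg0).1)
      · exact absurd h2 (not_lt.mpr (hcon g0 hg0).2)
      · exact h3
    let c : ↥G → Fin (n - 1) := fun g0 => ⟨(hcl g0).choose, by
      have := (hcl g0).choose_spec.choose
      omega⟩
    have hcinj : Function.Injective c := by
      intro g1 g2 hc
      have hieq : (hcl g1).choose = (hcl g2).choose := congrArg Fin.val hc
      have hb1 : (hcl g1).choose + 1 < n := (hcl g1).choose_spec.choose
      have hb2 : (hcl g2).choose + 1 < n := (hcl g2).choose_spec.choose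
      have hs1 := (hcl g1).choose_spec.choose_spec
      have hs2 := (hcl g2).choose_spec.choose_spec
      have he1 : (g1 : ℝ) = gp (hcl g1).choose := (hgpspec _ hb1).2 g1 g1.2 hs1.1 hs1.2
      have he2 : (g2 : ℝ) = gp (hcl g2).choose := (hgpspec _ hb2).2 g2 g2.2 hs2.1 hs2.2
      rw [← hieq] at he2
      exact Subtype.ext (he1.trans he2.symm)
    have hle := Nat.card_le_card_of_injective c hcinj
    rw [Nat.card_coe_set_eq, hGc, Nat.card_eq_fintype_card, Fintype.card_fin] at hle
    omega
  -- assemble the alternating sequences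
  obtain ⟨g0, hg0G, hg0or⟩ := hG0
  rcases hg0or with hbelow | habove
  · -- g0 is below f 0 : pattern  g0 f0 g1 f1 ...
    refine ⟨f, fun j => if j.val = 0 then g0 else gp (j.val - 1), hfF, ?_, Or.inr ?_⟩
    · intro j
      by_cases h0 : j.val = 0
      · simp only [h0, if_pos]; exact hg0G
      · have hb : (j.val - 1) + 1 < n := by have := j.isLt; omega
        simp only [h0, if_neg, if_false]
        exact ((hgpspec (j.val - 1) hb).1).1
    · constructor
      · intro i
        by_cases h0 : i.val = 0
        · have : i = ⟨0, hn⟩ := Fin.ext h0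
          rw [this]
          simpa using hbelow
        · have hb : (i.val - 1) + 1 < n := by have := i.isLt; omega
          have hsp := ((hgpspec (i.val - 1) hb).1).2.2
          have heq : (⟨i.val - 1 + 1, hb⟩ : Fin n) = i := Fin.ext (by show i.val - 1 + 1 = i.val; omega)
          rw [heq] at hsp
          simpa [h0] using hsp
      · intro i j hij
        have hj0 : j.val ≠ 0 := by omega
        have hb : (j.val - 1) + 1 < n := by have := j.isLt; omega
        have hsp := ((hgpspec (j.val - 1) hb).1).2.1
        have heq : (⟨j.val - 1, by omega⟩ : Fin n) = i := Fin.ext (by show j.val - 1 = i.val; omega)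
        rw [heq] at hsp
        simpa [hj0] using hsp
  · -- g0 is above f (n-1) : pattern  f0 g0' f1 g1' ...
    refine ⟨f, fun j => if j.val = n - 1 then g0 else gp j.val, hfF, ?_, Or.inl ?_⟩
    · intro j
      by_cases h0 : j.val = n - 1
      · simp only [h0, if_pos]; exact hg0G
      · have hb : j.val + 1 < n := by have := j.isLt; omega
        simp only [h0, if_neg, if_false]
        exact ((hgpspec j.val hb).1).1
    · constructor
      · intro i
        by_cases h0 : i.val = n - 1
        · have : i = ⟨n - 1, by omega⟩ := Fin.ext h0
          rw [this]
          simpa [h0] using habove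
        · have hb : i.val + 1 < n := by have := i.isLt; omega
          have hsp := ((hgpspec i.val hb).1).2.1
          have heq : (⟨i.val, by omega⟩ : Fin n) = i := Fin.ext rfl
          rw [heq] at hsp
          simpa [h0] using hsp
      · intro i j hij
        have hi0 : i.val ≠ n - 1 := by have := j.isLt; omega
        have hb : i.val + 1 < n := by have := j.isLt; omega
        have hsp := ((hgpspec i.val hb).1).2.2
        have heq : (⟨i.val + 1, hb⟩ : Fin n) = j := Fin.ext (by show i.val + 1 = j.val; omega)
        rw [heq] at hsp
        simpa [hi0] using hsp


lemma exu_of_interleaved {a : ℝ} {n : ℕ} (hn : 1 ≤ n) {f g : Fin n → ℝ}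
    (hfI : ∀ i, f i ∈ Ioo a (a + 1)) (hgI : ∀ i, g i ∈ Ioo a (a + 1))
    (h : Interleaved f g) :
    ∀ x ∈ Ico a (a + 1) \ range f, ∃! b, b ∈ range g ∧ Pg (range f) x b := by
  intro x hx
  obtain ⟨hxI, hxF⟩ := hx
  set i0 : Fin n := ⟨0, hn⟩ with hi0
  set il : Fin n := ⟨n - 1, by omega⟩ with hil
  have hle_il : ∀ j : Fin n, j ≤ il := by
    intro j; rw [Fin.le_def]; have := j.isLt; simp [hil]; omega
  have hi0_le : ∀ j : Fin n, i0 ≤ j := by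
    intro j; rw [Fin.le_def]; simp [hi0]
  rcases trichotomy hn hxF with hlt | hgt | ⟨i, hi, hfi, hfi1⟩
  · -- x < f 0 : unique b is g (n-1)
    have hxg : ∀ m : Fin n, x < g m := fun m => hlt.trans (h.f_lt_g (hi0_le m))
    refine ⟨g il, ⟨⟨il, rfl⟩, Or.inr ?_⟩, ?_⟩
    · rintro t ⟨j, rfl⟩
      rw [min_eq_left (hxg il).le, max_eq_right (hxg il).le]
      exact ⟨hlt.trans_le (h.sm_f.monotone (hi0_le j)), h.f_lt_g (hle_il j)⟩
    · rintro b ⟨⟨m, rfl⟩, hP⟩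
      suffices hm : m = il by rw [hm]
      rcases hP with hemp | hsub
      · exfalso
        have : f i0 ∈ uIcc x (g m) ∩ range f := by
          rw [uIcc_of_le (hxg m).le]
          exact ⟨⟨hlt.le, (h.f_lt_g (hi0_le m)).le⟩, ⟨i0, rfl⟩⟩
        rw [hemp] at this; exact this
      · have hfil := hsub ⟨il, rfl⟩
        rw [min_eq_left (hxg m).le, max_eq_right (hxg m).le] at hfil
        by_contra hne
        have hmlt : m < il := lt_of_le_of_ne (hle_il m) hne
        exact absurd hfil.2 (not_lt.mpr (h.g_lt_f hmlt).le)
  · -- f (n-1) < x : unique b is g (n-1)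
    refine ⟨g il, ⟨⟨il, rfl⟩, Or.inl ?_⟩, ?_⟩
    · rw [eq_empty_iff_forall_notMem]
      rintro t ⟨htu, j, rfl⟩
      have : f il < f j := by
        rcases mem_uIcc.mp htu with hh | hh
        · exact hgt.trans_le hh.1
        · exact (h.1 il).trans_le hh.1
      exact absurd (h.sm_f.monotone (hle_il j)) (not_le.mpr this)
    · rintro b ⟨⟨m, rfl⟩, hP⟩
      suffices hm : m = il by rw [hm]
      by_contra hne
      have hmlt : m < il := lt_of_le_of_ne (hle_il m) hne
      have hgmx : g m < x := (h.g_lt_f hmlt).trans_le (h.sm_f.monotone (hle_il _)) |>.trans hgt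
      rcases hP with hemp | hsub
      · have hmem : f il ∈ uIcc x (g m) ∩ range f := by
          rw [uIcc_comm, uIcc_of_le hgmx.le]
          exact ⟨⟨(h.g_lt_f hmlt).le, hgt.le⟩, ⟨il, rfl⟩⟩
        rw [hemp] at hmem; exact hmem
      · have hfm := hsub ⟨m, rfl⟩
        rw [min_eq_right hgmx.le] at hfm
        exact absurd hfm.1 (not_lt.mpr (h.1 m).le)
  · -- gap case
    set ii : Fin n := ⟨i, by omega⟩ with hii
    set isucc : Fin n := ⟨i + 1, hi⟩ with hisucc
    have hiis : ii < isucc := by rw [Fin.lt_def]; simp [hii, hisucc]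
    have hgii1 : f ii < g ii := h.1 ii
    have hgii2 : g ii < f isucc := h.2 ii isucc rfl
    have hxIoo : x ∈ Ioo (f ii) (f isucc) := ⟨hfi, hfi1⟩
    have hgIoo : g ii ∈ Ioo (f ii) (f isucc) := ⟨hgii1, hgii2⟩
    have hsub_gap : uIcc x (g ii) ⊆ Ioo (f ii) (f isucc) :=
      (ordConnected_Ioo).uIcc_subset hxIoo hgIoo
    have hgap_empty : uIcc x (g ii) ∩ range f = ∅ := by
      rw [eq_empty_iff_forall_notMem]
      rintro t ⟨htu, j, rfl⟩
      obtain ⟨h1, h2⟩ := hsub_gap htu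
      have hj1 : ii < j := h.sm_f.lt_iff_lt.mp h1
      have hj2 : j < isucc := h.sm_f.lt_iff_lt.mp h2
      rw [Fin.lt_def] at hj1 hj2
      simp [hii, hisucc] at hj1 hj2
      omega
    refine ⟨g ii, ⟨⟨ii, rfl⟩, Or.inl hgap_empty⟩, ?_⟩
    rintro b ⟨⟨m, rfl⟩, hP⟩
    suffices hm : m = ii by rw [hm]
    rcases hP with hemp | hsub
    · by_contra hne
      rcases lt_or_gt_of_ne hne with hmlt | hmgt
      · -- m < ii : f ii ∈ uIcc x (g m)
        have hgm : g m < x := (h.g_lt_f hmlt).trans hfi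
        have hmem : f ii ∈ uIcc x (g m) ∩ range f := by
          rw [uIcc_comm, uIcc_of_le hgm.le]
          exact ⟨⟨(h.g_lt_f hmlt).le, hfi.le⟩, ⟨ii, rfl⟩⟩
        rw [hemp] at hmem; exact hmem
      · -- ii < m : f isucc ∈ uIcc x (g m)
        have hmgt' : ii < m := hmgt
        have hism : isucc ≤ m := by
          rw [Fin.le_def]; rw [Fin.lt_def] at hmgt'; simp [hii, hisucc] at hmgt' ⊢; omega
        have hxgm : x < g m := hfi1.trans_le ((h.sm_f.monotone hism).trans (h.1 m).le)
        have hmem : f isucc ∈ uIcc x (g m) ∩ range f := by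
          rw [uIcc_of_le hxgm.le]
          exact ⟨⟨hfi1.le, (h.f_lt_g hism).le⟩, ⟨isucc, rfl⟩⟩
        rw [hemp] at hmem; exact hmem
    · exfalso
      rcases le_or_gt x (g m) with hc | hc
      · have := hsub ⟨ii, rfl⟩
        rw [min_eq_left hc] at this
        exact absurd this.1 (not_lt.mpr hfi.le)
      · have := hsub ⟨isucc, rfl⟩
        rw [max_eq_left hc.le] at this
        exact absurd this.2 (not_lt.mpr hfi1.le)


lemma cut_iff {a : ℝ} {F G : Set ℝ} {n : ℕ} (hn : 1 ≤ n)
    (hFI : F ⊆ Ioo a (a + 1)) (hGI : G ⊆ Ioo a (a + 1))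
    (hFfin : F.Finite) (hGfin : G.Finite) (hd : Disjoint F G)
    (hFc : F.ncard = n) (hGc : G.ncard = n) :
    IsPointInterlacing (univ : Set Q) ((fun r : ℝ => (r : Q)) '' F)
        ((fun r : ℝ => (r : Q)) '' G) n
      ↔ ∀ x ∈ Ico a (a + 1) \ F, ∃! b, b ∈ G ∧ Pg F x b := by
  have hIco : Ioo a (a + 1) ⊆ Ico a (a + 1) := Ioo_subset_Ico_self
  have hinj := coe_injOn_Ico a
  have hFne : F.Nonempty := nonempty_of_ncard_ne_zero (by omega)
  have hcFne : ((fun r : ℝ => (r : Q)) '' F).Nonempty := hFne.image _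
  have hcompl : (univ : Set Q) \ ((fun r : ℝ => (r : Q)) '' F) =
      ((fun r : ℝ => (r : Q)) '' F)ᶜ := by
    rw [← compl_eq_univ_diff]
  have hmemiff : ∀ {t : ℝ} {S : Set ℝ}, S ⊆ Ioo a (a + 1) → t ∈ Ico a (a + 1) →
      ((t : Q) ∈ (fun r : ℝ => (r : Q)) '' S ↔ t ∈ S) := by
    intro t S hS ht
    constructor
    · rintro ⟨s, hs, heq⟩
      rwa [← hinj (hIco (hS hs)) ht heq]
    · intro ht'
      exact mem_image_of_mem _ ht'
  constructor
  · intro hIP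
    rintro x ⟨hxIco, hxF⟩
    have hxQ : (x : Q) ∉ (fun r : ℝ => (r : Q)) '' F :=
      fun hmem => hxF ((hmemiff hFI hxIco).mp hmem)
    obtain ⟨b, ⟨hbG, hbcc⟩, huniq⟩ := hIP.2.2.2.2.2.2.2.2 (x : Q) ⟨mem_univ _, hxQ⟩
    obtain ⟨bh, hbhG, rfl⟩ := hbG
    have hbhI := hGI hbhG
    have hbhF : bh ∉ F := fun h => Set.disjoint_left.mp hd h hbhG
    rw [hcompl] at hbcc
    have harc := (mem_ccIn_iff_arc hcFne hxQ).mp hbcc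
    have hPg := (arc_iff_P hFne hFI hxIco hbhI hxF hbhF).mp harc
    refine ⟨bh, ⟨hbhG, hPg⟩, ?_⟩
    rintro b' ⟨hb'G, hb'P⟩
    have hb'I := hGI hb'G
    have hb'F : b' ∉ F := fun h => Set.disjoint_left.mp hd h hb'G
    have harc' := (arc_iff_P hFne hFI hxIco hb'I hxF hb'F).mpr hb'P
    have hcc' := (mem_ccIn_iff_arc hcFne hxQ).mpr harc'
    rw [← hcompl] at hcc'
    have := huniq ((b' : ℝ) : Q) ⟨mem_image_of_mem _ hb'G, hcc'⟩
    exact hinj (hIco hb'I) (hIco hbhI) this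
  · intro hexu
    refine ⟨hn, subset_univ _, subset_univ _, ?_, hFfin.image _, hGfin.image _, ?_, ?_, ?_⟩
    · rw [Set.disjoint_left]
      rintro z ⟨f, hf, rfl⟩ ⟨g, hg, heq⟩
      have : g = f := hinj (hIco (hGI hg)) (hIco (hFI hf)) heq
      exact Set.disjoint_left.mp hd hf (this ▸ hg)
    · rw [Set.ncard_image_of_injOn (hinj.mono (hFI.trans hIco)), hFc]
    · rw [Set.ncard_image_of_injOn (hinj.mono (hGI.trans hIco)), hGc]
    · rintro q ⟨-, hqF⟩
      obtain ⟨x, hxIco, rfl⟩ := rep_Ico a q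
      have hxF : x ∉ F := fun h => hqF (mem_image_of_mem _ h)
      obtain ⟨bh, ⟨hbhG, hbhP⟩, huniq⟩ := hexu x ⟨hxIco, hxF⟩
      have hbhI := hGI hbhG
      have hbhF : bh ∉ F := fun h => Set.disjoint_left.mp hd h hbhG
      have hxQ : (x : Q) ∉ (fun r : ℝ => (r : Q)) '' F :=
        fun hmem => hxF ((hmemiff hFI hxIco).mp hmem)
      refine ⟨(bh : Q), ⟨mem_image_of_mem _ hbhG, ?_⟩, ?_⟩
      · rw [hcompl]
        exact (mem_ccIn_iff_arc hcFne hxQ).mpr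
          ((arc_iff_P hFne hFI hxIco hbhI hxF hbhF).mpr hbhP)
      · rintro b' ⟨hb'G, hb'cc⟩
        obtain ⟨bh', hbh'G, rfl⟩ := hb'G
        have hbh'I := hGI hbh'G
        have hbh'F : bh' ∉ F := fun h => Set.disjoint_left.mp hd h hbh'G
        rw [hcompl] at hb'cc
        have hPg' := (arc_iff_P hFne hFI hxIco hbh'I hxF hbh'F).mp
          ((mem_ccIn_iff_arc hcFne hxQ).mp hb'cc)
        rw [huniq bh' ⟨hbh'G, hPg'⟩]

lemma ccIn_image {Y X : Type*} [TopologicalSpace Y] [TopologicalSpace X] {f : Y → X}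
    (hf : Topology.IsEmbedding f) (s : Set Y) {y : Y} (hy : y ∈ s) :
    connectedComponentIn (f '' s) (f y) = f '' connectedComponentIn s y := by
  apply subset_antisymm
  · set T := connectedComponentIn (f '' s) (f y) with hT
    have hTpc : IsPreconnected T := isPreconnected_connectedComponentIn
    have hTs : T ⊆ f '' s := connectedComponentIn_subset _ _
    set S₀ := f ⁻¹' T ∩ s with hS₀
    have him : f '' S₀ = T := by
      apply subset_antisymm
      · rintro x ⟨c, ⟨hc1, _⟩, rfl⟩
        exact hc1
      · intro t ht
        obtain ⟨u, hus, rfl⟩ := hTs ht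
        exact ⟨u, ⟨ht, hus⟩, rfl⟩
    have hS₀pc : IsPreconnected S₀ := hf.isInducing.isPreconnected_image.mp (him ▸ hTpc)
    have hy' : y ∈ S₀ := ⟨mem_connectedComponentIn (mem_image_of_mem f hy), hy⟩
    have := hS₀pc.subset_connectedComponentIn hy' inter_subset_right
    calc T = f '' S₀ := him.symm
      _ ⊆ f '' connectedComponentIn s y := image_mono this
  · have hpc : IsPreconnected (f '' connectedComponentIn s y) :=
      (isPreconnected_connectedComponentIn).image _ hf.continuous.continuousOn
    apply hpc.subset_connectedComponentIn
    · exact mem_image_of_mem f (mem_connectedComponentIn hy)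
    · exact image_mono (connectedComponentIn_subset _ _)

lemma interlacing_transfer {Y X : Type*} [TopologicalSpace Y] [TopologicalSpace X] {f : Y → X}
    (hf : Topology.IsEmbedding f) {A' B' : Set X} (hA' : A' ⊆ range f) (hB' : B' ⊆ range f)
    {n : ℕ} :
    IsPointInterlacing (range f) A' B' n ↔
      IsPointInterlacing (univ : Set Y) (f ⁻¹' A') (f ⁻¹' B') n := by
  have hAim : f '' (f ⁻¹' A') = A' := Set.image_preimage_eq_of_subset hA'
  have hBim : f '' (f ⁻¹' B') = B' := Set.image_preimage_eq_of_subset hB'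
  have hset : range f \ A' = f '' (f ⁻¹' A')ᶜ := Set.image_compl_preimage.symm
  have hcomplY : (univ : Set Y) \ (f ⁻¹' A') = (f ⁻¹' A')ᶜ := by
    rw [← compl_eq_univ_diff]
  have hkey : ∀ y, y ∈ (f ⁻¹' A')ᶜ →
      ((∃! b, b ∈ B' ∧ b ∈ connectedComponentIn (range f \ A') (f y)) ↔
        (∃! c, c ∈ f ⁻¹' B' ∧ c ∈ connectedComponentIn ((f ⁻¹' A')ᶜ) y)) := by
    intro y hy
    rw [hset, ccIn_image hf _ hy]
    constructor
    · rintro ⟨b, ⟨hbB, hbW⟩, huniq⟩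
      obtain ⟨c, hcW, rfl⟩ := hbW
      refine ⟨c, ⟨hbB, hcW⟩, ?_⟩
      rintro c' ⟨h1, h2⟩
      exact hf.injective (huniq (f c') ⟨h1, mem_image_of_mem f h2⟩)
    · rintro ⟨c, ⟨hcB, hcW⟩, huniq⟩
      refine ⟨f c, ⟨hcB, mem_image_of_mem f hcW⟩, ?_⟩
      rintro b' ⟨hb'B, hb'W⟩
      obtain ⟨c', hc'W, rfl⟩ := hb'W
      rw [huniq c' ⟨hb'B, hc'W⟩]
  constructor
  · rintro ⟨h1, h2, h3, h4, h5, h6, h7, h8, h9⟩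
    refine ⟨h1, subset_univ _, subset_univ _, h4.preimage f,
      h5.preimage (hf.injective.injOn), h6.preimage (hf.injective.injOn), ?_, ?_, ?_⟩
    · rw [← Set.ncard_image_of_injective _ hf.injective, hAim, h7]
    · rw [← Set.ncard_image_of_injective _ hf.injective, hBim, h8]
    · rintro y ⟨-, hy⟩
      rw [hcomplY]
      exact (hkey y hy).mp (h9 (f y) ⟨⟨y, rfl⟩, fun hmem => hy (mem_preimage.mpr hmem)⟩)
  · rintro ⟨h1, _, _, h4, h5, h6, h7, h8, h9⟩
    refine ⟨h1, hA', hB', ?_, ?_, ?_, ?_, ?_, ?_⟩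
    · rw [← hAim, ← hBim]
      rw [Set.disjoint_left]
      rintro z ⟨c, hc, rfl⟩ ⟨c', hc', heq⟩
      have : c' = c := hf.injective heq
      exact Set.disjoint_left.mp h4 hc (this ▸ hc')
    · rw [← hAim]; exact h5.image f
    · rw [← hBim]; exact h6.image f
    · rw [← hAim, Set.ncard_image_of_injective _ hf.injective, h7]
    · rw [← hBim, Set.ncard_image_of_injective _ hf.injective, h8]
    · rintro x ⟨hxr, hxA⟩
      obtain ⟨y, rfl⟩ := hxr
      have hy : y ∈ (f ⁻¹' A')ᶜ := fun hmem => hxA hmem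
      have h9y := h9 y ⟨mem_univ y, hy⟩
      rw [hcomplY] at h9y
      exact (hkey y hy).mpr h9y

lemma interleaved_thickening {n : ℕ} {As Bs : Set ℝ} {δ : ℝ} (hδ : 0 < δ)
    (hpair : ∀ f ∈ As, ∀ g ∈ Bs, 3 * δ ≤ |f - g|)
    {f₁ g₁ : Fin n → ℝ} (hf₁ : ∀ i, f₁ i ∈ thickening δ As)
    (hg₁ : ∀ i, g₁ i ∈ thickening δ Bs) (h : Interleaved f₁ g₁) :
    ∃ f g : Fin n → ℝ, (∀ i, f i ∈ As) ∧ (∀ i, g i ∈ Bs) ∧ Interleaved f g := by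
  choose F hF1 hF2 using fun i => Metric.mem_thickening_iff.mp (hf₁ i)
  choose G hG1 hG2 using fun i => Metric.mem_thickening_iff.mp (hg₁ i)
  have hFd : ∀ i, |f₁ i - F i| < δ := fun i => by
    have := hF2 i; rwa [Real.dist_eq] at this
  have hGd : ∀ i, |g₁ i - G i| < δ := fun i => by
    have := hG2 i; rwa [Real.dist_eq] at this
  refine ⟨F, G, hF1, hG1, ?_, ?_⟩
  · intro i
    have h3 := hpair (F i) (hF1 i) (G i) (hG1 i)
    have h1 := abs_lt.mp (hFd i)
    have h2 := abs_lt.mp (hGd i)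
    have hlt := h.1 i
    by_contra hle
    push_neg at hle
    have habs : |F i - G i| = F i - G i := abs_of_nonneg (by linarith)
    rw [habs] at h3
    linarith
  · intro i j hij
    have h3 := hpair (F j) (hF1 j) (G i) (hG1 i)
    have h1 := abs_lt.mp (hFd j)
    have h2 := abs_lt.mp (hGd i)
    have hlt := h.2 i j hij
    by_contra hle
    push_neg at hle
    have habs : |F j - G i| = -(F j - G i) := abs_of_nonpos (by linarith)
    rw [habs] at h3
    linarith

lemma one_inter {qa qb : Q} (hne : qa ≠ qb) :
    IsPointInterlacing (univ : Set Q) {qa} {qb} 1 := by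
  refine ⟨le_rfl, subset_univ _, subset_univ _, ?_, finite_singleton _, finite_singleton _,
    Set.ncard_singleton _, Set.ncard_singleton _, ?_⟩
  · rw [Set.disjoint_singleton_left, mem_singleton_iff]
    exact hne
  · rintro x ⟨-, hx⟩
    rw [mem_singleton_iff] at hx
    have hcompl : (univ : Set Q) \ {qa} = ({qa} : Set Q)ᶜ := by rw [← compl_eq_univ_diff]
    refine ⟨qb, ⟨mem_singleton qb, ?_⟩, ?_⟩
    · rw [hcompl]
      obtain ⟨ah, rfl⟩ := Quotient.exists_rep qa
      obtain ⟨xh, hxh, rfl⟩ := rep_Ico ah x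
      obtain ⟨bh, hbh, rfl⟩ := rep_Ico ah qb
      have hxa : xh ≠ ah := by
        rintro rfl; exact hx rfl
      have hba : bh ≠ ah := by
        rintro rfl; exact hne rfl
      have hxI : xh ∈ Ioo ah (ah + 1) := ⟨lt_of_le_of_ne hxh.1 (Ne.symm hxa), hxh.2⟩
      have hbI : bh ∈ Ioo ah (ah + 1) := ⟨lt_of_le_of_ne hbh.1 (Ne.symm hba), hbh.2⟩
      apply (mem_ccIn_iff_arc (singleton_nonempty _) (by simpa using hx)).mpr
      refine ⟨xh, bh, rfl, rfl, ?_⟩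
      intro t htu hmem
      rw [mem_singleton_iff] at hmem
      obtain ⟨z, hz⟩ := coe_eq_coe.mp hmem
      have htI : t ∈ Ioo ah (ah + 1) := ordConnected_Ioo.uIcc_subset hxI hbI htu
      have hz1 : (0 : ℝ) < z := by rw [← hz]; cases htI; linarith
      have hz2 : (z : ℝ) < 1 := by rw [← hz]; cases htI; linarith
      have h1' : 0 < z := by exact_mod_cast hz1
      have h2' : z < 1 := by exact_mod_cast hz2
      omega
    · rintro b' ⟨hb', -⟩
      exact hb'


instance : CompactSpace ↥unitCircleSet := by unfold unitCircleSet; infer_instance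

/-- The obvious homeomorphism between `Circle` and the subtype of `unitCircleSet`. -/
def circleHomeo : Circle ≃ₜ ↥unitCircleSet where
  toFun z := ⟨(z : ℂ), z.2⟩
  invFun z := ⟨(z : ℂ), z.2⟩
  left_inv z := rfl
  right_inv z := rfl
  continuous_toFun := Continuous.subtype_mk (by continuity) _
  continuous_invFun := Continuous.subtype_mk (by continuity) _

end NIT
/-- **Neighborhood Interlacing Theorem for Simple Closed Curves**: if `(A, B)` is a
`k`-interlacing for the simple closed curve `J`, then there are neighborhoods `U` of
`A ∩ |J|` and `V` of `B ∩ |J|`, open in `|J|`, such that any disjoint compact sets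
`Ã`, `B̃` with `A ∩ |J| ⊆ Ã ∩ |J| ⊆ U` and `B ∩ |J| ⊆ B̃ ∩ |J| ⊆ V` also form a
`k`-interlacing for `J`. -/
theorem neighborhood_interlacing {X : Type*} [TopologicalSpace X] [T2Space X]
    (J : ↥unitCircleSet → X) (hJ : Topology.IsEmbedding J)
    (A B : Set X) (hA : IsCompact A) (hB : IsCompact B) (hAB : Disjoint A B)
    (k : ℕ) (hk : interlacingNumber (Set.range J) A B = k) :
    ∃ U V : Set X, U ⊆ Set.range J ∧ V ⊆ Set.range J ∧
      IsOpen (Subtype.val ⁻¹' U : Set ↥(Set.range J)) ∧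
      IsOpen (Subtype.val ⁻¹' V : Set ↥(Set.range J)) ∧
      A ∩ Set.range J ⊆ U ∧ B ∩ Set.range J ⊆ V ∧
      ∀ A₁ B₁ : Set X, IsCompact A₁ → IsCompact B₁ → Disjoint A₁ B₁ →
        A ∩ Set.range J ⊆ A₁ ∩ Set.range J → A₁ ∩ Set.range J ⊆ U →
        B ∩ Set.range J ⊆ B₁ ∩ Set.range J → B₁ ∩ Set.range J ⊆ V →
        interlacingNumber (Set.range J) A₁ B₁ = k := by
  classical
  rw [interlacingNumber] at hk
  set S : Set ℕ := {n : ℕ | ∃ A' B' : Set X, A' ⊆ A ∩ Set.range J ∧ B' ⊆ B ∩ Set.range J ∧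
    IsPointInterlacing (Set.range J) A' B' n} with hSdef
  have hSpos : ∀ n ∈ S, 1 ≤ n := by rintro n ⟨A', B', -, -, hIP⟩; exact hIP.1
  -- the embedding of the model circle
  let Ψ : NIT.Q ≃ₜ ↥unitCircleSet :=
    (AddCircle.homeomorphCircle one_ne_zero).trans NIT.circleHomeo
  set e : NIT.Q → X := J ∘ ⇑Ψ with hedef
  have hee : Topology.IsEmbedding e := hJ.comp Ψ.isEmbedding
  have hrangeE : Set.range e = Set.range J := Ψ.surjective.range_comp J
  have hopen : ∀ W : Set NIT.Q, IsOpen W →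
      IsOpen (Subtype.val ⁻¹' (e '' W) : Set ↥(Set.range J)) := by
    intro W hW
    let e' : NIT.Q → ↥(Set.range J) := fun q => ⟨e q, hrangeE ▸ mem_range_self q⟩
    have he'bij : Function.Bijective e' := by
      constructor
      · intro q q' hqq
        exact hee.injective (congrArg Subtype.val hqq)
      · rintro ⟨x, hx⟩
        rw [← hrangeE] at hx
        obtain ⟨q, rfl⟩ := hx
        exact ⟨q, rfl⟩
    let Φ : NIT.Q ≃ₜ ↥(Set.range J) :=
      Continuous.homeoOfEquivCompactToT2 (f := Equiv.ofBijective e' he'bij)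
        (Continuous.subtype_mk hee.continuous _)
    have hval : (Subtype.val ⁻¹' (e '' W) : Set ↥(Set.range J)) = Φ '' W := by
      ext y
      simp only [mem_preimage, mem_image]
      constructor
      · rintro ⟨q, hqW, hq⟩
        exact ⟨q, hqW, Subtype.ext hq⟩
      · rintro ⟨q, hqW, rfl⟩
        exact ⟨q, hqW, rfl⟩
    rw [hval]
    exact Φ.isOpenMap W hW
  have htrans : ∀ (A' B' : Set X) (n : ℕ), A' ⊆ Set.range J → B' ⊆ Set.range J →
      (IsPointInterlacing (Set.range J) A' B' n ↔
        IsPointInterlacing (univ : Set NIT.Q) (e ⁻¹' A') (e ⁻¹' B') n) := by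
    intro A' B' n hA' hB'
    rw [← hrangeE] at hA' hB' ⊢
    exact NIT.interlacing_transfer hee hA' hB'
  -- degenerate case : A misses the curve
  by_cases hACe : A ∩ Set.range J = ∅
  · have hSe : ∀ (A₂ B₂ : Set X), A₂ ∩ Set.range J ⊆ ∅ →
        {n : ℕ | ∃ A' B' : Set X, A' ⊆ A₂ ∩ Set.range J ∧ B' ⊆ B₂ ∩ Set.range J ∧
          IsPointInterlacing (Set.range J) A' B' n} = ∅ := by
      intro A₂ B₂ hA₂
      rw [eq_empty_iff_forall_notMem]
      rintro n ⟨A', B', h1, -, hIP⟩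
      have : A' = ∅ := subset_empty_iff.mp (h1.trans hA₂)
      have hcard := hIP.2.2.2.2.2.2.1
      rw [this, Set.ncard_empty] at hcard
      have := hIP.1
      omega
    have hk0 : k = 0 := by
      rw [← hk, hSdef, hSe A B (hACe ▸ subset_rfl), csSup_empty, Nat.bot_eq_zero]
    refine ⟨∅, Set.range J, empty_subset _, subset_rfl, ?_, ?_, ?_, inter_subset_right,
      ?_⟩
    · rw [preimage_empty]; exact isOpen_empty
    · have : (Subtype.val ⁻¹' Set.range J : Set ↥(Set.range J)) = univ :=
        eq_univ_of_forall fun y => y.2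
      rw [this]; exact isOpen_univ
    · rw [hACe]
    · intro A₁ B₁ _ _ _ _ hA₁U _ _
      rw [interlacingNumber, hSe A₁ B₁ hA₁U, csSup_empty, Nat.bot_eq_zero, hk0]
  by_cases hBCe : B ∩ Set.range J = ∅
  · have hSe : ∀ (A₂ B₂ : Set X), B₂ ∩ Set.range J ⊆ ∅ →
        {n : ℕ | ∃ A' B' : Set X, A' ⊆ A₂ ∩ Set.range J ∧ B' ⊆ B₂ ∩ Set.range J ∧
          IsPointInterlacing (Set.range J) A' B' n} = ∅ := by
      intro A₂ B₂ hB₂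
      rw [eq_empty_iff_forall_notMem]
      rintro n ⟨A', B', -, h2, hIP⟩
      have : B' = ∅ := subset_empty_iff.mp (h2.trans hB₂)
      have hcard := hIP.2.2.2.2.2.2.2.1
      rw [this, Set.ncard_empty] at hcard
      have := hIP.1
      omega
    have hk0 : k = 0 := by
      rw [← hk, hSdef, hSe A B (hBCe ▸ subset_rfl), csSup_empty, Nat.bot_eq_zero]
    refine ⟨Set.range J, ∅, subset_rfl, empty_subset _, ?_, ?_, inter_subset_right, ?_,
      ?_⟩
    · have : (Subtype.val ⁻¹' Set.range J : Set ↥(Set.range J)) = univ :=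
        eq_univ_of_forall fun y => y.2
      rw [this]; exact isOpen_univ
    · rw [preimage_empty]; exact isOpen_empty
    · rw [hBCe]
    · intro A₁ B₁ _ _ _ _ _ _ hB₁V
      rw [interlacingNumber, hSe A₁ B₁ hB₁V, csSup_empty, Nat.bot_eq_zero, hk0]
  -- both traces nonempty : a 1-interlacing always exists
  have hACne : (A ∩ Set.range J).Nonempty := nonempty_iff_ne_empty.mpr hACe
  have hBCne : (B ∩ Set.range J).Nonempty := nonempty_iff_ne_empty.mpr hBCe
  have h1S : 1 ∈ S := by
    obtain ⟨a, haA⟩ := hACne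
    obtain ⟨b, hbB⟩ := hBCne
    have hab : a ≠ b := hAB.ne_of_mem haA.1 hbB.1
    have ha' : a ∈ Set.range e := hrangeE ▸ haA.2
    have hb' : b ∈ Set.range e := hrangeE ▸ hbB.2
    obtain ⟨qa, rfl⟩ := ha'
    obtain ⟨qb, rfl⟩ := hb'
    have hq : qa ≠ qb := fun h => hab (by rw [h])
    have hpre1 : e ⁻¹' {e qa} = {qa} := by
      ext q; simp [hee.injective.eq_iff]
    have hpre2 : e ⁻¹' {e qb} = {qb} := by
      ext q; simp [hee.injective.eq_iff]
    refine ⟨{e qa}, {e qb}, singleton_subset_iff.mpr haA, singleton_subset_iff.mpr hbB, ?_⟩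
    rw [htrans _ _ 1 (singleton_subset_iff.mpr (hrangeE ▸ mem_range_self qa))
      (singleton_subset_iff.mpr (hrangeE ▸ mem_range_self qb)), hpre1, hpre2]
    exact NIT.one_inter hq
  rcases Nat.eq_zero_or_pos k with hk0 | hk1
  · -- unbounded case
    have hnb : ¬BddAbove S := by
      intro hbdd
      have hmem := Nat.sSup_mem ⟨1, h1S⟩ hbdd
      rw [hk, hk0] at hmem
      exact absurd (hSpos 0 hmem) (by omega)
    refine ⟨Set.range J, Set.range J, subset_rfl, subset_rfl, ?_, ?_,
      inter_subset_right, inter_subset_right, ?_⟩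
    · have : (Subtype.val ⁻¹' Set.range J : Set ↥(Set.range J)) = univ :=
        eq_univ_of_forall fun y => y.2
      rw [this]; exact isOpen_univ
    · have : (Subtype.val ⁻¹' Set.range J : Set ↥(Set.range J)) = univ :=
        eq_univ_of_forall fun y => y.2
      rw [this]; exact isOpen_univ
    · intro A₁ B₁ _ _ _ hAA₁ _ hBB₁ _
      rw [interlacingNumber]
      have hsub : S ⊆ {n : ℕ | ∃ A' B' : Set X, A' ⊆ A₁ ∩ Set.range J ∧
          B' ⊆ B₁ ∩ Set.range J ∧ IsPointInterlacing (Set.range J) A' B' n} := by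
        rintro n ⟨A', B', h1, h2, h3⟩
        exact ⟨A', B', h1.trans hAA₁, h2.trans hBB₁, h3⟩
      have hnb₁ : ¬BddAbove {n : ℕ | ∃ A' B' : Set X, A' ⊆ A₁ ∩ Set.range J ∧
          B' ⊆ B₁ ∩ Set.range J ∧ IsPointInterlacing (Set.range J) A' B' n} :=
        fun hb => hnb (hb.mono hsub)
      have hinf : {n : ℕ | ∃ A' B' : Set X, A' ⊆ A₁ ∩ Set.range J ∧
          B' ⊆ B₁ ∩ Set.range J ∧ IsPointInterlacing (Set.range J) A' B' n}.Infinite :=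
        fun hfin => hnb₁ hfin.bddAbove
      rw [Set.Infinite.Nat.sSup_eq_zero hinf, hk0]
  -- MAIN CASE
  have hSne : S.Nonempty := ⟨1, h1S⟩
  have hSbdd : BddAbove S := by
    by_contra h
    have hinf : S.Infinite := fun hfin => h hfin.bddAbove
    rw [Set.Infinite.Nat.sSup_eq_zero hinf] at hk
    omega
  have hkS : k ∈ S := hk ▸ Nat.sSup_mem hSne hSbdd
  obtain ⟨A'₀, B'₀, hA'₀, hB'₀, hIP₀⟩ := hkS
  -- circle-side data
  set AQ : Set NIT.Q := e ⁻¹' (A ∩ Set.range J) with hAQdef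
  set BQ : Set NIT.Q := e ⁻¹' (B ∩ Set.range J) with hBQdef
  have hCcomp : IsCompact (Set.range J) := isCompact_range hJ.continuous
  have hACcl : IsClosed (A ∩ Set.range J) := hA.isClosed.inter hCcomp.isClosed
  have hBCcl : IsClosed (B ∩ Set.range J) := hB.isClosed.inter hCcomp.isClosed
  have hAQcl : IsClosed AQ := hACcl.preimage hee.continuous
  have hBQcl : IsClosed BQ := hBCcl.preimage hee.continuous
  have hdisjC : Disjoint (A ∩ Set.range J) (B ∩ Set.range J) :=
    hAB.mono inter_subset_left inter_subset_left
  have hdisjQ : Disjoint AQ BQ := hdisjC.preimage e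
  have hAQne : AQ.Nonempty := by
    obtain ⟨a, haA⟩ := hACne
    obtain ⟨qa, rfl⟩ := hrangeE ▸ haA.2
    exact ⟨qa, haA⟩
  have hBQne : BQ.Nonempty := by
    obtain ⟨b, hbB⟩ := hBCne
    obtain ⟨qb, rfl⟩ := hrangeE ▸ hbB.2
    exact ⟨qb, hbB⟩
  -- choose a cut point p ∉ AQ ∪ BQ
  have hpex : ∃ p : NIT.Q, p ∉ AQ ∪ BQ := by
    by_contra hcon
    push_neg at hcon
    have huniv : AQ ∪ BQ = univ := eq_univ_of_forall hcon
    have hAopen : IsOpen AQ := by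
      have hAeq : AQ = BQᶜ := by
        apply subset_antisymm
        · exact fun q hq hq' => Set.disjoint_left.mp hdisjQ hq hq'
        · intro q hq
          rcases (huniv ▸ mem_univ q : q ∈ AQ ∪ BQ) with h | h
          · exact h
          · exact absurd h hq
      rw [hAeq]; exact hBQcl.isOpen_compl
    have hAuniv := IsClopen.eq_univ (s := AQ) ⟨hAQcl, hAopen⟩ hAQne
    obtain ⟨q, hq⟩ := hBQne
    exact Set.disjoint_left.mp hdisjQ (hAuniv ▸ mem_univ q) hq
  obtain ⟨p, hp⟩ := hpex
  obtain ⟨abar, -, rfl⟩ := NIT.rep_Ico 0 p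
  have hpA : ((abar : ℝ) : NIT.Q) ∉ AQ := fun h => hp (Or.inl h)
  have hpB : ((abar : ℝ) : NIT.Q) ∉ BQ := fun h => hp (Or.inr h)
  -- cut the traces to the real line
  set At : Set ℝ := ((fun r : ℝ => (r : NIT.Q)) ⁻¹' AQ) ∩ Icc abar (abar + 1) with hAt
  set Bt : Set ℝ := ((fun r : ℝ => (r : NIT.Q)) ⁻¹' BQ) ∩ Icc abar (abar + 1) with hBt
  have hAtI : At ⊆ Ioo abar (abar + 1) := by
    rintro x ⟨hxA, hxIcc⟩
    constructor
    · rcases eq_or_lt_of_le hxIcc.1 with rfl | h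
      · exact absurd hxA hpA
      · exact h
    · rcases eq_or_lt_of_le hxIcc.2 with h | h
      · exfalso
        have hmem : ((abar + 1 : ℝ) : NIT.Q) ∈ AQ := by rw [← h]; exact hxA
        rw [NIT.coe_add_one] at hmem
        exact hpA hmem
      · exact h
  have hBtI : Bt ⊆ Ioo abar (abar + 1) := by
    rintro x ⟨hxB, hxIcc⟩
    constructor
    · rcases eq_or_lt_of_le hxIcc.1 with rfl | h
      · exact absurd hxB hpB
      · exact h
    · rcases eq_or_lt_of_le hxIcc.2 with h | h
      · exfalso
        have hmem : ((abar + 1 : ℝ) : NIT.Q) ∈ BQ := by rw [← h]; exact hxB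
        rw [NIT.coe_add_one] at hmem
        exact hpB hmem
      · exact h
  have hAtcomp : IsCompact At :=
    isCompact_Icc.of_isClosed_subset
      ((hAQcl.preimage (AddCircle.continuous_mk' 1)).inter isClosed_Icc) inter_subset_right
  have hBtcomp : IsCompact Bt :=
    isCompact_Icc.of_isClosed_subset
      ((hBQcl.preimage (AddCircle.continuous_mk' 1)).inter isClosed_Icc) inter_subset_right
  have hAtim : (fun r : ℝ => (r : NIT.Q)) '' At = AQ := by
    apply subset_antisymm
    · rintro q ⟨x, ⟨hx1, -⟩, rfl⟩
      exact hx1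
    · intro q hq
      obtain ⟨x, hxIco, rfl⟩ := NIT.rep_Ico abar q
      have hxa : x ≠ abar := by rintro rfl; exact hpA hq
      exact ⟨x, ⟨hq, ⟨hxIco.1, hxIco.2.le⟩⟩, rfl⟩
  have hBtim : (fun r : ℝ => (r : NIT.Q)) '' Bt = BQ := by
    apply subset_antisymm
    · rintro q ⟨x, ⟨hx1, -⟩, rfl⟩
      exact hx1
    · intro q hq
      obtain ⟨x, hxIco, rfl⟩ := NIT.rep_Ico abar q
      have hxa : x ≠ abar := by rintro rfl; exact hpB hq
      exact ⟨x, ⟨hq, ⟨hxIco.1, hxIco.2.le⟩⟩, rfl⟩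
  have hdisjT : Disjoint At Bt :=
    (hdisjQ.preimage (fun r : ℝ => (r : NIT.Q))).mono inter_subset_left inter_subset_left
  -- thickening parameters
  obtain ⟨δ₁, hδ₁pos, hδ₁⟩ := (hAtcomp.union hBtcomp).exists_thickening_subset_open
    isOpen_Ioo (union_subset hAtI hBtI)
  obtain ⟨δ₂, hδ₂pos, hδ₂⟩ := hdisjT.exists_thickenings hAtcomp hBtcomp.isClosed
  have hpair2 : ∀ x ∈ At, ∀ y ∈ Bt, 2 * δ₂ ≤ |x - y| := by
    intro x hx y hy
    by_contra hcon
    push_neg at hcon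
    have h2 : |y - x| < 2 * δ₂ := by rwa [abs_sub_comm]
    have hmx : dist ((x + y) / 2) x < δ₂ := by
      rw [Real.dist_eq]
      have he1 : (x + y) / 2 - x = (y - x) / 2 := by ring
      rw [he1, abs_div, abs_two]
      linarith
    have hmy : dist ((x + y) / 2) y < δ₂ := by
      rw [Real.dist_eq]
      have he1 : (x + y) / 2 - y = (x - y) / 2 := by ring
      rw [he1, abs_div, abs_two]
      linarith
    exact Set.disjoint_left.mp hδ₂ (mem_thickening_iff.mpr ⟨x, hx, hmx⟩)
      (mem_thickening_iff.mpr ⟨y, hy, hmy⟩)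
  set δ : ℝ := min δ₁ (2 * δ₂ / 3) with hδdef
  have hδpos : 0 < δ := lt_min hδ₁pos (by linarith)
  have hUI : thickening δ At ⊆ Ioo abar (abar + 1) :=
    (thickening_mono (min_le_left _ _) At).trans
      ((thickening_subset_of_subset δ₁ subset_union_left).trans hδ₁)
  have hVI : thickening δ Bt ⊆ Ioo abar (abar + 1) :=
    (thickening_mono (min_le_left _ _) Bt).trans
      ((thickening_subset_of_subset δ₁ subset_union_right).trans hδ₁)
  have hpair3 : ∀ x ∈ At, ∀ y ∈ Bt, 3 * δ ≤ |x - y| := by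
    intro x hx y hy
    have h1 := hpair2 x hx y hy
    have h2 : δ ≤ 2 * δ₂ / 3 := min_le_right _ _
    linarith
  have hpair3' : ∀ y ∈ Bt, ∀ x ∈ At, 3 * δ ≤ |y - x| := by
    intro y hy x hx
    rw [abs_sub_comm]
    exact hpair3 x hx y hy
  -- the neighbourhoods
  set UQ : Set NIT.Q := (fun r : ℝ => (r : NIT.Q)) '' thickening δ At with hUQdef
  set VQ : Set NIT.Q := (fun r : ℝ => (r : NIT.Q)) '' thickening δ Bt with hVQdef
  have hUQopen : IsOpen UQ := QuotientAddGroup.isOpenMap_coe _ isOpen_thickening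
  have hVQopen : IsOpen VQ := QuotientAddGroup.isOpenMap_coe _ isOpen_thickening
  have hAQUQ : AQ ⊆ UQ := by
    rw [← hAtim]
    exact image_mono (self_subset_thickening hδpos _)
  have hBQVQ : BQ ⊆ VQ := by
    rw [← hBtim]
    exact image_mono (self_subset_thickening hδpos _)
  -- the key constructor : interleaved sequences with values on the traces give members of S
  have hmkS : ∀ (n : ℕ), 1 ≤ n → ∀ (a' : ℝ) (f g : Fin n → ℝ),
      (∀ i, f i ∈ Ioo a' (a' + 1)) → (∀ i, g i ∈ Ioo a' (a' + 1)) →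
      (∀ i, ((f i : ℝ) : NIT.Q) ∈ AQ) → (∀ i, ((g i : ℝ) : NIT.Q) ∈ BQ) →
      NIT.Interleaved f g → n ∈ S := by
    intro n hn a' f g hfI hgI hfA hgB hint
    have hfm : StrictMono f := hint.sm_f
    have hgm : StrictMono g := hint.sm_g
    have hdisj : Disjoint (range f) (range g) := by
      rw [Set.disjoint_left]
      rintro z ⟨i, rfl⟩ ⟨j, hj⟩
      rcases le_or_gt i j with h | h
      · exact (hint.f_lt_g h).ne' hj
      · exact (hint.g_lt_f h).ne hj
    have hcardf : (range f).ncard = n := by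
      rw [← image_univ, Set.ncard_image_of_injective _ hfm.injective, ncard_univ,
        Nat.card_eq_fintype_card, Fintype.card_fin]
    have hcardg : (range g).ncard = n := by
      rw [← image_univ, Set.ncard_image_of_injective _ hgm.injective, ncard_univ,
        Nat.card_eq_fintype_card, Fintype.card_fin]
    have hrf : range f ⊆ Ioo a' (a' + 1) := range_subset_iff.mpr hfI
    have hrg : range g ⊆ Ioo a' (a' + 1) := range_subset_iff.mpr hgI
    have hexu := NIT.exu_of_interleaved hn hfI hgI hint
    have hQIP := (NIT.cut_iff hn hrf hrg (finite_range f) (finite_range g) hdisj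
      hcardf hcardg).mpr hexu
    set A'' : Set X := e '' ((fun r : ℝ => (r : NIT.Q)) '' range f) with hA''
    set B'' : Set X := e '' ((fun r : ℝ => (r : NIT.Q)) '' range g) with hB''
    have hA''sub : A'' ⊆ A ∩ Set.range J := by
      rintro x ⟨q, ⟨r, ⟨i, rfl⟩, rfl⟩, rfl⟩
      exact hfA i
    have hB''sub : B'' ⊆ B ∩ Set.range J := by
      rintro x ⟨q, ⟨r, ⟨i, rfl⟩, rfl⟩, rfl⟩
      exact hgB i
    have hA''r : A'' ⊆ Set.range J := hA''sub.trans inter_subset_right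
    have hB''r : B'' ⊆ Set.range J := hB''sub.trans inter_subset_right
    have hpreA : e ⁻¹' A'' = (fun r : ℝ => (r : NIT.Q)) '' range f :=
      Function.Injective.preimage_image hee.injective _
    have hpreB : e ⁻¹' B'' = (fun r : ℝ => (r : NIT.Q)) '' range g :=
      Function.Injective.preimage_image hee.injective _
    have hIPX : IsPointInterlacing (Set.range J) A'' B'' n := by
      rw [htrans A'' B'' n hA''r hB''r, hpreA, hpreB]
      exact hQIP
    exact ⟨A'', B'', hA''sub, hB''sub, hIPX⟩
  -- the key upper bound machine
  have hkeyup : ∀ (n : ℕ) (A' B' : Set X), A' ⊆ e '' UQ → B' ⊆ e '' VQ →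
      IsPointInterlacing (Set.range J) A' B' n → n ∈ S := by
    intro n A' B' hA'U hB'V hIP
    have hn : 1 ≤ n := hIP.1
    have hA'r : A' ⊆ Set.range J := hIP.2.1
    have hB'r : B' ⊆ Set.range J := hIP.2.2.1
    have hQIP := (htrans A' B' n hA'r hB'r).mp hIP
    have hFQ : e ⁻¹' A' ⊆ UQ := by
      intro q hq
      have := hA'U hq
      obtain ⟨q', hq', heq⟩ := this
      rwa [← hee.injective heq]
    have hGQ : e ⁻¹' B' ⊆ VQ := by
      intro q hq
      have := hB'V hq
      obtain ⟨q', hq', heq⟩ := this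
      rwa [← hee.injective heq]
    set F : Set ℝ := ((fun r : ℝ => (r : NIT.Q)) ⁻¹' (e ⁻¹' A')) ∩ Ioo abar (abar + 1)
      with hFdef
    set G : Set ℝ := ((fun r : ℝ => (r : NIT.Q)) ⁻¹' (e ⁻¹' B')) ∩ Ioo abar (abar + 1)
      with hGdef
    have hFU₀ : F ⊆ thickening δ At := by
      rintro x ⟨hx1, hx2⟩
      obtain ⟨u, hu, hequ⟩ := hFQ hx1
      rwa [NIT.coe_injOn_Ico abar (Ioo_subset_Ico_self (hUI hu))
        (Ioo_subset_Ico_self hx2) hequ] at hu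
    have hGV₀ : G ⊆ thickening δ Bt := by
      rintro x ⟨hx1, hx2⟩
      obtain ⟨u, hu, hequ⟩ := hGQ hx1
      rwa [NIT.coe_injOn_Ico abar (Ioo_subset_Ico_self (hVI hu))
        (Ioo_subset_Ico_self hx2) hequ] at hu
    have hFI : F ⊆ Ioo abar (abar + 1) := inter_subset_right
    have hGI : G ⊆ Ioo abar (abar + 1) := inter_subset_right
    have hFim : (fun r : ℝ => (r : NIT.Q)) '' F = e ⁻¹' A' := by
      apply subset_antisymm
      · rintro q ⟨x, ⟨hx1, -⟩, rfl⟩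
        exact hx1
      · intro q hq
        obtain ⟨u, hu, rfl⟩ := hFQ hq
        exact ⟨u, ⟨hq, hUI hu⟩, rfl⟩
    have hGim : (fun r : ℝ => (r : NIT.Q)) '' G = e ⁻¹' B' := by
      apply subset_antisymm
      · rintro q ⟨x, ⟨hx1, -⟩, rfl⟩
        exact hx1
      · intro q hq
        obtain ⟨u, hu, rfl⟩ := hGQ hq
        exact ⟨u, ⟨hq, hVI hu⟩, rfl⟩
    have hinjF : InjOn (fun r : ℝ => (r : NIT.Q)) F :=
      (NIT.coe_injOn_Ico abar).mono (hFI.trans Ioo_subset_Ico_self)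
    have hinjG : InjOn (fun r : ℝ => (r : NIT.Q)) G :=
      (NIT.coe_injOn_Ico abar).mono (hGI.trans Ioo_subset_Ico_self)
    have hFfin : F.Finite := Set.Finite.of_finite_image
      (by rw [hFim]; exact hQIP.2.2.2.2.1) hinjF
    have hGfin : G.Finite := Set.Finite.of_finite_image
      (by rw [hGim]; exact hQIP.2.2.2.2.2.1) hinjG
    have hFc : F.ncard = n := by
      have h1 := Set.ncard_image_of_injOn hinjF
      rw [hFim] at h1
      rw [← h1]
      exact hQIP.2.2.2.2.2.2.1
    have hGc : G.ncard = n := by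
      have h1 := Set.ncard_image_of_injOn hinjG
      rw [hGim] at h1
      rw [← h1]
      exact hQIP.2.2.2.2.2.2.2.1
    have hFGd : Disjoint F G :=
      ((hQIP.2.2.2.1).preimage (fun r : ℝ => (r : NIT.Q))).mono
        inter_subset_left inter_subset_left
    have hexu := (NIT.cut_iff hn hFI hGI hFfin hGfin hFGd hFc hGc).mp
      (by rw [hFim, hGim]; exact hQIP)
    obtain ⟨f₁, g₁, hf₁, hg₁, hpat⟩ :=
      NIT.alt_of_exu hn hFI hGI hFfin hGfin hFGd hFc hGc hexu
    rcases hpat with hpat | hpat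
    · obtain ⟨f, g, hf, hg, hint⟩ := NIT.interleaved_thickening hδpos hpair3
        (fun i => hFU₀ (hf₁ i)) (fun i => hGV₀ (hg₁ i)) hpat
      exact hmkS n hn abar f g (fun i => hAtI (hf i)) (fun i => hBtI (hg i))
        (fun i => (hf i).1) (fun i => (hg i).1) hint
    · obtain ⟨g, f, hg, hf, hint⟩ := NIT.interleaved_thickening hδpos hpair3'
        (fun i => hGV₀ (hg₁ i)) (fun i => hFU₀ (hf₁ i)) hpat
      -- hint : Interleaved g f ; re-cut the circle between g 0 and f 0
      set i0 : Fin n := ⟨0, hn⟩ with hi0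
      have hi0le : ∀ i : Fin n, i0 ≤ i := fun i => by
        rw [Fin.le_def]; exact Nat.zero_le _
      have hg0f0 : g i0 < f i0 := hint.1 i0
      have hAIoo : ∀ i, f i ∈ Ioo abar (abar + 1) := fun i => hAtI (hf i)
      have hBIoo : ∀ i, g i ∈ Ioo abar (abar + 1) := fun i => hBtI (hg i)
      set a' : ℝ := (g i0 + f i0) / 2 with ha'
      have ha'lo : g i0 < a' := by rw [ha']; linarith
      have ha'hi : a' < f i0 := by rw [ha']; linarith
      have ha'1 : abar < a' := lt_trans (hBIoo i0).1 ha'lo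
      set g2 : Fin n → ℝ := fun i =>
        if h : i.val + 1 < n then g ⟨i.val + 1, h⟩ else g i0 + 1 with hg2
      have hfI' : ∀ i, f i ∈ Ioo a' (a' + 1) := by
        intro i
        constructor
        · exact lt_of_lt_of_le ha'hi (hint.sm_g.monotone (hi0le i))
        · have h1 : f i < abar + 1 := (hAIoo i).2
          linarith
      have hg2I : ∀ i, g2 i ∈ Ioo a' (a' + 1) := by
        intro i
        simp only [hg2]
        by_cases h : i.val + 1 < n
        · rw [dif_pos h]
          constructor
          · have h1 : f ⟨i.val, by omega⟩ < g ⟨i.val + 1, h⟩ :=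
              hint.2 ⟨i.val, by omega⟩ ⟨i.val + 1, h⟩ rfl
            have h2 : f i0 ≤ f ⟨i.val, by omega⟩ := hint.sm_g.monotone (hi0le _)
            linarith
          · have h1 : g ⟨i.val + 1, h⟩ < abar + 1 := (hBIoo _).2
            linarith
        · rw [dif_neg h]
          constructor
          · have := (hBIoo i0).1
            have := (hAIoo i0).2
            linarith
          · linarith
      have hint2 : NIT.Interleaved f g2 := by
        constructor
        · intro i
          simp only [hg2]
          by_cases h : i.val + 1 < n
          · rw [dif_pos h]
            exact hint.2 i ⟨i.val + 1, h⟩ rfl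
          · rw [dif_neg h]
            have h1 := (hAIoo i).2
            have h2 := (hBIoo i0).1
            linarith
        · intro i j hij
          have hjlt : i.val + 1 < n := hij ▸ j.isLt
          simp only [hg2]
          rw [dif_pos hjlt]
          have hje : (⟨i.val + 1, hjlt⟩ : Fin n) = j := Fin.ext hij
          rw [hje]
          exact hint.1 j
      have hg2B : ∀ i, ((g2 i : ℝ) : NIT.Q) ∈ BQ := by
        intro i
        simp only [hg2]
        by_cases h : i.val + 1 < n
        · rw [dif_pos h]
          exact (hg _).1
        · rw [dif_neg h]
          rw [NIT.coe_add_one]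
          exact (hg i0).1
      exact hmkS n hn a' f g2 hfI' hg2I (fun i => (hf i).1) hg2B hint2
  -- conclude
  refine ⟨e '' UQ, e '' VQ, ?_, ?_, hopen UQ hUQopen, hopen VQ hVQopen, ?_, ?_, ?_⟩
  · rintro x ⟨q, -, rfl⟩
    exact hrangeE ▸ mem_range_self q
  · rintro x ⟨q, -, rfl⟩
    exact hrangeE ▸ mem_range_self q
  · intro x hx
    obtain ⟨q, rfl⟩ := hrangeE ▸ hx.2
    exact ⟨q, hAQUQ hx, rfl⟩
  · intro x hx
    obtain ⟨q, rfl⟩ := hrangeE ▸ hx.2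
    exact ⟨q, hBQVQ hx, rfl⟩
  · intro A₁ B₁ _ _ _ hAA₁ hA₁U hBB₁ hB₁V
    rw [interlacingNumber]
    set S₁ : Set ℕ := {n : ℕ | ∃ A' B' : Set X, A' ⊆ A₁ ∩ Set.range J ∧
      B' ⊆ B₁ ∩ Set.range J ∧ IsPointInterlacing (Set.range J) A' B' n} with hS₁def
    have hkS₁ : k ∈ S₁ := ⟨A'₀, B'₀, hA'₀.trans hAA₁, hB'₀.trans hBB₁, hIP₀⟩
    have hup : ∀ n ∈ S₁, n ≤ k := by
      rintro n ⟨A', B', h1, h2, h3⟩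
      have hnS : n ∈ S := hkeyup n A' B' ((h1.trans hA₁U)) ((h2.trans hB₁V)) h3
      calc n ≤ sSup S := le_csSup hSbdd hnS
        _ = k := hk
    exact le_antisymm (csSup_le ⟨k, hkS₁⟩ hup) (le_csSup ⟨k, hup⟩ hkS₁)
end

section
/- Let A' and B' be disjoint finite subsets of the unit circle S¹ ⊆ ℂ, each of cardinality k ≥ 1, such that every connected component of S¹ ∖ A' contains exactly one point of B'. If U is a connected open subset of S¹ with U ∩ B' = ∅, then U contains at most one point of A'. -/
open Set Topology

noncomputable def circMap (p : ℂ) (t : ℝ) : ℂ := p * Complex.exp (t * Complex.I)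

noncomputable def circInv (p z : ℂ) : ℝ := Real.pi + Complex.arg (-z / p)

lemma circMap_abs {p : ℂ} (hp : ‖p‖ = 1) (t : ℝ) :
    ‖circMap p t‖ = 1 := by
  simp [circMap, hp, Complex.norm_exp_ofReal_mul_I]

lemma circMap_mem {p : ℂ} (hp : ‖p‖ = 1) (t : ℝ) :
    circMap p t ∈ unitCircleSet := by
  simp only [unitCircleSet, mem_sphere_iff_norm, sub_zero]
  exact circMap_abs hp t

lemma continuous_circMap (p : ℂ) : Continuous (circMap p) := by
  unfold circMap
  fun_prop

lemma circMap_eq_iff {p : ℂ} (hp : p ≠ 0) {t t' : ℝ} :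
    circMap p t = circMap p t' ↔ ∃ n : ℤ, t = t' + n * (2 * Real.pi) := by
  unfold circMap
  rw [mul_right_inj' hp, Complex.exp_eq_exp_iff_exists_int]
  constructor
  · rintro ⟨n, hn⟩
    refine ⟨n, ?_⟩
    have h : (t : ℂ) = (t' : ℝ) + (n : ℝ) * (2 * Real.pi) := by
      have := mul_right_cancel₀ Complex.I_ne_zero
        (hn.trans (by push_cast; ring) : (t : ℂ) * Complex.I
          = (((t' : ℝ) + (n : ℝ) * (2 * Real.pi) : ℝ) : ℂ) * Complex.I)
      push_cast at this ⊢
      exact this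
    exact_mod_cast h
  · rintro ⟨n, hn⟩
    exact ⟨n, by rw [hn]; push_cast; ring⟩

lemma circMap_circInv {p : ℂ} (hp : ‖p‖ = 1) {z : ℂ} (hz : ‖z‖ = 1) :
    circMap p (circInv p z) = z := by
  have hp0 : p ≠ 0 := by intro h; simp [h] at hp
  have hz0 : z ≠ 0 := by intro h; simp [h] at hz
  have habs : ‖-z / p‖ = 1 := by
    simp [map_div₀, hz, hp]
  have h1 : Complex.exp ((Complex.arg (-z / p) : ℂ) * Complex.I) = -z / p := by
    have := Complex.norm_mul_exp_arg_mul_I (-z / p)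
    rwa [habs, Complex.ofReal_one, one_mul] at this
  unfold circMap circInv
  rw [Complex.ofReal_add, add_mul, Complex.exp_add, Complex.exp_pi_mul_I, h1]
  field_simp

lemma circInv_eq_of_arg_eq_pi {p z : ℂ} (hp : ‖p‖ = 1) (hz : ‖z‖ = 1)
    (h : Complex.arg (-z / p) = Real.pi) : z = p := by
  have hp0 : p ≠ 0 := by intro h'; simp [h'] at hp
  have habs : ‖-z / p‖ = 1 := by simp [map_div₀, hz, hp]
  have h1 : Complex.exp ((Complex.arg (-z / p) : ℂ) * Complex.I) = -z / p := by
    have := Complex.norm_mul_exp_arg_mul_I (-z / p)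
    rwa [habs, Complex.ofReal_one, one_mul] at this
  rw [h, Complex.exp_pi_mul_I] at h1
  field_simp at h1
  linear_combination h1

lemma circInv_mem {p : ℂ} (hp : ‖p‖ = 1) {z : ℂ} (hz : ‖z‖ = 1)
    (hne : z ≠ p) : circInv p z ∈ Ioo 0 (2 * Real.pi) := by
  have h1 := Complex.neg_pi_lt_arg (-z / p)
  have h2 := Complex.arg_le_pi (-z / p)
  have h3 : Complex.arg (-z / p) ≠ Real.pi := fun h =>
    hne (circInv_eq_of_arg_eq_pi hp hz h)
  have h2' : Complex.arg (-z / p) < Real.pi := lt_of_le_of_ne h2 h3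
  unfold circInv
  constructor <;> linarith

lemma circInv_circMap {p : ℂ} (hp : ‖p‖ = 1) {t : ℝ}
    (ht : t ∈ Ioo 0 (2 * Real.pi)) : circInv p (circMap p t) = t := by
  have hp0 : p ≠ 0 := by intro h; simp [h] at hp
  have key : -(circMap p t) / p = Complex.exp (((t - Real.pi : ℝ) : ℂ) * Complex.I) := by
    unfold circMap
    rw [Complex.ofReal_sub, sub_mul, Complex.exp_sub, Complex.exp_pi_mul_I]
    field_simp
  unfold circInv
  rw [key, Complex.exp_mul_I,
    Complex.arg_cos_add_sin_mul_I (θ := t - Real.pi) ⟨by linarith [ht.1], by linarith [ht.2]⟩]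
  ring

lemma continuousOn_circInv {p : ℂ} (hp : ‖p‖ = 1) :
    ContinuousOn (circInv p) {z | ‖z‖ = 1 ∧ z ≠ p} := by
  have hp0 : p ≠ 0 := by intro h; simp [h] at hp
  intro z hz
  obtain ⟨hz1, hzp⟩ := hz
  have habs : ‖-z / p‖ = 1 := by simp [map_div₀, hz1, hp]
  have hmem : -z / p ∈ Complex.slitPlane := by
    rw [Complex.mem_slitPlane_iff]
    by_contra hcon
    push_neg at hcon
    obtain ⟨hre, him⟩ := hcon
    have hw : -z / p = ((-z / p).re : ℂ) := Complex.ext rfl (by simp [him])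
    have habs' : |(-z / p).re| = 1 := by
      rw [← Real.norm_eq_abs, ← Complex.norm_real, ← hw, habs]
    have hre1 : (-z / p).re = -1 := by
      rcases abs_eq (by norm_num : (0:ℝ) ≤ 1) |>.mp habs' with h | h
      · linarith
      · exact h
    have hw1 : -z / p = -1 := by rw [hw, hre1]; norm_num
    apply hzp
    field_simp at hw1
    exact neg_inj.mp hw1
  have hf : ContinuousAt (fun w : ℂ => -w / p) z := by fun_prop
  have h1 : ContinuousAt (fun w : ℂ => Complex.arg (-w / p)) z :=
    ContinuousAt.comp (g := Complex.arg) (f := fun w : ℂ => -w / p)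
      (Complex.continuousAt_arg hmem) hf
  unfold circInv
  exact ContinuousAt.continuousWithinAt (continuousAt_const.add h1)

/-- Adjacent pair extraction in a finite subset of ℝ. -/
lemma exists_adjacent {F : Set ℝ} (hF : F.Finite) {t₁ t₂ : ℝ}
    (h1 : t₁ ∈ F) (h2 : t₂ ∈ F) (hlt : t₁ < t₂) :
    ∃ s₁ s₂, s₁ ∈ F ∧ s₂ ∈ F ∧ t₁ ≤ s₁ ∧ s₂ ≤ t₂ ∧ s₁ < s₂ ∧
      ∀ f ∈ F, f ∉ Ioo s₁ s₂ := by
  classical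
  set S₂ : Set ℝ := {s ∈ F | t₁ < s ∧ s ≤ t₂} with hS₂
  have hS₂fin : S₂.Finite := hF.subset (fun x hx => hx.1)
  have hS₂ne : S₂.Nonempty := ⟨t₂, h2, hlt, le_refl _⟩
  have hs₂mem : sInf S₂ ∈ S₂ := hS₂ne.csInf_mem hS₂fin
  set s₂ := sInf S₂
  set S₁ : Set ℝ := {s ∈ F | t₁ ≤ s ∧ s < s₂} with hS₁
  have hS₁fin : S₁.Finite := hF.subset (fun x hx => hx.1)
  have hS₁ne : S₁.Nonempty := ⟨t₁, h1, le_refl _, hs₂mem.2.1⟩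
  have hs₁mem : sSup S₁ ∈ S₁ := hS₁ne.csSup_mem hS₁fin
  set s₁ := sSup S₁
  refine ⟨s₁, s₂, hs₁mem.1, hs₂mem.1, hs₁mem.2.1, hs₂mem.2.2, hs₁mem.2.2, ?_⟩
  intro f hf hfIoo
  have hf₂ : f ∈ S₂ := ⟨hf, lt_of_le_of_lt hs₁mem.2.1 hfIoo.1,
    le_trans hfIoo.2.le hs₂mem.2.2⟩
  exact absurd (csInf_le hS₂fin.bddBelow hf₂) (not_le.mpr hfIoo.2)

/-- If `(A', B')` is a `k`-interlacing of points on the unit circle and `U` is a connected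
subset of `S¹`, open in the subspace topology of `S¹`, with `U ∩ B' = ∅`, then `U`
contains at most one point of `A'`. -/
theorem connected_open_misses_B_meets_A_once (A' B' : Set ℂ) (k : ℕ) (hk : 1 ≤ k)
    (hA'sub : A' ⊆ unitCircleSet) (hB'sub : B' ⊆ unitCircleSet)
    (hdisj : Disjoint A' B') (hA'fin : A'.Finite) (hB'fin : B'.Finite)
    (hA'card : A'.ncard = k) (hB'card : B'.ncard = k)
    (hinter : ∀ x ∈ unitCircleSet \ A',
      ∃! b, b ∈ B' ∧ b ∈ connectedComponentIn (unitCircleSet \ A') x)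
    (U : Set ℂ) (hU : U ⊆ unitCircleSet) (hUconn : IsConnected U)
    (hUopen : IsOpen (Subtype.val ⁻¹' U : Set ↥unitCircleSet))
    (hUB : U ∩ B' = ∅) :
    (U ∩ A').Subsingleton := by
  have two_pi_pos : (0:ℝ) < 2 * Real.pi := by positivity
  intro a₁ ha₁ a₂ ha₂
  obtain ⟨ha₁U, ha₁A⟩ := ha₁
  obtain ⟨ha₂U, ha₂A⟩ := ha₂
  have hBne : B'.Nonempty := Set.nonempty_of_ncard_ne_zero (by omega)
  obtain ⟨p, hpB⟩ := hBne
  have habs : ∀ z ∈ unitCircleSet, ‖z‖ = 1 := by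
    intro z hz
    simpa using mem_sphere_zero_iff_norm.mp hz
  have hpS : ‖p‖ = 1 := habs p (hB'sub hpB)
  have hp0 : p ≠ 0 := fun h => by simp [h] at hpS
  have hpA : p ∉ A' := fun h => (Set.disjoint_left.mp hdisj h) hpB
  have hpU : p ∉ U := fun h => by
    have hmem : p ∈ U ∩ B' := ⟨h, hpB⟩
    rw [hUB] at hmem
    exact hmem
  have hAne : ∀ a ∈ A', a ≠ p := fun a ha h => hpA (h ▸ ha)
  have hUne : ∀ u ∈ U, u ≠ p := fun u hu h => hpU (h ▸ hu)
  have hcont : ContinuousOn (circInv p) U := (continuousOn_circInv hpS).mono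
    (fun u hu => ⟨habs u (hU hu), hUne u hu⟩)
  set I := circInv p '' U with hI
  have hIconn : IsConnected I := hUconn.image _ hcont
  have hIord : I.OrdConnected := hIconn.isPreconnected.ordConnected
  have heI : ∀ t ∈ I, circMap p t ∈ U := by
    rintro t ⟨u, hu, rfl⟩
    rw [circMap_circInv hpS (habs u (hU hu))]
    exact hu
  set F := circInv p '' A' with hF
  have hFfin : F.Finite := hA'fin.image _
  have hFmem : F ⊆ Ioo 0 (2 * Real.pi) := by
    rintro t ⟨a, ha, rfl⟩
    exact circInv_mem hpS (habs a (hA'sub ha)) (hAne a ha)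
  have heF : ∀ t ∈ F, circMap p t ∈ A' := by
    rintro t ⟨a, ha, rfl⟩
    rw [circMap_circInv hpS (habs a (hA'sub ha))]
    exact ha
  have hFe : ∀ t ∈ Ioo 0 (2 * Real.pi), circMap p t ∈ A' → t ∈ F := fun t ht h =>
    ⟨circMap p t, h, circInv_circMap hpS ht⟩
  have key : ∀ b₁ ∈ U ∩ A', ∀ b₂ ∈ U ∩ A', circInv p b₁ < circInv p b₂ → False := by
    rintro b₁ ⟨hb₁U, hb₁A⟩ b₂ ⟨hb₂U, hb₂A⟩ hlt
    obtain ⟨s₁, s₂, hs₁F, hs₂F, hts₁, hst₂, hs₁₂, hgap⟩ :=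
      exists_adjacent hFfin ⟨b₁, hb₁A, rfl⟩ ⟨b₂, hb₂A, rfl⟩ hlt
    have hIccI : Icc (circInv p b₁) (circInv p b₂) ⊆ I :=
      hIord.out ⟨b₁, hb₁U, rfl⟩ ⟨b₂, hb₂U, rfl⟩
    have hs₁02 := hFmem hs₁F
    have hs₂02 := hFmem hs₂F
    have hIooU : ∀ y ∈ Ioo s₁ s₂, circMap p y ∈ U := fun y hy =>
      heI y (hIccI ⟨le_trans hts₁ hy.1.le, le_trans hy.2.le hst₂⟩)
    have hIoo02 : Ioo s₁ s₂ ⊆ Ioo 0 (2 * Real.pi) := fun y hy =>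
      ⟨lt_trans hs₁02.1 hy.1, lt_trans hy.2 hs₂02.2⟩
    set C := circMap p '' Ioo s₁ s₂ with hC
    have hCU : C ⊆ U := by rintro z ⟨y, hy, rfl⟩; exact hIooU y hy
    have hCSA : C ⊆ unitCircleSet \ A' := by
      rintro z ⟨y, hy, rfl⟩
      exact ⟨circMap_mem hpS y, fun hz => hgap y (hFe y (hIoo02 hy) hz) hy⟩
    set K := circMap p '' Icc s₂ (s₁ + 2 * Real.pi) with hK
    have hKcl : IsClosed K := (isCompact_Icc.image (continuous_circMap p)).isClosed
    have hdisjCK : ∀ z ∈ C, z ∉ K := by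
      rintro z ⟨y, hy, rfl⟩ ⟨y', hy', hyy'⟩
      obtain ⟨n, hn⟩ := (circMap_eq_iff hp0).mp hyy'
      have hpi := Real.pi_pos
      have hn0 : (0:ℝ) < (n:ℝ) := by nlinarith [hy.2, hy'.1, hy.1, hy'.2]
      have hn1 : (n:ℝ) < 1 := by nlinarith [hy.2, hy'.1, hy.1, hy'.2]
      have hi0 : (0:ℤ) < n := by exact_mod_cast hn0
      have hi1 : n < 1 := by exact_mod_cast hn1
      omega
    have hcover : ∀ z ∈ unitCircleSet, z ∉ K → z ∈ C := by
      intro z hzS hzK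
      have hz1 : ‖z‖ = 1 := habs z hzS
      have hz0 : ‖z / p‖ = 1 := by simp [map_div₀, hz1, hpS]
      have ht₀ : circMap p (Complex.arg (z / p)) = z := by
        unfold circMap
        have h := Complex.norm_mul_exp_arg_mul_I (z / p)
        rw [hz0, Complex.ofReal_one, one_mul] at h
        rw [h]
        field_simp
      set t₀ := Complex.arg (z / p) with ht₀def
      set t := toIocMod two_pi_pos s₁ t₀ with htdef
      have htmem : t ∈ Ioc s₁ (s₁ + 2 * Real.pi) := toIocMod_mem_Ioc two_pi_pos s₁ t₀
      have het : circMap p t = z := by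
        rw [← ht₀]
        apply (circMap_eq_iff hp0).mpr
        refine ⟨-(toIocDiv two_pi_pos s₁ t₀), ?_⟩
        have h := toIocMod_sub_self two_pi_pos s₁ t₀
        rw [zsmul_eq_mul] at h
        push_cast at h ⊢
        linarith [h]
      rcases lt_or_ge t s₂ with h | h
      · exact ⟨t, ⟨htmem.1, h⟩, het⟩
      · exact absurd ⟨t, ⟨h, htmem.2⟩, het⟩ hzK
    have hxIoo : (s₁ + s₂) / 2 ∈ Ioo s₁ s₂ := ⟨by linarith, by linarith⟩
    set x := (s₁ + s₂) / 2 with hxdef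
    have hxS : circMap p x ∈ unitCircleSet \ A' := hCSA (mem_image_of_mem _ hxIoo)
    have hclopen : IsClopen (Subtype.val ⁻¹' C : Set ↥(unitCircleSet \ A')) := by
      constructor
      · have hIccCl : IsClosed (circMap p '' Icc s₁ s₂) :=
          (isCompact_Icc.image (continuous_circMap p)).isClosed
        have hsub : closure C ⊆ circMap p '' Icc s₁ s₂ :=
          closure_minimal (image_mono Ioo_subset_Icc_self) hIccCl
        have heq : (Subtype.val ⁻¹' C : Set ↥(unitCircleSet \ A'))
            = Subtype.val ⁻¹' closure C := by
          ext z
          simp only [mem_preimage]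
          constructor
          · exact fun h => subset_closure h
          · intro h
            obtain ⟨y, hy, hyz⟩ := hsub h
            rcases eq_or_lt_of_le hy.1 with h1 | h1
            · exact absurd (by rw [← hyz, ← h1]; exact heF s₁ hs₁F) z.2.2
            rcases eq_or_lt_of_le hy.2 with h2 | h2
            · exact absurd (by rw [← hyz, h2]; exact heF s₂ hs₂F) z.2.2
            · exact ⟨y, ⟨h1, h2⟩, hyz⟩
        rw [heq]
        exact isClosed_closure.preimage continuous_subtype_val
      · have heq : (Subtype.val ⁻¹' C : Set ↥(unitCircleSet \ A'))
            = Subtype.val ⁻¹' Kᶜ := by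
          ext z
          simp only [mem_preimage, mem_compl_iff]
          exact ⟨fun h => hdisjCK _ h, fun h => hcover z.1 z.2.1 h⟩
        rw [heq]
        exact hKcl.isOpen_compl.preimage continuous_subtype_val
    have hcomp : connectedComponentIn (unitCircleSet \ A') (circMap p x) ⊆ C := by
      rw [connectedComponentIn_eq_image hxS]
      have hsub : connectedComponent (⟨circMap p x, hxS⟩ : ↥(unitCircleSet \ A'))
          ⊆ Subtype.val ⁻¹' C :=
        hclopen.connectedComponent_subset (mem_image_of_mem _ hxIoo)
      rintro z ⟨w, hw, rfl⟩
      exact hsub hw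
    obtain ⟨b, ⟨hbB, hbC⟩, -⟩ := hinter (circMap p x) hxS
    have hmem : b ∈ U ∩ B' := ⟨hCU (hcomp hbC), hbB⟩
    rw [hUB] at hmem
    exact hmem
  rcases lt_trichotomy (circInv p a₁) (circInv p a₂) with h | h | h
  · exact (key a₁ ⟨ha₁U, ha₁A⟩ a₂ ⟨ha₂U, ha₂A⟩ h).elim
  · have e1 : circMap p (circInv p a₁) = a₁ := circMap_circInv hpS (habs a₁ (hA'sub ha₁A))
    have e2 : circMap p (circInv p a₂) = a₂ := circMap_circInv hpS (habs a₂ (hA'sub ha₂A))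
    rw [← e1, ← e2, h]
  · exact (key a₂ ⟨ha₂U, ha₂A⟩ a₁ ⟨ha₁U, ha₁A⟩ h).elim
end

section
/- Let n ≥ 1 and let p_n : S¹ → S¹ be the covering map p_n(z) = zⁿ. If A' and B' are disjoint finite subsets of S¹, each of cardinality k ≥ 1, forming a k-interlacing of points, then p_n⁻¹(A') and p_n⁻¹(B') are disjoint finite subsets of S¹, each of cardinality nk, forming an nk-interlacing of points. -/
open Set Topology

lemma periodic_int {T : Set ℝ} {p : ℝ} (hper : ∀ s, s ∈ T ↔ s + p ∈ T) (s : ℝ) (m : ℤ) :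
    s + m * p ∈ T ↔ s ∈ T := by
  induction m using Int.induction_on with
  | zero => simp
  | succ i ih =>
      push_cast
      rw [show s + (i + 1 : ℝ) * p = (s + i * p) + p by ring, ← hper]
      exact_mod_cast ih
  | pred i ih =>
      push_cast
      rw [hper (s + (-i - 1 : ℝ) * p), show s + (-i - 1 : ℝ) * p + p = s + (-i : ℝ) * p by ring]
      exact_mod_cast ih

lemma exists_gap {T : Set ℝ} (hT : IsClosed T) {s0 : ℝ} (hs0 : s0 ∈ T) {p : ℝ} (hp : 0 < p)
    (hper : ∀ s, s ∈ T ↔ s + p ∈ T) {t : ℝ} (ht : t ∉ T) :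
    ∃ a b, a ∈ T ∧ b ∈ T ∧ a < t ∧ t < b ∧ b ≤ a + p ∧ ∀ s ∈ Ioo a b, s ∉ T := by
  -- an element of T in (t - p, t)
  obtain ⟨s, hsT, hs1, hs2⟩ : ∃ s, s ∈ T ∧ t - p < s ∧ s < t := by
    refine ⟨s0 + ⌊(t - s0) / p⌋ * p, (periodic_int hper s0 _).2 hs0, ?_, ?_⟩
    · have h0 := Int.sub_one_lt_floor ((t - s0) / p)
      have := mul_lt_mul_of_pos_right h0 hp
      rw [sub_mul, one_mul, div_mul_cancel₀ _ hp.ne'] at this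
      linarith
    · have h1 : (⌊(t - s0) / p⌋ : ℝ) ≤ (t - s0) / p := Int.floor_le _
      have h2 : s0 + ⌊(t - s0) / p⌋ * p ≤ t := by
        have := mul_le_mul_of_nonneg_right h1 hp.le
        rw [div_mul_cancel₀] at this
        · linarith
        · exact hp.ne'
      rcases h2.lt_or_eq with h | h
      · exact h
      · exact absurd (h ▸ (periodic_int hper s0 _).2 hs0) ht
  set a := sSup (T ∩ Iic t) with ha_def
  have hTI_closed : IsClosed (T ∩ Iic t) := hT.inter isClosed_Iic
  have hTI_ne : (T ∩ Iic t).Nonempty := ⟨s, hsT, hs2.le⟩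
  have hTI_bdd : BddAbove (T ∩ Iic t) := ⟨t, fun x hx => hx.2⟩
  have haT : a ∈ T ∩ Iic t := hTI_closed.csSup_mem hTI_ne hTI_bdd
  have hat : a < t := lt_of_le_of_ne haT.2 (fun h => ht (h ▸ haT.1))
  have hsa : s ≤ a := le_csSup hTI_bdd ⟨hsT, hs2.le⟩
  set b := sInf (T ∩ Ici t) with hb_def
  have hbdd : BddBelow (T ∩ Ici t) := ⟨t, fun x hx => hx.2⟩
  have hapT : a + p ∈ T := (hper a).1 haT.1
  have hapt : t ≤ a + p := by linarith
  have hbne : (T ∩ Ici t).Nonempty := ⟨a + p, hapT, hapt⟩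
  have hbT : b ∈ T ∩ Ici t := (hT.inter isClosed_Ici).csInf_mem hbne hbdd
  have hbt : t < b := lt_of_le_of_ne hbT.2 (fun h => ht (h ▸ hbT.1))
  have hba : b ≤ a + p := csInf_le hbdd ⟨hapT, hapt⟩
  refine ⟨a, b, haT.1, hbT.1, hat, hbt, hba, ?_⟩
  rintro u ⟨hu1, hu2⟩ huT
  rcases le_or_gt u t with h | h
  · exact absurd (le_csSup hTI_bdd ⟨huT, h⟩) (not_le.2 hu1)
  · exact absurd (csInf_le hbdd ⟨huT, h.le⟩) (not_le.2 hu2)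




noncomputable def ee (t : ℝ) : ℂ := Complex.exp (2 * Real.pi * t * Complex.I)

lemma ee_cont : Continuous ee := by unfold ee; fun_prop

lemma ee_abs (t : ℝ) : ‖ee t‖ = 1 := by
  unfold ee; rw [Complex.norm_exp]; norm_num

lemma ee_mem (t : ℝ) : ee t ∈ unitCircleSet := by
  simp [unitCircleSet, mem_sphere_zero_iff_norm, ee_abs]

lemma mem_circle_iff {z : ℂ} : z ∈ unitCircleSet ↔ ‖z‖ = 1 := by
  simp [unitCircleSet, mem_sphere_zero_iff_norm]

lemma ee_eq_iff {s t : ℝ} : ee s = ee t ↔ ∃ m : ℤ, s = t + m := by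
  unfold ee
  rw [Complex.exp_eq_exp_iff_exists_int]
  constructor
  · rintro ⟨m, hm⟩
    refine ⟨m, ?_⟩
    have h2 : (2 * (Real.pi:ℂ) * Complex.I) ≠ 0 := by
      simp [Real.pi_ne_zero, Complex.I_ne_zero]
    have h3 : (s : ℂ) * (2 * (Real.pi:ℂ) * Complex.I)
        = ((t : ℂ) + m) * (2 * (Real.pi:ℂ) * Complex.I) := by
      ring_nf; ring_nf at hm; linear_combination hm
    have := mul_right_cancel₀ h2 h3
    exact_mod_cast this
  · rintro ⟨m, hm⟩
    exact ⟨m, by rw [hm]; push_cast; ring⟩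

lemma ee_pow (t : ℝ) (n : ℕ) : ee t ^ n = ee (n * t) := by
  unfold ee
  rw [← Complex.exp_nat_mul]
  push_cast
  ring_nf

lemma ee_inj {s t : ℝ} (h : |s - t| < 1) (he : ee s = ee t) : s = t := by
  obtain ⟨m, hm⟩ := ee_eq_iff.1 he
  have : |(m : ℝ)| < 1 := by rw [hm] at h; simpa using h
  have hm0 : |m| < 1 := by exact_mod_cast this
  have : m = 0 := Int.abs_lt_one_iff.1 hm0

  simp [hm, this]

lemma ee_rep {z : ℂ} (hz : ‖z‖ = 1) : ∃ t : ℝ, ee t = z := by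
  obtain ⟨a, ha⟩ : ∃ a : ℝ, Complex.exp (a * Complex.I) = z :=
    ⟨z.arg, by simpa [hz] using Complex.norm_mul_exp_arg_mul_I z⟩
  refine ⟨a / (2 * Real.pi), ?_⟩
  unfold ee
  rw [← ha]
  congr 1
  have hπ : (Real.pi : ℂ) ≠ 0 := by exact_mod_cast Real.pi_ne_zero
  push_cast
  field_simp

lemma ee_rep_Ico {z : ℂ} (hz : ‖z‖ = 1) (c : ℝ) :
    ∃ s ∈ Ico c (c + 1), ee s = z := by
  obtain ⟨t, ht⟩ := ee_rep hz
  refine ⟨t - ⌊t - c⌋, ⟨?_, ?_⟩, ?_⟩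
  · have := Int.floor_le (t - c); linarith
  · have := Int.lt_floor_add_one (t - c); linarith
  · rw [← ht]; exact ee_eq_iff.2 ⟨-⌊t - c⌋, by push_cast; ring⟩

lemma circle_diff_arc {a b : ℝ} (hab : a < b) (hb1 : b ≤ a + 1) :
    unitCircleSet \ ee '' Ioo a b = ee '' Icc b (a + 1) := by
  apply Subset.antisymm
  · rintro z ⟨hz, hzU⟩
    obtain ⟨s, ⟨hs1, hs2⟩, hss⟩ := ee_rep_Ico (mem_circle_iff.1 hz) a
    rcases eq_or_lt_of_le hs1 with h | h
    · refine ⟨a + 1, ⟨hb1, le_refl _⟩, ?_⟩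
      rw [← hss, ← h]
      exact ee_eq_iff.2 ⟨1, by push_cast; ring⟩
    · rcases lt_or_ge s b with h2 | h2
      · exact absurd ⟨s, ⟨h, h2⟩, hss⟩ hzU
      · exact ⟨s, ⟨h2, hs2.le⟩, hss⟩
  · rintro z ⟨u, ⟨hu1, hu2⟩, rfl⟩
    refine ⟨ee_mem u, ?_⟩
    rintro ⟨s, ⟨hs1, hs2⟩, heq⟩
    have hsu : s = u := ee_inj (by rw [abs_lt]; constructor <;> linarith) heq
    have : s < u := hs2.trans_le hu1
    rw [hsu] at this
    exact lt_irrefl u this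


lemma component_eq {A : Set ℂ} {a b t : ℝ} (hat : a < t) (htb : t < b) (hb1 : b ≤ a + 1)
    (ha : ee a ∈ A) (hb : ee b ∈ A) (hgap : ∀ s ∈ Ioo a b, ee s ∉ A) :
    connectedComponentIn (unitCircleSet \ A) (ee t) = ee '' Ioo a b := by
  have hab : a < b := hat.trans htb
  set F := unitCircleSet \ A with hF
  set U := ee '' Ioo a b with hU
  have hUF : U ⊆ F := by
    rintro z ⟨s, hs, rfl⟩
    exact ⟨ee_mem s, hgap s hs⟩
  have htU : ee t ∈ U := ⟨t, ⟨hat, htb⟩, rfl⟩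
  have hxF : ee t ∈ F := hUF htU
  -- U = F ∩ ee '' Icc a b
  have hclosed_eq : (Subtype.val ⁻¹' U : Set F) = Subtype.val ⁻¹' (ee '' Icc a b) := by
    ext ⟨z, hzF⟩
    simp only [mem_preimage]
    constructor
    · rintro ⟨s, hs, rfl⟩
      exact ⟨s, Ioo_subset_Icc_self hs, rfl⟩
    · rintro ⟨s, ⟨hs1, hs2⟩, rfl⟩
      rcases eq_or_lt_of_le hs1 with h | h
      · exact absurd (h ▸ ha) hzF.2
      · rcases eq_or_lt_of_le hs2 with h2 | h2
        · exact absurd (h2 ▸ hb) hzF.2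
        · exact ⟨s, ⟨h, h2⟩, rfl⟩
  -- U = F ∩ (ee '' Icc b (a+1))ᶜ
  have hopen_eq : (Subtype.val ⁻¹' U : Set F) = Subtype.val ⁻¹' (ee '' Icc b (a + 1))ᶜ := by
    have hdiff := circle_diff_arc hab hb1
    ext ⟨z, hzF⟩
    simp only [mem_preimage, mem_compl_iff]
    constructor
    · intro hzU hzI
      have : z ∈ unitCircleSet \ U := hdiff ▸ hzI
      exact this.2 hzU
    · intro hzI
      by_contra hzU
      exact hzI (hdiff ▸ (⟨hzF.1, hzU⟩ : z ∈ unitCircleSet \ U))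
  have hclopen : IsClopen (Subtype.val ⁻¹' U : Set F) := by
    constructor
    · rw [hclosed_eq]
      exact ((isCompact_Icc.image ee_cont).isClosed).preimage continuous_subtype_val
    · rw [hopen_eq]
      exact (((isCompact_Icc.image ee_cont).isClosed).isOpen_compl).preimage continuous_subtype_val
  apply Subset.antisymm
  · rw [connectedComponentIn_eq_image hxF, Set.image_subset_iff]
    exact hclopen.connectedComponent_subset htU
  · exact (isPreconnected_Ioo.image _ ee_cont.continuousOn).subset_connectedComponentIn htU hUF

lemma abs_eq_one_of_pow {n : ℕ} (hn : 1 ≤ n) {z : ℂ} (hz : ‖z ^ n‖ = 1) :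
    ‖z‖ = 1 := by
  rw [norm_pow] at hz
  rcases lt_trichotomy ‖z‖ 1 with h | h | h
  · have := pow_lt_one₀ (norm_nonneg z) h (by omega : n ≠ 0)
    rw [hz] at this; exact absurd this (lt_irrefl 1)
  · exact h
  · have := one_lt_pow₀ h (by omega : n ≠ 0)
    rw [hz] at this; exact absurd this (lt_irrefl 1)

lemma fiber_card {n : ℕ} (hn : 1 ≤ n) {a : ℂ} (ha : a ≠ 0) :
    (Polynomial.nthRoots n a).toFinset.card = n := by
  classical
  set c := Complex.exp (Complex.log a / n) with hc_def
  have hcn : c ^ n = a := by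
    rw [hc_def, ← Complex.exp_nat_mul, mul_div_cancel₀ _ (by exact_mod_cast (by omega : n ≠ 0) : (n:ℂ) ≠ 0)]
    exact Complex.exp_log ha
  have hcne : c ≠ 0 := Complex.exp_ne_zero _
  have himg : (Polynomial.nthRoots n a).toFinset
      = Finset.image (c * ·) (Polynomial.nthRootsFinset n (1 : ℂ)) := by
    ext z
    rw [Multiset.mem_toFinset, Polynomial.mem_nthRoots (by omega : 0 < n), Finset.mem_image]
    constructor
    · intro hz
      refine ⟨z / c, ?_, by field_simp⟩
      rw [Polynomial.mem_nthRootsFinset (by omega : 0 < n), div_pow, hz, hcn, div_self ha]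
    · rintro ⟨w, hw, rfl⟩
      rw [Polynomial.mem_nthRootsFinset (by omega : 0 < n)] at hw
      rw [mul_pow, hcn, hw, mul_one]
  rw [himg, Finset.card_image_of_injective _ (mul_right_injective₀ hcne),
    (Complex.isPrimitiveRoot_exp n (by omega)).card_nthRootsFinset]

lemma lift_finite_card {n : ℕ} (hn : 1 ≤ n) {S : Set ℂ} (hS : S ⊆ unitCircleSet)
    (hfin : S.Finite) :
    {z : ℂ | z ^ n ∈ S}.Finite ∧ {z : ℂ | z ^ n ∈ S}.ncard = n * S.ncard := by
  classical
  set F : Finset ℂ := hfin.toFinset.biUnion (fun a => (Polynomial.nthRoots n a).toFinset) with hF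
  have hset : {z : ℂ | z ^ n ∈ S} = ↑F := by
    ext z
    simp only [mem_setOf_eq, hF, Finset.coe_biUnion, mem_iUnion, Finset.mem_coe,
      Multiset.mem_toFinset, Polynomial.mem_nthRoots (by omega : 0 < n),
      Set.Finite.mem_toFinset]
    constructor
    · intro h; exact ⟨z ^ n, h, rfl⟩
    · rintro ⟨a, ha, rfl⟩; exact ha
  rw [hset]
  refine ⟨F.finite_toSet, ?_⟩
  rw [Set.ncard_coe_finset, hF, Finset.card_biUnion]
  · rw [Finset.sum_congr rfl (fun a ha => fiber_card hn ?_), Finset.sum_const,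
      smul_eq_mul, ← Set.ncard_eq_toFinset_card S hfin, mul_comm]
    intro h0
    have := hS (hfin.mem_toFinset.1 ha)
    rw [mem_circle_iff, h0] at this
    simp at this
  · intro x hx y hy hxy
    simp only [Finset.disjoint_left, Multiset.mem_toFinset,
      Polynomial.mem_nthRoots (by omega : 0 < n)]
    rintro z rfl h
    exact hxy h

/-- Lifting interlacings along the `n`-fold cover `z ↦ zⁿ` of the circle: if `(A', B')`
is a `k`-interlacing of points on `S¹`, then the preimages of `A'` and `B'` under
`z ↦ zⁿ` form an `nk`-interlacing of points on `S¹`. -/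
theorem interlacing_lift_pow (n : ℕ) (hn : 1 ≤ n) (A' B' : Set ℂ) (k : ℕ)
    (h : IsPointInterlacing unitCircleSet A' B' k) :
    IsPointInterlacing unitCircleSet
      {z ∈ unitCircleSet | z ^ n ∈ A'} {z ∈ unitCircleSet | z ^ n ∈ B'} (n * k) := by

  obtain ⟨hk, hA, hB, hAB, hAfin, hBfin, hAcard, hBcard, hcomp⟩ := h
  have hn0 : (n : ℝ) ≠ 0 := by exact_mod_cast (by omega : n ≠ 0)
  have hnpos : (0 : ℝ) < n := by exact_mod_cast (by omega : 0 < n)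
  have hsep : ∀ S : Set ℂ, S ⊆ unitCircleSet →
      {z ∈ unitCircleSet | z ^ n ∈ S} = {z : ℂ | z ^ n ∈ S} := by
    intro S hS
    ext z
    simp only [mem_setOf_eq, mem_sep_iff]
    exact ⟨fun h => h.2, fun h =>
      ⟨mem_circle_iff.2 (abs_eq_one_of_pow hn (mem_circle_iff.1 (hS h))), h⟩⟩
  have hAset := hsep A' hA
  have hBset := hsep B' hB
  obtain ⟨hAupfin, hAupcard⟩ := lift_finite_card hn hA hAfin
  obtain ⟨hBupfin, hBupcard⟩ := lift_finite_card hn hB hBfin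
  refine ⟨Nat.mul_pos hn hk, sep_subset _ _, sep_subset _ _, ?_, ?_, ?_, ?_, ?_, ?_⟩
  · rw [Set.disjoint_left]
    rintro z ⟨hz1, hz2⟩ ⟨hz3, hz4⟩
    exact Set.disjoint_left.1 hAB hz2 hz4
  · rw [hAset]; exact hAupfin
  · rw [hBset]; exact hBupfin
  · rw [hAset, hAupcard, hAcard]
  · rw [hBset, hBupcard, hBcard]
  · rintro x ⟨hx1, hx2⟩
    have hxn : x ^ n ∉ A' := fun hc => hx2 ⟨hx1, hc⟩
    obtain ⟨t, ht⟩ := ee_rep (mem_circle_iff.1 hx1)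
    set T : Set ℝ := {s | ee s ^ n ∈ A'} with hT
    have hTclosed : IsClosed T := by
      exact (hAfin.isClosed).preimage (ee_cont.pow n)
    have hTne : ∃ s0, s0 ∈ T := by
      obtain ⟨a0, ha0⟩ := Set.nonempty_of_ncard_ne_zero (by omega : A'.ncard ≠ 0)
      obtain ⟨u, hu⟩ := ee_rep (mem_circle_iff.1 (hA ha0))
      refine ⟨u / n, ?_⟩
      show ee (u / n) ^ n ∈ A'
      rw [ee_pow, mul_comm, div_mul_cancel₀ u hn0, hu]
      exact ha0
    obtain ⟨s0, hs0⟩ := hTne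
    have hper : ∀ s, s ∈ T ↔ s + 1 / n ∈ T := by
      intro s
      have he : ee (s + 1 / n) ^ n = ee s ^ n := by
        rw [ee_pow, ee_pow]
        refine (ee_eq_iff.2 ⟨1, ?_⟩)
        push_cast
        field_simp
      show ee s ^ n ∈ A' ↔ ee (s + 1 / n) ^ n ∈ A'
      rw [he]
    have htT : t ∉ T := by
      show ¬ ee t ^ n ∈ A'
      rw [ht]; exact hxn
    obtain ⟨a, b, haT, hbT, hat, htb, hba, hgap⟩ :=
      exists_gap hTclosed hs0 (by positivity : (0:ℝ) < 1 / n) hper htT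
    have h1n : (1 : ℝ) / n ≤ 1 := by
      rw [div_le_one hnpos]; exact_mod_cast hn
    -- upstairs component
    have hcompup : connectedComponentIn (unitCircleSet \ {z : ℂ | z ^ n ∈ A'}) (ee t)
        = ee '' Ioo a b :=
      component_eq hat htb (by linarith) haT hbT hgap
    -- downstairs component
    have hdown : connectedComponentIn (unitCircleSet \ A') (ee (n * t))
        = ee '' Ioo (n * a) (n * b) := by
      refine component_eq ?_ ?_ ?_ ?_ ?_ ?_
      · exact (mul_lt_mul_iff_right₀ hnpos).2 hat
      · exact (mul_lt_mul_iff_right₀ hnpos).2 htb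
      · have := (mul_le_mul_iff_right₀ hnpos).2 hba
        rw [mul_add, mul_one_div, div_self hn0] at this
        linarith
      · rw [← ee_pow]; exact haT
      · rw [← ee_pow]; exact hbT
      · rintro u ⟨hu1, hu2⟩ huA
        refine hgap (u / n) ⟨?_, ?_⟩ ?_
        · rw [lt_div_iff₀ hnpos, mul_comm]; exact hu1
        · rw [div_lt_iff₀ hnpos, mul_comm]; exact hu2
        · show ee (u / n) ^ n ∈ A'
          rw [ee_pow, mul_comm, div_mul_cancel₀ u hn0]
          exact huA
    have hxpow : x ^ n = ee (n * t) := by rw [← ht, ee_pow]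
    have hxnmem : x ^ n ∈ unitCircleSet \ A' := by
      refine ⟨mem_circle_iff.2 ?_, hxn⟩
      rw [norm_pow, mem_circle_iff.1 hx1, one_pow]
    obtain ⟨b0, ⟨hb0B, hb0C⟩, hb0uniq⟩ := hcomp (x ^ n) hxnmem
    rw [hxpow, hdown] at hb0C
    obtain ⟨u, ⟨hu1, hu2⟩, hbu⟩ := hb0C
    have hun : (n : ℝ) * (u / n) = u := by field_simp
    refine ⟨ee (u / n), ⟨⟨ee_mem _, ?_⟩, ?_⟩, ?_⟩
    · show ee (u / n) ^ n ∈ B'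
      rw [ee_pow, hun, hbu]
      exact hb0B
    · rw [hAset, ← ht, hcompup]
      refine ⟨u / n, ⟨?_, ?_⟩, rfl⟩
      · rw [lt_div_iff₀ hnpos, mul_comm]; exact hu1
      · rw [div_lt_iff₀ hnpos, mul_comm]; exact hu2
    · rintro y ⟨⟨hy1, hy2⟩, hyC⟩
      rw [hAset, ← ht, hcompup] at hyC
      obtain ⟨s, ⟨hs1, hs2⟩, rfl⟩ := hyC
      have hmem : ee s ^ n ∈ B' ∧ ee s ^ n ∈ connectedComponentIn (unitCircleSet \ A') (x ^ n) := by
        refine ⟨hy2, ?_⟩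
        rw [hxpow, hdown, ee_pow]
        exact ⟨n * s, ⟨(mul_lt_mul_iff_right₀ hnpos).2 hs1, (mul_lt_mul_iff_right₀ hnpos).2 hs2⟩, rfl⟩
      have heq : ee s ^ n = b0 := hb0uniq _ hmem
      have heq2 : ee ((n : ℝ) * s) = ee u := by rw [← ee_pow, heq, ← hbu]
      have hnab : (n : ℝ) * b ≤ n * a + 1 := by
        have := (mul_le_mul_iff_right₀ hnpos).2 hba
        rw [mul_add, mul_one_div, div_self hn0] at this
        linarith
      have hns : (n : ℝ) * s = u := by
        refine ee_inj ?_ heq2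
        rw [abs_lt]
        constructor
        · have h1 : (n:ℝ) * a < n * s := (mul_lt_mul_iff_right₀ hnpos).2 hs1
          linarith
        · have h2 : (n:ℝ) * s < n * b := (mul_lt_mul_iff_right₀ hnpos).2 hs2
          linarith
      congr 1
      rw [← hns]
      field_simp
end

section
/- Let M be a nonempty Hausdorff topological space with open subsets U and V such that M = U ∪ V and each of U, V, and U ∩ V (with the subspace topology) is homeomorphic to Euclidean 3-space ℝ³ (EuclideanSpace ℝ (Fin 3)). Then M is a contractible space. -/
open Set Topology

set_option linter.unusedSectionVars false

namespace DoubleThree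

noncomputable section

variable {M : Type*} [TopologicalSpace M]

/-- Inverse chart, as a map into `M`. -/
def dn {O : Set M} (φ : ↥O ≃ₜ EuclideanSpace ℝ (Fin 3)) (e : EuclideanSpace ℝ (Fin 3)) : M :=
  (φ.symm e : M)

open Classical in
/-- Chart, extended by junk value `0` outside `O`. -/
def up {O : Set M} (φ : ↥O ≃ₜ EuclideanSpace ℝ (Fin 3)) (x : M) : EuclideanSpace ℝ (Fin 3) :=
  if h : x ∈ O then φ ⟨x, h⟩ else 0

lemma continuous_dn {O : Set M} (φ : ↥O ≃ₜ EuclideanSpace ℝ (Fin 3)) : Continuous (dn φ) :=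
  continuous_subtype_val.comp φ.symm.continuous

lemma dn_mem {O : Set M} (φ : ↥O ≃ₜ EuclideanSpace ℝ (Fin 3)) (e) : dn φ e ∈ O :=
  (φ.symm e).2

lemma dn_up {O : Set M} (φ : ↥O ≃ₜ EuclideanSpace ℝ (Fin 3)) {x : M} (hx : x ∈ O) :
    dn φ (up φ x) = x := by
  simp only [up, dif_pos hx, dn, Homeomorph.symm_apply_apply]

lemma continuousOn_up {O : Set M} (φ : ↥O ≃ₜ EuclideanSpace ℝ (Fin 3)) :
    ContinuousOn (up φ) O := by
  rw [continuousOn_iff_continuous_restrict]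
  have h : O.domRestrict (up φ) = fun y => φ y := funext fun y => by
    show up φ y = φ y
    simp only [up, dif_pos y.2]
  rw [h]
  exact φ.continuous

/-- Straight line (in the chart `φ`) from `y` to `a`, at time `s`. -/
def line {O : Set M} (φ : ↥O ≃ₜ EuclideanSpace ℝ (Fin 3)) (a y : M) (s : ℝ) : M :=
  dn φ ((1 - s) • up φ y + s • up φ a)

lemma line_mem {O : Set M} (φ : ↥O ≃ₜ EuclideanSpace ℝ (Fin 3)) (a y : M) (s : ℝ) :
    line φ a y s ∈ O := dn_mem _ _

lemma line_zero {O : Set M} (φ : ↥O ≃ₜ EuclideanSpace ℝ (Fin 3)) (a : M) {y : M} (hy : y ∈ O) :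
    line φ a y 0 = y := by
  simp only [line, sub_zero, one_smul, zero_smul, add_zero, dn_up φ hy]

lemma line_one {O : Set M} (φ : ↥O ≃ₜ EuclideanSpace ℝ (Fin 3)) {a : M} (ha : a ∈ O) (y : M) :
    line φ a y 1 = a := by
  simp only [line, sub_self, zero_smul, one_smul, zero_add, dn_up φ ha]

lemma line_self {O : Set M} (φ : ↥O ≃ₜ EuclideanSpace ℝ (Fin 3)) {a : M} (ha : a ∈ O) (s : ℝ) :
    line φ a a s = a := by
  simp only [line, ← add_smul, sub_add_cancel, one_smul, dn_up φ ha]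

lemma line_continuousOn {O : Set M} (φ : ↥O ≃ₜ EuclideanSpace ℝ (Fin 3)) (a : M)
    {s : Set (M × ℝ)} {g : M × ℝ → M} {e : M × ℝ → ℝ}
    (hg : ContinuousOn g s) (he : ContinuousOn e s) (hmem : ∀ p ∈ s, g p ∈ O) :
    ContinuousOn (fun p => line φ a (g p) (e p)) s := by
  apply (continuous_dn φ).comp_continuousOn
  exact ((continuousOn_const.sub he).smul ((continuousOn_up φ).comp hg hmem)).add
    (he.smul continuousOn_const)

lemma line_continuousAt {O : Set M} (hO : IsOpen O) (φ : ↥O ≃ₜ EuclideanSpace ℝ (Fin 3)) (a : M)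
    {g : M × ℝ → M} {e : M × ℝ → ℝ} {p : M × ℝ}
    (hg : ContinuousAt g p) (he : ContinuousAt e p) (hmem : g p ∈ O) :
    ContinuousAt (fun q => line φ a (g q) (e q)) p := by
  apply ((continuous_dn φ).continuousAt).comp
  have hup : ContinuousAt (up φ) (g p) := (continuousOn_up φ).continuousAt (hO.mem_nhds hmem)
  exact ((continuousAt_const.sub he).smul (hup.comp hg)).add (he.smul continuousAt_const)

section Main

variable {M : Type*} [TopologicalSpace M] {U V : Set M}
  (φU : ↥U ≃ₜ EuclideanSpace ℝ (Fin 3))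
  (φV : ↥V ≃ₜ EuclideanSpace ℝ (Fin 3))
  (φA : ↥(U ∩ V) ≃ₜ EuclideanSpace ℝ (Fin 3))
  (f : M → ℝ)

/-- The "level" function built from a Urysohn function. -/
def lv (f : M → ℝ) (x : M) : ℝ := max 0 (min 1 (3 * f x - 1))

/-- Clamp to `[0,1]`. -/
def clmp (s : ℝ) : ℝ := max 0 (min 1 s)

/-- Basepoint in `U ∩ V`. -/
def pt : M := dn φA 0

lemma pt_mem : pt φA ∈ U ∩ V := dn_mem _ _

lemma lv_nonneg (x : M) : 0 ≤ lv f x := le_max_left _ _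

lemma lv_le_one (x : M) : lv f x ≤ 1 :=
  max_le (by norm_num) (min_le_left _ _)

lemma clmp_nonneg (s : ℝ) : 0 ≤ clmp s := le_max_left _ _

lemma clmp_le_one (s : ℝ) : clmp s ≤ 1 := max_le (by norm_num) (min_le_left _ _)

lemma clmp_zero : clmp (0 : ℝ) = 0 := by norm_num [clmp]

lemma clmp_one : clmp (1 : ℝ) = 1 := by norm_num [clmp]

lemma continuous_clmp : Continuous clmp :=
  continuous_const.max (continuous_const.min continuous_id)

lemma continuous_lv (hfc : Continuous f) : Continuous (lv f) :=
  continuous_const.max (continuous_const.min (((continuous_const.mul hfc)).sub continuous_const))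

lemma lv_eq_one_of_notU (hf1 : EqOn f 1 Uᶜ) {x : M} (hx : x ∉ U) : lv f x = 1 := by
  have : f x = 1 := hf1 hx
  norm_num [lv, this]

lemma lv_eq_zero_of_notV (hf0 : EqOn f 0 Vᶜ) {x : M} (hx : x ∉ V) : lv f x = 0 := by
  have : f x = 0 := hf0 hx
  norm_num [lv, this]

lemma mem_U_of_lv_lt_one (hf1 : EqOn f 1 Uᶜ) {x : M} (h : lv f x < 1) : x ∈ U := by
  by_contra hx
  rw [lv_eq_one_of_notU f hf1 hx] at h
  exact lt_irrefl _ h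

lemma mem_V_of_lv_pos (hf0 : EqOn f 0 Vᶜ) {x : M} (h : 0 < lv f x) : x ∈ V := by
  by_contra hx
  rw [lv_eq_zero_of_notV f hf0 hx] at h
  exact lt_irrefl _ h

lemma mem_A_of_lv (hf0 : EqOn f 0 Vᶜ) (hf1 : EqOn f 1 Uᶜ) {x : M}
    (h0 : 0 < lv f x) (h1 : lv f x < 1) : x ∈ U ∩ V :=
  ⟨mem_U_of_lv_lt_one f hf1 h1, mem_V_of_lv_pos f hf0 h0⟩

lemma lv_eq_zero_of_f_lt {x : M} (h : f x < 1/3) : lv f x = 0 := by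
  have h1 : 3 * f x - 1 ≤ 0 := by linarith
  rw [lv, min_eq_right (by linarith), max_eq_left h1]

lemma lv_eq_one_of_f_gt {x : M} (h : 2/3 < f x) : lv f x = 1 := by
  have h1 : (1:ℝ) ≤ 3 * f x - 1 := by linarith
  rw [lv, min_eq_left h1]
  norm_num

lemma f_eq_of_notA (hf0 : EqOn f 0 Vᶜ) (hf1 : EqOn f 1 Uᶜ) {x : M} (hx : x ∉ U ∩ V) :
    f x = 0 ∨ f x = 1 := by
  by_cases hxU : x ∈ U
  · left
    exact hf0 (fun hxV => hx ⟨hxU, hxV⟩)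
  · right
    exact hf1 hxU

/-- Phase A, first branch. -/
def FA1 (p : M × ℝ) : M := line φU (pt φA) p.1 (max 0 (clmp p.2 - 3 * lv f p.1))

/-- Phase A, second branch. -/
def FA2 (p : M × ℝ) : M := line φV (pt φA) p.1 (max 0 (3 * lv f p.1 - 3 + clmp p.2))

/-- Phase B, first branch. -/
def FB1 (p : M × ℝ) : M :=
  line φU (pt φA) (line φA (pt φA) p.1 (clmp p.2 * min (3 * lv f p.1) 1))
    (max 0 (1 - 3 * lv f p.1))

/-- Phase B, second branch. -/
def FB2 (p : M × ℝ) : M :=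
  line φV (pt φA) (line φA (pt φA) p.1 (clmp p.2 * min 1 (3 - 3 * lv f p.1)))
    (max 0 (3 * lv f p.1 - 2))

/-- Phase C, first branch. -/
def FC1 (p : M × ℝ) : M := line φU (pt φA) (FB1 φU φA f (p.1, 1)) (clmp p.2)

/-- Phase C, second branch. -/
def FC2 (p : M × ℝ) : M := line φV (pt φA) (FB2 φV φA f (p.1, 1)) (clmp p.2)

/-- Branching region. -/
def SS (f : M → ℝ) : Set (M × ℝ) := {p | lv f p.1 ≤ 2/3}

open Classical in
def HA (p : M × ℝ) : M := (SS f).piecewise (FA1 φU φA f) (FA2 φV φA f) p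

open Classical in
def HB (p : M × ℝ) : M := (SS f).piecewise (FB1 φU φA f) (FB2 φV φA f) p

open Classical in
def HC (p : M × ℝ) : M := (SS f).piecewise (FC1 φU φA f) (FC2 φV φA f) p

lemma FB1_mem (p : M × ℝ) : FB1 φU φA f p ∈ U := line_mem _ _ _ _

lemma FB2_mem (p : M × ℝ) : FB2 φV φA f p ∈ V := line_mem _ _ _ _

lemma HA_zero (hf0 : EqOn f 0 Vᶜ) (hf1 : EqOn f 1 Uᶜ) (x : M) :
    HA φU φV φA f (x, 0) = x := by
  unfold HA
  classical
  by_cases hx : (x, (0:ℝ)) ∈ SS f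
  · rw [Set.piecewise_eq_of_mem _ _ _ hx]
    have hxl : lv f x ≤ 2/3 := hx
    have hxU : x ∈ U := mem_U_of_lv_lt_one f hf1 (lt_of_le_of_lt hxl (by norm_num))
    show line φU (pt φA) x (max 0 (clmp (0:ℝ) - 3 * lv f x)) = x
    have harg : max 0 (clmp (0:ℝ) - 3 * lv f x) = 0 :=
      max_eq_left (by have := lv_nonneg f x; rw [clmp_zero]; linarith)
    rw [harg, line_zero _ _ hxU]
  · rw [Set.piecewise_eq_of_notMem _ _ _ hx]
    have hxl : 2/3 < lv f x := not_le.mp hx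
    have hxV : x ∈ V := mem_V_of_lv_pos f hf0 (by linarith)
    show line φV (pt φA) x (max 0 (3 * lv f x - 3 + clmp (0:ℝ))) = x
    have harg : max 0 (3 * lv f x - 3 + clmp (0:ℝ)) = 0 :=
      max_eq_left (by have := lv_le_one f x; rw [clmp_zero]; linarith)
    rw [harg, line_zero _ _ hxV]

lemma HB_zero (hf0 : EqOn f 0 Vᶜ) (hf1 : EqOn f 1 Uᶜ) (x : M) :
    HB φU φV φA f (x, 0) = HA φU φV φA f (x, 1) := by
  unfold HB HA
  classical
  by_cases hx : (x, (0:ℝ)) ∈ SS f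
  · have hx' : (x, (1:ℝ)) ∈ SS f := hx
    rw [Set.piecewise_eq_of_mem _ _ _ hx, Set.piecewise_eq_of_mem _ _ _ hx']
    show line φU (pt φA) (line φA (pt φA) x (clmp (0:ℝ) * min (3 * lv f x) 1))
        (max 0 (1 - 3 * lv f x)) = line φU (pt φA) x (max 0 (clmp (1:ℝ) - 3 * lv f x))
    rw [clmp_zero, clmp_one, zero_mul]
    rcases eq_or_lt_of_le (lv_nonneg f x) with h0 | h0
    · have ht : max 0 (1 - 3 * lv f x) = 1 := by rw [← h0]; norm_num
      rw [ht, line_one φU (pt_mem φA).1, line_one φU (pt_mem φA).1]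
    · have hxl : lv f x ≤ 2/3 := hx
      have hxA : x ∈ U ∩ V := mem_A_of_lv f hf0 hf1 h0 (lt_of_le_of_lt hxl (by norm_num))
      rw [line_zero φA _ hxA]
  · have hx' : (x, (1:ℝ)) ∉ SS f := hx
    rw [Set.piecewise_eq_of_notMem _ _ _ hx, Set.piecewise_eq_of_notMem _ _ _ hx']
    show line φV (pt φA) (line φA (pt φA) x (clmp (0:ℝ) * min 1 (3 - 3 * lv f x)))
        (max 0 (3 * lv f x - 2)) = line φV (pt φA) x (max 0 (3 * lv f x - 3 + clmp (1:ℝ)))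
    rw [clmp_zero, clmp_one, zero_mul]
    have hring : 3 * lv f x - 3 + 1 = 3 * lv f x - 2 := by ring
    rw [hring]
    rcases eq_or_lt_of_le (lv_le_one f x) with h1 | h1
    · have ht : max 0 (3 * lv f x - 2) = 1 := by rw [h1]; norm_num
      rw [ht, line_one φV (pt_mem φA).2, line_one φV (pt_mem φA).2]
    · have hxl : 2/3 < lv f x := not_le.mp hx
      have hxA : x ∈ U ∩ V := mem_A_of_lv f hf0 hf1 (by linarith) h1
      rw [line_zero φA _ hxA]

lemma HC_zero (x : M) : HC φU φV φA f (x, 0) = HB φU φV φA f (x, 1) := by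
  unfold HC HB
  classical
  by_cases hx : (x, (0:ℝ)) ∈ SS f
  · have hx' : (x, (1:ℝ)) ∈ SS f := hx
    rw [Set.piecewise_eq_of_mem _ _ _ hx, Set.piecewise_eq_of_mem _ _ _ hx']
    show line φU (pt φA) (FB1 φU φA f (x, 1)) (clmp (0:ℝ)) = FB1 φU φA f (x, 1)
    rw [clmp_zero, line_zero _ _ (FB1_mem φU φA f (x, 1))]
  · have hx' : (x, (1:ℝ)) ∉ SS f := hx
    rw [Set.piecewise_eq_of_notMem _ _ _ hx, Set.piecewise_eq_of_notMem _ _ _ hx']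
    show line φV (pt φA) (FB2 φV φA f (x, 1)) (clmp (0:ℝ)) = FB2 φV φA f (x, 1)
    rw [clmp_zero, line_zero _ _ (FB2_mem φV φA f (x, 1))]

lemma HC_one (x : M) : HC φU φV φA f (x, 1) = pt φA := by
  unfold HC
  classical
  by_cases hx : (x, (1:ℝ)) ∈ SS f
  · rw [Set.piecewise_eq_of_mem _ _ _ hx]
    show line φU (pt φA) (FB1 φU φA f (x, 1)) (clmp (1:ℝ)) = pt φA
    rw [clmp_one, line_one φU (pt_mem φA).1]
  · rw [Set.piecewise_eq_of_notMem _ _ _ hx]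
    show line φV (pt φA) (FB2 φV φA f (x, 1)) (clmp (1:ℝ)) = pt φA
    rw [clmp_one, line_one φV (pt_mem φA).2]

lemma SS_closed (hfc : Continuous f) : IsClosed (SS f) :=
  isClosed_le ((continuous_lv f hfc).comp continuous_fst) continuous_const

lemma frontier_SS (hfc : Continuous f) :
    frontier (SS f) ⊆ {p : M × ℝ | lv f p.1 = 2/3} := by
  have h := frontier_le_subset_eq ((continuous_lv f hfc).comp continuous_fst)
    (continuous_const : Continuous fun _ : M × ℝ => (2/3 : ℝ))
  exact h

lemma closure_SS_compl (hfc : Continuous f) :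
    closure (SS f)ᶜ ⊆ {p : M × ℝ | 2/3 ≤ lv f p.1} := by
  apply closure_minimal
  · intro p hp
    exact le_of_lt (not_le.mp (by simpa [SS] using hp))
  · exact isClosed_le continuous_const ((continuous_lv f hfc).comp continuous_fst)

lemma contHA (hfc : Continuous f) (hf0 : EqOn f 0 Vᶜ) (hf1 : EqOn f 1 Uᶜ) :
    Continuous (HA φU φV φA f) := by
  unfold HA
  classical
  apply continuous_piecewise
  · intro p hp
    have hl : lv f p.1 = 2/3 := frontier_SS f hfc hp
    have hxA : p.1 ∈ U ∩ V := mem_A_of_lv f hf0 hf1 (by rw [hl]; norm_num) (by rw [hl]; norm_num)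
    show line φU (pt φA) p.1 (max 0 (clmp p.2 - 3 * lv f p.1))
        = line φV (pt φA) p.1 (max 0 (3 * lv f p.1 - 3 + clmp p.2))
    have h1 : max 0 (clmp p.2 - 3 * lv f p.1) = 0 :=
      max_eq_left (by have := clmp_le_one p.2; rw [hl]; linarith)
    have h2 : max 0 (3 * lv f p.1 - 3 + clmp p.2) = 0 :=
      max_eq_left (by have := clmp_le_one p.2; rw [hl]; linarith)
    rw [h1, h2, line_zero _ _ hxA.1, line_zero _ _ hxA.2]
  · rw [(SS_closed f hfc).closure_eq]
    apply line_continuousOn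
    · exact continuous_fst.continuousOn
    · exact (continuous_const.max ((continuous_clmp.comp continuous_snd).sub
        (continuous_const.mul ((continuous_lv f hfc).comp continuous_fst)))).continuousOn
    · intro p hp
      exact mem_U_of_lv_lt_one f hf1 (lt_of_le_of_lt hp (by norm_num))
  · apply ContinuousOn.mono _ (closure_SS_compl f hfc)
    apply line_continuousOn
    · exact continuous_fst.continuousOn
    · exact ((continuous_const.max (((continuous_const.mul ((continuous_lv f hfc).comp
        continuous_fst)).sub continuous_const).add
        (continuous_clmp.comp continuous_snd)))).continuousOn
    · intro p hp
      exact mem_V_of_lv_pos f hf0 (lt_of_lt_of_le (by norm_num) hp)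

lemma contHB (hUo : IsOpen U) (hVo : IsOpen V) (hfc : Continuous f)
    (hf0 : EqOn f 0 Vᶜ) (hf1 : EqOn f 1 Uᶜ) :
    Continuous (HB φU φV φA f) := by
  have hAo : IsOpen (U ∩ V) := hUo.inter hVo
  unfold HB
  classical
  apply continuous_piecewise
  · intro p hp
    have hl : lv f p.1 = 2/3 := frontier_SS f hfc hp
    have hxA : p.1 ∈ U ∩ V := mem_A_of_lv f hf0 hf1 (by rw [hl]; norm_num) (by rw [hl]; norm_num)
    show line φU (pt φA) (line φA (pt φA) p.1 (clmp p.2 * min (3 * lv f p.1) 1))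
        (max 0 (1 - 3 * lv f p.1))
        = line φV (pt φA) (line φA (pt φA) p.1 (clmp p.2 * min 1 (3 - 3 * lv f p.1)))
        (max 0 (3 * lv f p.1 - 2))
    have hmin1 : min (3 * lv f p.1) 1 = 1 := min_eq_right (by rw [hl]; norm_num)
    have hmin2 : min 1 (3 - 3 * lv f p.1) = 1 := min_eq_left (by rw [hl]; norm_num)
    have ht1 : max 0 (1 - 3 * lv f p.1) = 0 := max_eq_left (by rw [hl]; norm_num)
    have ht2 : max 0 (3 * lv f p.1 - 2) = 0 := max_eq_left (by rw [hl]; norm_num)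
    rw [hmin1, hmin2, ht1, ht2, line_zero _ _ (line_mem φA _ _ _).1,
      line_zero _ _ (line_mem φA _ _ _).2]
  · rw [(SS_closed f hfc).closure_eq]
    intro p hp
    by_cases hxA : p.1 ∈ U ∩ V
    · apply ContinuousAt.continuousWithinAt
      apply line_continuousAt hUo φU (pt φA)
        (g := fun q => line φA (pt φA) q.1 (clmp q.2 * min (3 * lv f q.1) 1))
        (e := fun q => max 0 (1 - 3 * lv f q.1))
      · apply line_continuousAt hAo φA (pt φA) continuous_fst.continuousAt
        · exact ((continuous_clmp.comp continuous_snd).mul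
            ((continuous_const.mul ((continuous_lv f hfc).comp
              continuous_fst)).min continuous_const)).continuousAt
        · exact hxA
      · exact (continuous_const.max (continuous_const.sub
          (continuous_const.mul ((continuous_lv f hfc).comp continuous_fst)))).continuousAt
      · exact (line_mem φA _ _ _).1
    · have hf0x : f p.1 = 0 := by
        rcases f_eq_of_notA f hf0 hf1 hxA with h | h
        · exact h
        · exfalso
          have : lv f p.1 ≤ 2/3 := hp
          rw [lv_eq_one_of_f_gt f (by rw [h]; norm_num)] at this
          norm_num at this
      have hN : (f ⁻¹' Iio (1/3 : ℝ)) ×ˢ (univ : Set ℝ) ∈ 𝓝 p := by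
        apply prod_mem_nhds _ Filter.univ_mem
        exact (isOpen_Iio.preimage hfc).mem_nhds (by rw [mem_preimage, hf0x]; norm_num)
      have hEq : ∀ q ∈ (f ⁻¹' Iio (1/3 : ℝ)) ×ˢ (univ : Set ℝ),
          FB1 φU φA f q = pt φA := by
        intro q hq
        have hlq : lv f q.1 = 0 := lv_eq_zero_of_f_lt f hq.1
        show line φU (pt φA) (line φA (pt φA) q.1 (clmp q.2 * min (3 * lv f q.1) 1))
          (max 0 (1 - 3 * lv f q.1)) = pt φA
        have ht : max 0 (1 - 3 * lv f q.1) = 1 := by rw [hlq]; norm_num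
        rw [ht, line_one φU (pt_mem φA).1]
      have heq : FB1 φU φA f =ᶠ[nhds p] (fun _ => pt φA) :=
        Filter.eventuallyEq_of_mem hN hEq
      have : ContinuousAt (FB1 φU φA f) p := by
        apply ContinuousAt.congr continuousAt_const heq.symm
      exact this.continuousWithinAt
  · apply ContinuousOn.mono _ (closure_SS_compl f hfc)
    intro p hp
    by_cases hxA : p.1 ∈ U ∩ V
    · apply ContinuousAt.continuousWithinAt
      apply line_continuousAt hVo φV (pt φA)
        (g := fun q => line φA (pt φA) q.1 (clmp q.2 * min 1 (3 - 3 * lv f q.1)))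
        (e := fun q => max 0 (3 * lv f q.1 - 2))
      · apply line_continuousAt hAo φA (pt φA) continuous_fst.continuousAt
        · exact ((continuous_clmp.comp continuous_snd).mul
            (continuous_const.min (continuous_const.sub
              (continuous_const.mul ((continuous_lv f hfc).comp continuous_fst))))).continuousAt
        · exact hxA
      · exact (continuous_const.max ((continuous_const.mul
          ((continuous_lv f hfc).comp continuous_fst)).sub continuous_const)).continuousAt
      · exact (line_mem φA _ _ _).2
    · have hf1x : f p.1 = 1 := by
        rcases f_eq_of_notA f hf0 hf1 hxA with h | h
        · exfalso
          have h23 : (2:ℝ)/3 ≤ lv f p.1 := hp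
          rw [lv_eq_zero_of_f_lt f (by rw [h]; norm_num)] at h23
          norm_num at h23
        · exact h
      have hN : (f ⁻¹' Ioi (2/3 : ℝ)) ×ˢ (univ : Set ℝ) ∈ 𝓝 p := by
        apply prod_mem_nhds _ Filter.univ_mem
        exact (isOpen_Ioi.preimage hfc).mem_nhds (by rw [mem_preimage, hf1x]; norm_num)
      have hEq : ∀ q ∈ (f ⁻¹' Ioi (2/3 : ℝ)) ×ˢ (univ : Set ℝ),
          FB2 φV φA f q = pt φA := by
        intro q hq
        have hlq : lv f q.1 = 1 := lv_eq_one_of_f_gt f hq.1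
        show line φV (pt φA) (line φA (pt φA) q.1 (clmp q.2 * min 1 (3 - 3 * lv f q.1)))
          (max 0 (3 * lv f q.1 - 2)) = pt φA
        have ht : max 0 (3 * lv f q.1 - 2) = 1 := by rw [hlq]; norm_num
        rw [ht, line_one φV (pt_mem φA).2]
      have heq : FB2 φV φA f =ᶠ[nhds p] (fun _ => pt φA) :=
        Filter.eventuallyEq_of_mem hN hEq
      have : ContinuousAt (FB2 φV φA f) p := by
        apply ContinuousAt.congr continuousAt_const heq.symm
      exact this.continuousWithinAt

lemma contHC (hUo : IsOpen U) (hVo : IsOpen V) (hfc : Continuous f)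
    (hf0 : EqOn f 0 Vᶜ) (hf1 : EqOn f 1 Uᶜ) :
    Continuous (HC φU φV φA f) := by
  have hAo : IsOpen (U ∩ V) := hUo.inter hVo
  unfold HC
  classical
  apply continuous_piecewise
  · intro p hp
    have hl : lv f p.1 = 2/3 := frontier_SS f hfc hp
    show line φU (pt φA) (FB1 φU φA f (p.1, 1)) (clmp p.2)
        = line φV (pt φA) (FB2 φV φA f (p.1, 1)) (clmp p.2)
    have hB1 : FB1 φU φA f (p.1, 1) = pt φA := by
      show line φU (pt φA) (line φA (pt φA) p.1 (clmp (1:ℝ) * min (3 * lv f p.1) 1))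
        (max 0 (1 - 3 * lv f p.1)) = pt φA
      have hmin1 : min (3 * lv f p.1) 1 = 1 := min_eq_right (by rw [hl]; norm_num)
      have ht1 : max 0 (1 - 3 * lv f p.1) = 0 := max_eq_left (by rw [hl]; norm_num)
      rw [clmp_one, one_mul, hmin1, ht1, line_zero _ _ (line_mem φA _ _ _).1,
        line_one φA (pt_mem φA) _]
    have hB2 : FB2 φV φA f (p.1, 1) = pt φA := by
      show line φV (pt φA) (line φA (pt φA) p.1 (clmp (1:ℝ) * min 1 (3 - 3 * lv f p.1)))
        (max 0 (3 * lv f p.1 - 2)) = pt φA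
      have hmin2 : min 1 (3 - 3 * lv f p.1) = 1 := min_eq_left (by rw [hl]; norm_num)
      have ht2 : max 0 (3 * lv f p.1 - 2) = 0 := max_eq_left (by rw [hl]; norm_num)
      rw [clmp_one, one_mul, hmin2, ht2, line_zero _ _ (line_mem φA _ _ _).2,
        line_one φA (pt_mem φA) _]
    rw [hB1, hB2, line_self φU (pt_mem φA).1, line_self φV (pt_mem φA).2]
  · rw [(SS_closed f hfc).closure_eq]
    intro p hp
    by_cases hxA : p.1 ∈ U ∩ V
    · apply ContinuousAt.continuousWithinAt
      apply line_continuousAt hUo φU (pt φA)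
        (g := fun q => FB1 φU φA f (q.1, 1)) (e := fun q => clmp q.2)
      · show ContinuousAt (fun q : M × ℝ => line φU (pt φA)
          (line φA (pt φA) q.1 (clmp (1:ℝ) * min (3 * lv f q.1) 1))
          (max 0 (1 - 3 * lv f q.1))) p
        apply line_continuousAt hUo φU (pt φA)
        · apply line_continuousAt hAo φA (pt φA) continuous_fst.continuousAt
          · exact (continuous_const.mul ((continuous_const.mul ((continuous_lv f hfc).comp
              continuous_fst)).min continuous_const)).continuousAt
          · exact hxA
        · exact (continuous_const.max (continuous_const.sub
            (continuous_const.mul ((continuous_lv f hfc).comp continuous_fst)))).continuousAt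
        · exact (line_mem φA _ _ _).1
      · exact (continuous_clmp.comp continuous_snd).continuousAt
      · exact FB1_mem φU φA f _
    · have hf0x : f p.1 = 0 := by
        rcases f_eq_of_notA f hf0 hf1 hxA with h | h
        · exact h
        · exfalso
          have : lv f p.1 ≤ 2/3 := hp
          rw [lv_eq_one_of_f_gt f (by rw [h]; norm_num)] at this
          norm_num at this
      have hN : (f ⁻¹' Iio (1/3 : ℝ)) ×ˢ (univ : Set ℝ) ∈ 𝓝 p := by
        apply prod_mem_nhds _ Filter.univ_mem
        exact (isOpen_Iio.preimage hfc).mem_nhds (by rw [mem_preimage, hf0x]; norm_num)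
      have hEq : ∀ q ∈ (f ⁻¹' Iio (1/3 : ℝ)) ×ˢ (univ : Set ℝ),
          FC1 φU φA f q = pt φA := by
        intro q hq
        have hlq : lv f q.1 = 0 := lv_eq_zero_of_f_lt f hq.1
        have hB1 : FB1 φU φA f (q.1, 1) = pt φA := by
          show line φU (pt φA) (line φA (pt φA) q.1 (clmp (1:ℝ) * min (3 * lv f q.1) 1))
            (max 0 (1 - 3 * lv f q.1)) = pt φA
          have ht : max 0 (1 - 3 * lv f q.1) = 1 := by rw [hlq]; norm_num
          rw [ht, line_one φU (pt_mem φA).1]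
        show line φU (pt φA) (FB1 φU φA f (q.1, 1)) (clmp q.2) = pt φA
        rw [hB1, line_self φU (pt_mem φA).1]
      have heq : FC1 φU φA f =ᶠ[nhds p] (fun _ => pt φA) :=
        Filter.eventuallyEq_of_mem hN hEq
      exact (ContinuousAt.congr continuousAt_const heq.symm).continuousWithinAt
  · apply ContinuousOn.mono _ (closure_SS_compl f hfc)
    intro p hp
    by_cases hxA : p.1 ∈ U ∩ V
    · apply ContinuousAt.continuousWithinAt
      apply line_continuousAt hVo φV (pt φA)
        (g := fun q => FB2 φV φA f (q.1, 1)) (e := fun q => clmp q.2)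
      · show ContinuousAt (fun q : M × ℝ => line φV (pt φA)
          (line φA (pt φA) q.1 (clmp (1:ℝ) * min 1 (3 - 3 * lv f q.1)))
          (max 0 (3 * lv f q.1 - 2))) p
        apply line_continuousAt hVo φV (pt φA)
        · apply line_continuousAt hAo φA (pt φA) continuous_fst.continuousAt
          · exact (continuous_const.mul (continuous_const.min (continuous_const.sub
              (continuous_const.mul ((continuous_lv f hfc).comp
                continuous_fst))))).continuousAt
          · exact hxA
        · exact (continuous_const.max ((continuous_const.mul
            ((continuous_lv f hfc).comp continuous_fst)).sub continuous_const)).continuousAt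
        · exact (line_mem φA _ _ _).2
      · exact (continuous_clmp.comp continuous_snd).continuousAt
      · exact FB2_mem φV φA f _
    · have hf1x : f p.1 = 1 := by
        rcases f_eq_of_notA f hf0 hf1 hxA with h | h
        · exfalso
          have h23 : (2:ℝ)/3 ≤ lv f p.1 := hp
          rw [lv_eq_zero_of_f_lt f (by rw [h]; norm_num)] at h23
          norm_num at h23
        · exact h
      have hN : (f ⁻¹' Ioi (2/3 : ℝ)) ×ˢ (univ : Set ℝ) ∈ 𝓝 p := by
        apply prod_mem_nhds _ Filter.univ_mem
        exact (isOpen_Ioi.preimage hfc).mem_nhds (by rw [mem_preimage, hf1x]; norm_num)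
      have hEq : ∀ q ∈ (f ⁻¹' Ioi (2/3 : ℝ)) ×ˢ (univ : Set ℝ),
          FC2 φV φA f q = pt φA := by
        intro q hq
        have hlq : lv f q.1 = 1 := lv_eq_one_of_f_gt f hq.1
        have hB2 : FB2 φV φA f (q.1, 1) = pt φA := by
          show line φV (pt φA) (line φA (pt φA) q.1 (clmp (1:ℝ) * min 1 (3 - 3 * lv f q.1)))
            (max 0 (3 * lv f q.1 - 2)) = pt φA
          have ht : max 0 (3 * lv f q.1 - 2) = 1 := by rw [hlq]; norm_num
          rw [ht, line_one φV (pt_mem φA).2]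
        show line φV (pt φA) (FB2 φV φA f (q.1, 1)) (clmp q.2) = pt φA
        rw [hB2, line_self φV (pt_mem φA).2]
      have heq : FC2 φV φA f =ᶠ[nhds p] (fun _ => pt φA) :=
        Filter.eventuallyEq_of_mem hN hEq
      exact (ContinuousAt.congr continuousAt_const heq.symm).continuousWithinAt

include φU φV φA in
theorem aux_contractible (hUo : IsOpen U) (hVo : IsOpen V)
    (hfc : Continuous f) (hf0 : EqOn f 0 Vᶜ) (hf1 : EqOn f 1 Uᶜ) :
    ContractibleSpace M := by
  rw [contractible_iff_id_nullhomotopic]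
  refine ⟨pt φA, ?_⟩
  have cA := contHA φU φV φA f hfc hf0 hf1
  have cB := contHB φU φV φA f hUo hVo hfc hf0 hf1
  have cC := contHC φU φV φA f hUo hVo hfc hf0 hf1
  let fA : C(M, M) := ⟨fun x => HA φU φV φA f (x, 1),
    cA.comp (continuous_id.prodMk continuous_const)⟩
  let fB : C(M, M) := ⟨fun x => HB φU φV φA f (x, 1),
    cB.comp (continuous_id.prodMk continuous_const)⟩
  have homA : (ContinuousMap.id M).Homotopy fA := {
    toFun := fun q => HA φU φV φA f (q.2, (q.1 : ℝ))
    continuous_toFun := cA.comp (continuous_snd.prodMk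
      (continuous_subtype_val.comp continuous_fst))
    map_zero_left := fun x => HA_zero φU φV φA f hf0 hf1 x
    map_one_left := fun x => rfl }
  have homB : fA.Homotopy fB := {
    toFun := fun q => HB φU φV φA f (q.2, (q.1 : ℝ))
    continuous_toFun := cB.comp (continuous_snd.prodMk
      (continuous_subtype_val.comp continuous_fst))
    map_zero_left := fun x => HB_zero φU φV φA f hf0 hf1 x
    map_one_left := fun x => rfl }
  have homC : fB.Homotopy (ContinuousMap.const M (pt φA)) := {
    toFun := fun q => HC φU φV φA f (q.2, (q.1 : ℝ))
    continuous_toFun := cC.comp (continuous_snd.prodMk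
      (continuous_subtype_val.comp continuous_fst))
    map_zero_left := fun x => HC_zero φU φV φA f x
    map_one_left := fun x => HC_one φU φV φA f x }
  exact ⟨(homA.trans homB).trans homC⟩

end Main

section Instances

variable {M : Type*} [TopologicalSpace M]

lemma wlc_aux {O : Set M} (hO : IsOpen O) (φ : ↥O ≃ₜ EuclideanSpace ℝ (Fin 3)) {x : M}
    (hx : x ∈ O) : ∃ s, IsCompact s ∧ s ∈ 𝓝 x := by
  set y : ↥O := ⟨x, hx⟩
  obtain ⟨K, hKc, hKn⟩ := exists_compact_mem_nhds (φ y)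
  refine ⟨Subtype.val '' (φ.symm '' K),
    (hKc.image φ.symm.continuous).image continuous_subtype_val, ?_⟩
  have h1 : φ.symm '' K ∈ 𝓝 y := by
    rw [← φ.symm_map_nhds_eq y]
    exact Filter.image_mem_map hKn
  have h2 : Filter.map Subtype.val (𝓝 y) = 𝓝 x :=
    hO.isOpenEmbedding_subtypeVal.map_nhds_eq y
  rw [← h2]
  exact Filter.image_mem_map h1

lemma wlc {U V : Set M} (hUo : IsOpen U) (hVo : IsOpen V) (hUV : U ∪ V = univ)
    (φU : ↥U ≃ₜ EuclideanSpace ℝ (Fin 3)) (φV : ↥V ≃ₜ EuclideanSpace ℝ (Fin 3)) :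
    WeaklyLocallyCompactSpace M := by
  constructor
  intro x
  have hx : x ∈ U ∪ V := hUV ▸ mem_univ x
  cases hx with
  | inl h => exact wlc_aux hUo φU h
  | inr h => exact wlc_aux hVo φV h

lemma sigmac {U V : Set M} (hUV : U ∪ V = univ)
    (φU : ↥U ≃ₜ EuclideanSpace ℝ (Fin 3)) (φV : ↥V ≃ₜ EuclideanSpace ℝ (Fin 3)) :
    SigmaCompactSpace M := by
  refine ⟨⟨fun n => Subtype.val '' (φU.symm '' Metric.closedBall 0 n) ∪
    Subtype.val '' (φV.symm '' Metric.closedBall 0 n), fun n => ?_, ?_⟩⟩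
  · exact (((isCompact_closedBall _ _).image φU.symm.continuous).image
      continuous_subtype_val).union (((isCompact_closedBall _ _).image
      φV.symm.continuous).image continuous_subtype_val)
  · apply eq_univ_of_forall
    intro x
    have hx : x ∈ U ∪ V := hUV ▸ mem_univ x
    rw [mem_iUnion]
    cases hx with
    | inl h =>
      obtain ⟨n, hn⟩ := exists_nat_ge ‖φU ⟨x, h⟩‖
      refine ⟨n, Or.inl ⟨⟨x, h⟩, ⟨φU ⟨x, h⟩, ?_, φU.symm_apply_apply _⟩, rfl⟩⟩
      rw [Metric.mem_closedBall, dist_zero_right]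
      exact hn
    | inr h =>
      obtain ⟨n, hn⟩ := exists_nat_ge ‖φV ⟨x, h⟩‖
      refine ⟨n, Or.inr ⟨⟨x, h⟩, ⟨φV ⟨x, h⟩, ?_, φV.symm_apply_apply _⟩, rfl⟩⟩
      rw [Metric.mem_closedBall, dist_zero_right]
      exact hn

end Instances

end

end DoubleThree

/-- A nonempty Hausdorff space which is the union of two open sets `U` and `V` such that
`U`, `V`, and `U ∩ V` are each homeomorphic to Euclidean 3-space is contractible
(the double 3-space property implies contractibility). -/
theorem contractible_of_double_three_space_property
    {M : Type*} [TopologicalSpace M] [T2Space M] [Nonempty M]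
    (U V : Set M) (hUopen : IsOpen U) (hVopen : IsOpen V) (hUV : U ∪ V = Set.univ)
    (hU : Nonempty (↥U ≃ₜ EuclideanSpace ℝ (Fin 3)))
    (hV : Nonempty (↥V ≃ₜ EuclideanSpace ℝ (Fin 3)))
    (hUVinter : Nonempty (↥(U ∩ V) ≃ₜ EuclideanSpace ℝ (Fin 3))) :
    ContractibleSpace M := by
  obtain ⟨φU⟩ := hU
  obtain ⟨φV⟩ := hV
  obtain ⟨φA⟩ := hUVinter
  haveI := DoubleThree.wlc hUopen hVopen hUV φU φV
  haveI := DoubleThree.sigmac hUV φU φV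
  haveI : NormalSpace M := by infer_instance
  have hdisj : Disjoint Vᶜ Uᶜ := by
    rw [Set.disjoint_iff_inter_eq_empty, ← Set.compl_union, Set.union_comm, hUV, Set.compl_univ]
  obtain ⟨f, hf0, hf1, hf01⟩ := exists_continuous_zero_one_of_isClosed
    hVopen.isClosed_compl hUopen.isClosed_compl hdisj
  exact DoubleThree.aux_contractible φU φV φA f hUopen hVopen f.continuous hf0 hf1
end

section
/- Let X be a topological space and let K : ℕ → Set X be a sequence of subsets with Kₙ ⊆ interior(Kₙ₊₁) for every n and X = ⋃ₙ Kₙ. Suppose that for each n the inclusion map of the subspace Kₙ into the subspace Kₙ₊₁ is homotopic to a constant map. Then X is weakly contractible: if X is nonempty then X is path-connected, and for every n ≥ 1 and every basepoint x ∈ X the homotopy group πₙ(X, x) is trivial. -/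
open Set Topology

open scoped unitInterval Topology.Homotopy

noncomputable section WCAux

namespace WCAux

variable {n : ℕ}

/-- center of the cube -/
def half (n : ℕ) : Fin n → I := fun _ => ⟨1/2, by norm_num⟩

/-- scaled sup-distance to the center: `1` on the boundary. -/
def mfun (y : Fin n → I) : ℝ := 2 * dist y (half n)

lemma mfun_nonneg (y : Fin n → I) : 0 ≤ mfun y := by
  unfold mfun; positivity

lemma dist_le_half (y : Fin n → I) : dist y (half n) ≤ 1/2 := by
  rw [dist_pi_le_iff (by norm_num)]
  intro i
  rw [Subtype.dist_eq, Real.dist_eq]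
  have h1 := (y i).2.1
  have h2 := (y i).2.2
  have hhalf : ((half n i : I) : ℝ) = 1/2 := rfl
  rw [hhalf, abs_le]
  constructor <;> nlinarith

lemma mfun_le_one (y : Fin n → I) : mfun y ≤ 1 := by
  have := dist_le_half y; unfold mfun; linarith

lemma mfun_boundary {y : Fin n → I} (hy : y ∈ Cube.boundary (Fin n)) : mfun y = 1 := by
  obtain ⟨i, hi⟩ := hy
  have hle := dist_le_half y
  have hge : (1/2 : ℝ) ≤ dist y (half n) := by
    have h := dist_le_pi_dist y (half n) i
    have : dist (y i) (half n i) = 1/2 := by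
      rw [Subtype.dist_eq, Real.dist_eq]
      rcases hi with hi | hi <;> rw [hi] <;> simp [half] <;> norm_num
    linarith
  unfold mfun; linarith

lemma exists_coord_of_lt {y : Fin n → I} {r : ℝ} (hr : 0 ≤ r)
    (h : r < dist y (half n)) : ∃ i, r < |(y i : ℝ) - 1/2| := by
  by_contra hc
  push_neg at hc
  have : dist y (half n) ≤ r := by
    rw [dist_pi_le_iff hr]
    intro i
    rw [Subtype.dist_eq, Real.dist_eq]
    simpa [half] using hc i
  linarith

/-- expansion of the inner cube of scale `1 - s/2` to the full cube (clamped). -/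
def efun (s : I) (y : Fin n → I) : Fin n → I :=
  fun i => Set.projIcc 0 1 zero_le_one (((y i : ℝ) - 1/2) / (1 - (s : ℝ)/2) + 1/2)

lemma efun_zero (y : Fin n → I) : efun 0 y = y := by
  funext i
  have : ((y i : ℝ) - 1/2) / (1 - ((0 : I) : ℝ)/2) + 1/2 = (y i : ℝ) := by
    norm_num
  rw [efun, this, Set.projIcc_val]

lemma efun_boundary_of {s : I} {y : Fin n → I} {i : Fin n}
    (h : (1 - (s : ℝ)/2)/2 ≤ |(y i : ℝ) - 1/2|) :
    efun s y ∈ Cube.boundary (Fin n) := by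
  refine ⟨i, ?_⟩
  have hs1 := s.2.1
  have hs2 := s.2.2
  have hd : (0 : ℝ) < 1 - (s : ℝ)/2 := by linarith
  rcases le_abs.mp h with h' | h'
  · right
    apply Subtype.ext
    rw [efun, Set.coe_projIcc]
    have : (1 : ℝ) ≤ ((y i : ℝ) - 1/2) / (1 - (s : ℝ)/2) + 1/2 := by
      have : (1/2 : ℝ) ≤ ((y i : ℝ) - 1/2) / (1 - (s : ℝ)/2) := by
        rw [le_div_iff₀ hd]; linarith
      linarith
    rw [min_eq_left this, max_eq_right zero_le_one]; rfl
  · left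
    apply Subtype.ext
    rw [efun, Set.coe_projIcc]
    have : ((y i : ℝ) - 1/2) / (1 - (s : ℝ)/2) + 1/2 ≤ 0 := by
      have : ((y i : ℝ) - 1/2) / (1 - (s : ℝ)/2) ≤ -(1/2) := by
        rw [div_le_iff₀ hd]; nlinarith
      linarith
    rw [max_eq_left (le_trans (min_le_right _ _) this)]; rfl

lemma efun_boundary {s : I} {y : Fin n → I} (hy : y ∈ Cube.boundary (Fin n)) :
    efun s y ∈ Cube.boundary (Fin n) := by
  obtain ⟨i, hi⟩ := hy
  apply efun_boundary_of (i := i)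
  have hs2 := s.2.2
  have : |(y i : ℝ) - 1/2| = 1/2 := by
    rcases hi with hi | hi <;> rw [hi] <;> norm_num
  rw [this]; linarith [s.2.1]

/-- the time coordinate of the stage-A homotopy. -/
def tfun (s : I) (y : Fin n → I) : I :=
  Set.projIcc 0 1 zero_le_one (min (s : ℝ) (2 * (1 - mfun y)))

lemma tfun_coe (s : I) (y : Fin n → I) :
    ((tfun s y : I) : ℝ) = min (s : ℝ) (2 * (1 - mfun y)) := by
  rw [tfun, Set.coe_projIcc]
  have h1 : min (s : ℝ) (2 * (1 - mfun y)) ≤ 1 := le_trans (min_le_left _ _) s.2.2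
  have h2 : 0 ≤ min (s : ℝ) (2 * (1 - mfun y)) :=
    le_min s.2.1 (by have := mfun_le_one y; linarith)
  rw [min_eq_right h1, max_eq_right h2]

lemma tfun_zero (y : Fin n → I) : tfun 0 y = 0 := by
  apply Subtype.ext
  rw [tfun_coe]
  have := mfun_le_one y
  simp only [Icc.coe_zero]
  rw [min_eq_left (by linarith)]

lemma tfun_boundary (s : I) {y : Fin n → I} (hy : y ∈ Cube.boundary (Fin n)) :
    tfun s y = 0 := by
  apply Subtype.ext
  rw [tfun_coe, mfun_boundary hy]
  simpa using s.2.1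

lemma continuous_mfun : Continuous (mfun : (Fin n → I) → ℝ) := by
  unfold mfun; fun_prop

lemma continuous_tfun : Continuous (fun p : I × (Fin n → I) => tfun p.1 p.2) := by
  apply continuous_projIcc.comp
  exact (continuous_subtype_val.comp continuous_fst).min
    (by exact (continuous_const.mul (continuous_const.sub
      (continuous_mfun.comp continuous_snd))))

lemma continuous_efun : Continuous (fun p : I × (Fin n → I) => efun p.1 p.2) := by
  apply continuous_pi
  intro i
  apply continuous_projIcc.comp
  apply Continuous.add _ continuous_const
  apply Continuous.div
  · fun_prop
  · fun_prop
  · intro p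
    have h2 := p.1.2.2
    intro hc
    have : (p.1 : ℝ) = 2 := by linarith
    linarith


/-- If a generalized loop `f` admits a free homotopy `G` to a constant map such that
`G` is constant in the space variable on the boundary, then `f` is homotopic rel
boundary to the constant loop. -/
lemma genloop_homotopic_const {X : Type*} [TopologicalSpace X] {n : ℕ} (hn : 1 ≤ n) {x : X}
    (f : Ω^ (Fin n) X x) (G : C(I × (Fin n → I), X))
    (h0 : ∀ y, G (0, y) = f y)
    (h1 : ∀ y z, G (1, y) = G (1, z))
    (hb : ∀ (t : I) (y z : Fin n → I), y ∈ Cube.boundary (Fin n) →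
      z ∈ Cube.boundary (Fin n) → G (t, y) = G (t, z)) :
    GenLoop.Homotopic f GenLoop.const := by
  have y₀ : Fin n → I := fun _ => 0
  have hy₀ : (fun _ => (0 : I)) ∈ Cube.boundary (Fin n) := ⟨⟨0, hn⟩, Or.inl rfl⟩
  -- the intermediate map `q`
  set q : C((Fin n → I), X) :=
    ⟨fun y => G (tfun 1 y, efun 1 y),
      by exact G.continuous.comp ((continuous_tfun.comp
        (continuous_const.prodMk continuous_id)).prodMk
        (continuous_efun.comp (continuous_const.prodMk continuous_id)))⟩ with hq
  have hq_bdry : ∀ y ∈ Cube.boundary (Fin n), q y = x := by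
    intro y hy
    show G (tfun 1 y, efun 1 y) = x
    rw [tfun_boundary 1 hy, h0]
    exact f.2 _ (efun_boundary hy)
  -- stage A
  have A : f.1.HomotopyRel q (Cube.boundary (Fin n)) :=
    { toFun := fun p => G (tfun p.1 p.2, efun p.1 p.2)
      continuous_toFun := G.continuous.comp (continuous_tfun.prodMk continuous_efun)
      map_zero_left := fun y => by
        simp only [ContinuousMap.coe_mk]
        rw [tfun_zero, efun_zero, h0]
        rfl
      map_one_left := fun y => rfl
      prop' := fun t y hy => by
        simp only [ContinuousMap.coe_mk]
        rw [tfun_boundary t hy, h0]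
        exact (f.2 _ (efun_boundary hy)).trans (f.2 _ hy).symm }
  -- `q` coincides with `γ ∘ u` where `γ t = G (t, y₀)`
  have hq_eq : ∀ y, q y = G (tfun 1 y, fun _ => (0 : I)) := by
    intro y
    show G (tfun 1 y, efun 1 y) = _
    by_cases hc : (1 : ℝ) ≤ 2 * (1 - mfun y)
    · have ht : tfun 1 y = 1 := by
        apply Subtype.ext
        rw [tfun_coe]
        simpa using hc
      rw [ht, h1 (efun 1 y) (fun _ => (0 : I))]
    · push_neg at hc
      have hd : (1/4 : ℝ) < dist y (half n) := by
        unfold mfun at hc; linarith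
      obtain ⟨i, hi⟩ := exists_coord_of_lt (by norm_num) hd
      have hbd : efun 1 y ∈ Cube.boundary (Fin n) := by
        apply efun_boundary_of (i := i)
        have : ((1 : I) : ℝ) = 1 := rfl
        rw [this]
        linarith
      exact hb _ _ _ hbd hy₀
  -- stage B
  have B : q.HomotopyRel (GenLoop.const : Ω^ (Fin n) X x).1 (Cube.boundary (Fin n)) :=
    { toFun := fun p => G (Set.projIcc 0 1 zero_le_one
        ((1 - (p.1 : ℝ)) * ((tfun 1 p.2 : I) : ℝ)), fun _ => (0 : I))
      continuous_toFun := by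
          apply G.continuous.comp
          apply Continuous.prodMk _ continuous_const
          apply continuous_projIcc.comp
          apply Continuous.mul
          · exact continuous_const.sub (continuous_subtype_val.comp continuous_fst)
          · exact continuous_subtype_val.comp (continuous_tfun.comp
              (continuous_const.prodMk continuous_snd))
      map_zero_left := fun y => by
        simp only [ContinuousMap.coe_mk]
        rw [hq_eq y]
        congr 1
        have : (1 - ((0 : I) : ℝ)) * ((tfun 1 y : I) : ℝ) = ((tfun 1 y : I) : ℝ) := by
          norm_num
        rw [this, Set.projIcc_val]
      map_one_left := fun y => by
        simp only [ContinuousMap.coe_mk]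
        have : (1 - ((1 : I) : ℝ)) * ((tfun 1 y : I) : ℝ) = 0 := by norm_num
        rw [this]
        have hz : Set.projIcc (0:ℝ) 1 zero_le_one 0 = (0 : I) := by
          apply Subtype.ext
          rw [Set.coe_projIcc]
          norm_num
        rw [hz, h0]
        exact f.2 _ hy₀
      prop' := fun t y hy => by
        simp only [ContinuousMap.coe_mk]
        rw [tfun_boundary 1 hy]
        have : (1 - (t : ℝ)) * (((0 : I) : I) : ℝ) = 0 := by norm_num
        rw [this]
        have hz : Set.projIcc (0:ℝ) 1 zero_le_one 0 = (0 : I) := by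
          apply Subtype.ext
          rw [Set.coe_projIcc]
          norm_num
        rw [hz, h0]
        exact (f.2 _ hy₀).trans (hq_bdry y hy).symm }
  exact ⟨A.trans B⟩

lemma exists_K_subset {X : Type*} [TopologicalSpace X] (K : ℕ → Set X)
    (hK : ∀ n, K n ⊆ interior (K (n + 1)))
    (hcover : ⋃ n, K n = Set.univ)
    {C : Set X} (hC : IsCompact C) : ∃ m, C ⊆ K m := by
  have hmono : Monotone K := monotone_nat_of_le_succ fun n => (hK n).trans interior_subset
  have hsub : C ⊆ ⋃ n, interior (K n) := by
    intro z _
    have hz : z ∈ ⋃ n, K n := by rw [hcover]; trivial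
    obtain ⟨n, hn⟩ := Set.mem_iUnion.mp hz
    exact Set.mem_iUnion.mpr ⟨n + 1, hK n hn⟩
  obtain ⟨F, hF⟩ := hC.elim_finite_subcover (fun n => interior (K n))
    (fun n => isOpen_interior) hsub
  refine ⟨F.sup id, fun z hz => ?_⟩
  obtain ⟨i, hi, hzi⟩ := Set.mem_iUnion₂.mp (hF hz)
  exact hmono (Finset.le_sup (f := id) hi) (interior_subset hzi)

end WCAux

open WCAux in
/-- If a space `X` is the union of an exhausting sequence of subsets `Kₙ` with
`Kₙ ⊆ interior Kₙ₊₁`, and each inclusion `Kₙ ↪ Kₙ₊₁` is homotopic to a constant map,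
then `X` is weakly contractible: it is path-connected (when nonempty) and all of its
homotopy groups `πₙ(X, x)` for `n ≥ 1` are trivial. -/
theorem weakly_contractible_of_exhaustion_null_inclusions
    {X : Type*} [TopologicalSpace X] (K : ℕ → Set X)
    (hK : ∀ n, K n ⊆ interior (K (n + 1)))
    (hcover : ⋃ n, K n = Set.univ)
    (hnull : ∀ n, ∃ c : ↥(K (n + 1)),
      ContinuousMap.Homotopic
        ⟨Set.inclusion ((hK n).trans interior_subset),
          continuous_inclusion ((hK n).trans interior_subset)⟩
        (ContinuousMap.const ↥(K n) c)) :
    (Nonempty X → PathConnectedSpace X) ∧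
      ∀ n : ℕ, 1 ≤ n → ∀ x : X, Subsingleton (HomotopyGroup (Fin n) X x) := by
  have hmono : Monotone K := monotone_nat_of_le_succ fun n => (hK n).trans interior_subset
  have hmem : ∀ z : X, ∃ m, z ∈ K m := by
    intro z
    have hz : z ∈ ⋃ n, K n := by rw [hcover]; trivial
    exact Set.mem_iUnion.mp hz
  -- a path from any point of `K m` to the constant point
  have hjoin : ∀ (m : ℕ) (z : X) (hz : z ∈ K m), ∃ w : X, Joined z w ∧
      ∀ (z' : X) (hz' : z' ∈ K m), Joined z' w := by
    intro m z hz
    obtain ⟨c, ⟨H⟩⟩ := hnull m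
    have key : ∀ (z' : X) (hz' : z' ∈ K m), Joined z' (c : X) := by
      intro z' hz'
      refine ⟨⟨⟨fun t => ((H (t, ⟨z', hz'⟩) : ↥(K (m+1))) : X), by fun_prop⟩, ?_, ?_⟩⟩
      · simp only [ContinuousMap.coe_mk]
        rw [H.apply_zero]
        rfl
      · simp only [ContinuousMap.coe_mk]
        rw [H.apply_one]
        rfl
    exact ⟨(c : X), key z hz, key⟩
  constructor
  · intro hne
    refine ⟨hne, fun a b => ?_⟩
    obtain ⟨ma, hma⟩ := hmem a
    obtain ⟨mb, hmb⟩ := hmem b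
    have ha : a ∈ K (max ma mb) := hmono (le_max_left _ _) hma
    have hb : b ∈ K (max ma mb) := hmono (le_max_right _ _) hmb
    obtain ⟨w, hw, hall⟩ := hjoin _ a ha
    exact hw.trans (hall b hb).symm
  · intro n hn x
    have key : ∀ f : ↥(Ω^ (Fin n) X x), GenLoop.Homotopic f GenLoop.const := by
      intro f
      have hcomp : IsCompact (Set.range (f : (Fin n → I) → X)) :=
        isCompact_range (map_continuous (f : C(Fin n → I, X)))
      obtain ⟨m, hm⟩ := exists_K_subset K hK hcover hcomp
      obtain ⟨c, ⟨H⟩⟩ := hnull m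
      have hxK : ∀ y : Fin n → I, (f : (Fin n → I) → X) y ∈ K m :=
        fun y => hm (Set.mem_range_self y)
      set f' : C((Fin n → I), ↥(K m)) :=
        ⟨fun y => ⟨f y, hxK y⟩, by
          apply Continuous.subtype_mk
          exact map_continuous (f : C(Fin n → I, X))⟩ with hf'
      set G : C(I × (Fin n → I), X) :=
        ⟨fun p => ((H (p.1, f' p.2) : ↥(K (m+1))) : X), by fun_prop⟩ with hG
      apply genloop_homotopic_const hn f G
      · intro y
        show ((H (0, f' y) : ↥(K (m+1))) : X) = _
        rw [H.apply_zero]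
        rfl
      · intro y z
        show ((H (1, f' y) : ↥(K (m+1))) : X) = ((H (1, f' z) : ↥(K (m+1))) : X)
        rw [H.apply_one, H.apply_one]
        rfl
      · intro t y z hy hz
        show ((H (t, f' y) : ↥(K (m+1))) : X) = ((H (t, f' z) : ↥(K (m+1))) : X)
        have : f' y = f' z := by
          apply Subtype.ext
          exact (f.2 _ hy).trans (f.2 _ hz).symm
        rw [this]
    constructor
    intro a b
    refine Quotient.inductionOn₂ a b fun p q => ?_
    exact Quotient.sound ((key p).trans (key q).symm)

end WCAux
end

section
/- Let m be a natural number and a ∈ ℝ, and suppose the closed interval [a, a + 3^{−m}] is contained in preCantorSet m. Then C ∩ [a, a + 3^{−m}] = { a + 3^{−m}·x : x ∈ C }, where C is the Cantor ternary set; that is, the increasing affine bijection from [a, a + 3^{−m}] onto [0,1] carries C ∩ [a, a + 3^{−m}] onto C. -/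
open Set Topology

lemma preCantorSet_subset_unitInterval' (n : ℕ) : preCantorSet n ⊆ Set.Icc 0 1 := by
  induction n with
  | zero => exact subset_rfl
  | succ n ih =>
    rintro x (⟨y, hy, rfl⟩ | ⟨y, hy, rfl⟩) <;>
      obtain ⟨h0, h1⟩ := ih hy <;> constructor <;> simp only [] <;> linarith

lemma preCantorSet_antitone' : Antitone preCantorSet := by
  apply antitone_nat_of_succ_le
  intro n
  induction n with
  | zero =>
    exact fun x hx => preCantorSet_subset_unitInterval' 1 hx
  | succ n ih =>
    rintro x (⟨y, hy, rfl⟩ | ⟨y, hy, rfl⟩)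
    · exact Or.inl ⟨y, ih hy, rfl⟩
    · exact Or.inr ⟨y, ih hy, rfl⟩

lemma cantorSet_key (m : ℕ) : ∀ a : ℝ, Set.Icc a (a + (1/3 : ℝ) ^ m) ⊆ preCantorSet m →
    ∀ n, preCantorSet (m + n) ∩ Set.Icc a (a + (1/3 : ℝ) ^ m) =
      (fun x => a + (1/3 : ℝ) ^ m * x) '' preCantorSet n := by
  induction m with
  | zero =>
    intro a h n
    have ha0 : (0 : ℝ) ≤ a := (h ⟨le_refl a, by norm_num⟩).1
    have ha1 : a + 1 ≤ 1 := by
      have := (h ⟨by norm_num, le_refl _⟩).2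
      simpa using this
    have ha : a = 0 := le_antisymm (by linarith) ha0
    subst ha
    simp only [pow_zero, zero_add, one_mul, Nat.zero_add]
    rw [Set.image_id']
    exact Set.inter_eq_left.mpr (preCantorSet_subset_unitInterval' n)
  | succ m ih =>
    intro a h n
    have hpow : (0 : ℝ) < (1/3 : ℝ) ^ (m + 1) := by positivity
    have hpowle : (1/3 : ℝ) ^ (m + 1) ≤ 1/3 := by
      calc (1/3 : ℝ) ^ (m + 1) ≤ (1/3 : ℝ) ^ 1 :=
        pow_le_pow_of_le_one (by norm_num) (by norm_num) (by omega)
      _ = 1/3 := pow_one _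
    -- the interval lies entirely in the left or right third
    have hmem : ∀ x ∈ Set.Icc a (a + (1/3 : ℝ) ^ (m+1)),
        x ∈ (· / 3) '' preCantorSet m ∪ (fun x ↦ (2 + x) / 3) '' preCantorSet m := fun x hx => h hx
    have hL : ∀ y ∈ preCantorSet m, y / 3 ≤ 1/3 := fun y hy => by
      have := (preCantorSet_subset_unitInterval' m hy).2; linarith
    have hR : ∀ y ∈ preCantorSet m, (2:ℝ)/3 ≤ (2 + y) / 3 := fun y hy => by
      have := (preCantorSet_subset_unitInterval' m hy).1; linarith
    have hcases : (∀ x ∈ Set.Icc a (a + (1/3 : ℝ) ^ (m+1)), x ∈ (· / 3) '' preCantorSet m) ∨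
        (∀ x ∈ Set.Icc a (a + (1/3 : ℝ) ^ (m+1)), x ∈ (fun x ↦ (2 + x) / 3) '' preCantorSet m) := by
      by_contra hcon
      push_neg at hcon
      obtain ⟨⟨x, hx, hxL⟩, ⟨z, hz, hzR⟩⟩ := hcon
      -- x is in right piece, z in left piece
      obtain (hxl | ⟨y, hy, hyx⟩) := hmem x hx
      · exact hxL hxl
      obtain (⟨w, hw, hwz⟩ | hzr) := hmem z hz
      swap
      · exact hzR hzr
      -- x ≥ 2/3, z ≤ 1/3, both in interval of length ≤ 1/3, so midpoint 1/2 in interval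
      have hx23 : (2:ℝ)/3 ≤ x := hyx ▸ hR y hy
      have hz13 : z ≤ 1/3 := hwz ▸ hL w hw
      have h12 : (1/2 : ℝ) ∈ Set.Icc a (a + (1/3 : ℝ) ^ (m+1)) := by
        constructor
        · have := hz.1; linarith
        · have := hx.2; linarith
      obtain (⟨y', hy', hy12⟩ | ⟨y', hy', hy12⟩) := hmem _ h12
      · have h12' : y' / 3 = 1/2 := hy12
        have := hL y' hy'; rw [h12'] at this; linarith
      · have h12' : (2 + y') / 3 = 1/2 := hy12
        have := hR y' hy'; rw [h12'] at this; linarith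
    have hthird : (1/3:ℝ)^(m+1) = (1/3:ℝ)^m / 3 := by ring
    rcases hcases with hc | hc
    · -- left third: a' = 3a
      have hsub : Set.Icc (3*a) (3*a + (1/3 : ℝ) ^ m) ⊆ preCantorSet m := by
        intro y hy
        have hy3 : y / 3 ∈ Set.Icc a (a + (1/3 : ℝ) ^ (m+1)) := by
          constructor
          · have := hy.1; linarith
          · have := hy.2; rw [hthird]; linarith
        obtain ⟨z, hz, hzy⟩ := hc _ hy3
        have : z = y := by field_simp at hzy; linarith
        exact this ▸ hz
      have IH := ih (3*a) hsub n
      ext x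
      constructor
      · rintro ⟨hxP, hxI⟩
        have em1 : m + 1 + n = (m + n) + 1 := by omega
        rw [em1, preCantorSet_succ] at hxP
        have hxP' := hxP
        obtain (⟨y, hy, rfl⟩ | ⟨y, hy, rfl⟩) := hxP'
        · have hyI : y ∈ Set.Icc (3*a) (3*a + (1/3 : ℝ) ^ m) := by
            constructor
            · have := hxI.1; linarith
            · have := hxI.2; rw [hthird] at this; linarith
          have : y ∈ (fun x => 3*a + (1/3 : ℝ) ^ m * x) '' preCantorSet n := by
            rw [← IH]; exact ⟨hy, hyI⟩
          obtain ⟨z, hz, hzy⟩ := this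
          exact ⟨z, hz, by simp only [← hzy]; rw [hthird]; ring⟩
        · -- impossible: point ≥ 2/3 but interval ⊆ left third
          exfalso
          obtain ⟨w, hw, hwx⟩ := hc _ hxI
          have hwx' : w / 3 = (2 + y) / 3 := hwx
          have h1 : (2 + y)/3 ≤ 1/3 := hwx' ▸ hL w hw
          have := (preCantorSet_subset_unitInterval' _ hy).1
          linarith
      · rintro ⟨z, hz, rfl⟩
        have hz3 : 3*a + (1/3 : ℝ) ^ m * z ∈ preCantorSet (m + n) ∩
            Set.Icc (3*a) (3*a + (1/3 : ℝ) ^ m) := by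
          rw [IH]; exact ⟨z, hz, rfl⟩
        refine ⟨?_, ?_⟩
        · show _ ∈ preCantorSet (m + 1 + n)
          have : m + 1 + n = (m + n) + 1 := by omega
          rw [this]
          exact Or.inl ⟨3*a + (1/3 : ℝ) ^ m * z, hz3.1, by simp only []; rw [hthird]; ring⟩
        · obtain ⟨h1, h2⟩ := hz3.2
          constructor
          · simp only []; rw [hthird]; linarith
          · simp only []; rw [hthird]; linarith
    · -- right third: a' = 3a - 2
      have hsub : Set.Icc (3*a - 2) (3*a - 2 + (1/3 : ℝ) ^ m) ⊆ preCantorSet m := by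
        intro y hy
        have hy3 : (2 + y) / 3 ∈ Set.Icc a (a + (1/3 : ℝ) ^ (m+1)) := by
          constructor
          · have := hy.1; linarith
          · have := hy.2; rw [hthird]; linarith
        obtain ⟨z, hz, hzy⟩ := hc _ hy3
        have : z = y := by field_simp at hzy; linarith
        exact this ▸ hz
      have IH := ih (3*a - 2) hsub n
      ext x
      constructor
      · rintro ⟨hxP, hxI⟩
        have em1 : m + 1 + n = (m + n) + 1 := by omega
        rw [em1, preCantorSet_succ] at hxP
        have hxP' := hxP
        obtain (⟨y, hy, rfl⟩ | ⟨y, hy, rfl⟩) := hxP'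
        · exfalso
          obtain ⟨w, hw, hwx⟩ := hc _ hxI
          have hwx' : (2 + w) / 3 = y / 3 := hwx
          have h1 : (2:ℝ)/3 ≤ y/3 := hwx' ▸ hR w hw
          have := (preCantorSet_subset_unitInterval' _ hy).2
          linarith
        · have hyI : y ∈ Set.Icc (3*a - 2) (3*a - 2 + (1/3 : ℝ) ^ m) := by
            constructor
            · have := hxI.1; linarith
            · have := hxI.2; rw [hthird] at this; linarith
          have : y ∈ (fun x => (3*a - 2) + (1/3 : ℝ) ^ m * x) '' preCantorSet n := by
            rw [← IH]; exact ⟨hy, hyI⟩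
          obtain ⟨z, hz, hzy⟩ := this
          exact ⟨z, hz, by simp only [← hzy]; rw [hthird]; ring⟩
      · rintro ⟨z, hz, rfl⟩
        have hz3 : (3*a - 2) + (1/3 : ℝ) ^ m * z ∈ preCantorSet (m + n) ∩
            Set.Icc (3*a - 2) (3*a - 2 + (1/3 : ℝ) ^ m) := by
          rw [IH]; exact ⟨z, hz, rfl⟩
        refine ⟨?_, ?_⟩
        · show _ ∈ preCantorSet (m + 1 + n)
          have : m + 1 + n = (m + n) + 1 := by omega
          rw [this]
          exact Or.inr ⟨(3*a - 2) + (1/3 : ℝ) ^ m * z, hz3.1, by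
            simp only []; rw [hthird]; ring⟩
        · obtain ⟨h1, h2⟩ := hz3.2
          constructor
          · simp only []; rw [hthird]; linarith
          · simp only []; rw [hthird]; linarith

/-- Self-similarity of the Cantor ternary set under rescaling of a retained stage-`m`
interval: if the closed interval `[a, a + 3⁻ᵐ]` is contained in `preCantorSet m`, then
the part of the Cantor set in this interval is exactly the image of the Cantor set under
the increasing affine map `x ↦ a + 3⁻ᵐ x` from `[0,1]` onto `[a, a + 3⁻ᵐ]`. -/
theorem cantorSet_inter_stage_interval (m : ℕ) (a : ℝ)
    (h : Set.Icc a (a + (1/3 : ℝ) ^ m) ⊆ preCantorSet m) :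
    cantorSet ∩ Set.Icc a (a + (1/3 : ℝ) ^ m) =
      (fun x => a + (1/3 : ℝ) ^ m * x) '' cantorSet := by
  have hinj : Function.Injective (fun x : ℝ => a + (1/3 : ℝ) ^ m * x) := by
    intro x y hxy
    have hne : (1/3 : ℝ) ^ m ≠ 0 := by positivity
    simp only [] at hxy
    exact mul_left_cancel₀ hne (by linarith)
  have h1 : cantorSet = ⋂ n, preCantorSet (m + n) := by
    apply Set.Subset.antisymm
    · exact Set.subset_iInter fun n => Set.iInter_subset _ (m + n)
    · intro x hx
      apply Set.mem_iInter.mpr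
      intro k
      exact preCantorSet_antitone' (Nat.le_add_left k m) (Set.mem_iInter.mp hx k)
  calc cantorSet ∩ Set.Icc a (a + (1/3 : ℝ) ^ m)
      = ⋂ n, (preCantorSet (m + n) ∩ Set.Icc a (a + (1/3 : ℝ) ^ m)) := by
        rw [h1, Set.iInter_inter]
    _ = ⋂ n, (fun x => a + (1/3 : ℝ) ^ m * x) '' preCantorSet n := by
        exact Set.iInter_congr fun n => cantorSet_key m a h n
    _ = (fun x => a + (1/3 : ℝ) ^ m * x) '' ⋂ n, preCantorSet n :=
        (hinj.injOn.image_iInter_eq).symm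
    _ = (fun x => a + (1/3 : ℝ) ^ m * x) '' cantorSet := rfl
end
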